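/- arXiv:2509.00436 — 5 statements merged into one kernel-verified Lean document; each statement's English description precedes it below -/
import Mathlib

section
/- For every n ≥ 1, the first-return decomposition p ↦ (P_1, …, P_{m+1}) is a bijection from PK(n) onto the set of (m+1)-tuples (Q_1, …, Q_{m+1}) of u-parking distributions whose lengths sum to n−1. -/
open scoped Classical
open Finset

noncomputable section

/-- The set of positive nondecreasing sequences of length `n` bounded above by `b` is finite. -/
lemma boundedSeq_finite (n : ℕ) (b : ℕ → ℕ) :
    {p : Fin n → ℕ | Monotone p ∧ ∀ i : Fin n, 1 ≤ p i ∧ p i ≤ b i}.Finite := by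
  have h : {p : Fin n → ℕ | Monotone p ∧ ∀ i : Fin n, 1 ≤ p i ∧ p i ≤ b i} ⊆
      Set.pi Set.univ (fun i : Fin n => Set.Iic (b i)) := by
    intro p hp
    rw [Set.mem_pi]
    intro i _
    exact (hp.2 i).2
  exact (Set.Finite.pi fun i : Fin n => Set.finite_Iic (b (i : ℕ))).subset h

/-- The finset of nondecreasing sequences `p : Fin n → ℕ` of positive integers
with `p i ≤ b i` for all `i`. -/
def BSeq (n : ℕ) (b : ℕ → ℕ) : Finset (Fin n → ℕ) := (boundedSeq_finite n b).toFinset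

/-- `PK m n` : the u-parking distributions of length `n`, i.e. nondecreasing sequences
of positive integers with `p i ≤ m*(i-1)+1` (here indexed from `0`, so `p i ≤ m*i+1`). -/
def PK (m n : ℕ) : Finset (Fin n → ℕ) := BSeq n (fun i => m * i + 1)

/-- `luck p` : the number of indices `i` with `p i = m*(i-1)+1` (0-indexed: `m*i+1`). -/
def luck (m : ℕ) {n : ℕ} (p : Fin n → ℕ) : ℕ :=
  (Finset.univ.filter (fun i : Fin n => p i = m * (i : ℕ) + 1)).card

/-- `freq j p` = `ω_j(p)` : the number of indices `i` with `p i = j`. -/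
def freq (j : ℕ) {n : ℕ} (p : Fin n → ℕ) : ℕ :=
  (Finset.univ.filter (fun i : Fin n => p i = j)).card

/-- `hcnt m n k r` = `h_{n,k,r}` : the number of nondecreasing sequences of positive
integers with `p_i ≤ m*(i+k-1) - r` for `1 ≤ i ≤ n` (0-indexed: `p i ≤ m*(i+k) - r`). -/
def hcnt (m n k r : ℕ) : ℕ := (BSeq n (fun i => m * (i + k) - r)).card

/-- `Cnt m n k` = `C_{n,k}` : the number of `p ∈ PK m n` with `luck p = k`. -/
def Cnt (m n k : ℕ) : ℕ := ((PK m n).filter (fun p => luck m p = k)).card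

/-- `Rpoly m n` = `R_n(q) = Σ_k C_{n,k} q^k ∈ ℤ[q]`. -/
def Rpoly (m n : ℕ) : Polynomial ℤ :=
  ∑ k ∈ Finset.range (n + 1), (Cnt m n k : Polynomial ℤ) * Polynomial.X ^ k

/-- `hfull t k` : the complete homogeneous symmetric polynomial of degree `k`
in variables `q_0, …, q_{t-1}`, i.e. the sum of all monomials of total degree `k`. -/
def hfull (t k : ℕ) : MvPolynomial (Fin t) ℤ :=
  ∑ α ∈ Finset.Nat.antidiagonalTuple t k, ∏ i : Fin t, MvPolynomial.X i ^ α i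

/-- `ffix m p ℓ` = `i_ℓ(p)` : the first fixed point of type `ℓ`, the smallest `k` with
`2 ≤ k ≤ n` and `p_k ≥ m*(k-2)+1+ℓ` (1-indexed), or `n+1` if there is none. -/
def ffix (m : ℕ) {n : ℕ} (p : Fin n → ℕ) (ℓ : ℕ) : ℕ :=
  sInf ({k | 2 ≤ k ∧ ∃ i : Fin n, (i : ℕ) + 1 = k ∧ m * (k - 2) + 1 + ℓ ≤ p i} ∪ {n + 1})

/-- The extended first fixed points: `i_0 = 2`, `i_{m+1} = n+1`, and `i_ℓ = ffix m p ℓ`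
for `1 ≤ ℓ ≤ m`. -/
def ffixE (m : ℕ) {n : ℕ} (p : Fin n → ℕ) (j : ℕ) : ℕ :=
  if j = 0 then 2 else if j = m + 1 then n + 1 else ffix m p j

/-- `pget p k` = `p_k` (1-indexed), `0` out of range. -/
def pget {n : ℕ} (p : Fin n → ℕ) (k : ℕ) : ℕ := if h : k - 1 < n then p ⟨k - 1, h⟩ else 0

/-- The `(ℓ+1)`-st part `P_{ℓ+1}` (for `0 ≤ ℓ ≤ m`) of the first-return decomposition of `p`:
the list `(p_k - (p_{i_ℓ} - 1))` for `i_ℓ ≤ k ≤ i_{ℓ+1} - 1`. -/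
def FRD (m : ℕ) {n : ℕ} (p : Fin n → ℕ) (ℓ : ℕ) : List ℕ :=
  (List.range (ffixE m p (ℓ + 1) - ffixE m p ℓ)).map
    (fun t => pget p (ffixE m p ℓ + t) - (pget p (ffixE m p ℓ) - 1))

/-- A list is a u-parking distribution: nondecreasing, with `l.get i ∈ [1, m*i+1]`
(0-indexed). -/
def isPKlist (m : ℕ) (l : List ℕ) : Prop :=
  l.Pairwise (· ≤ ·) ∧ ∀ i : Fin l.length, 1 ≤ l.get i ∧ l.get i ≤ m * (i : ℕ) + 1

/-- `θ(p)` : the nondecreasing rearrangement of the concatenation of `p` with the list of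
all `j ∈ {1, …, m*n-m+1}` with `j ≢ 1 (mod m)`. -/
def theta (m n : ℕ) (p : Fin n → ℕ) : List ℕ :=
  Multiset.sort
    ((List.ofFn p : Multiset ℕ) +
      (((List.range (m * n - m + 1)).map (· + 1)).filter
        (fun j => ¬ j ≡ 1 [MOD m]) : List ℕ)) (· ≤ ·)

/-- Parking distributions on the `m`-caterpillar of length `n`, as nondecreasing lists. -/
def PKcat (m n : ℕ) : Set (List ℕ) :=
  {a | a.length = m * n - m + 1 ∧ a.Pairwise (· ≤ ·) ∧
       (∀ x ∈ a, 1 ≤ x ∧ x ≤ m * n - m + 1) ∧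
       (∀ i : ℕ, 1 ≤ i → i ≤ n →
         m * (i - 1) + 1 ≤ (a.filter (fun x => x ≤ m * (i - 1) + 1)).length) ∧
       (∀ j : ℕ, 1 ≤ j → j ≤ m * n - m + 1 → ¬ j ≡ 1 [MOD m] → j ∈ a)}

lemma mem_PK {m n : ℕ} {p : Fin n → ℕ} :
    p ∈ PK m n ↔ Monotone p ∧ ∀ i : Fin n, 1 ≤ p i ∧ p i ≤ m * i + 1 := by
  simp [PK, BSeq, Set.Finite.mem_toFinset, Set.mem_setOf_eq]

section FF
variable {m n : ℕ} (p : Fin n → ℕ)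

lemma ffix_le (ℓ : ℕ) : ffix m p ℓ ≤ n + 1 :=
  Nat.sInf_le (Or.inr rfl)

lemma two_le_ffix (hn : 1 ≤ n) (ℓ : ℕ) : 2 ≤ ffix m p ℓ := by
  have h := Nat.sInf_mem (s := {k | 2 ≤ k ∧ ∃ i : Fin n, (i : ℕ) + 1 = k ∧ m * (k - 2) + 1 + ℓ ≤ p i} ∪ {n + 1}) ⟨n + 1, Or.inr rfl⟩
  rcases h with h | h
  · exact h.1
  · simp only [Set.mem_singleton_iff] at h; rw [ffix, h]; omega

lemma ffix_mono {ℓ ℓ' : ℕ} (h : ℓ ≤ ℓ') : ffix m p ℓ ≤ ffix m p ℓ' := by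
  apply le_csInf ⟨n + 1, Or.inr rfl⟩
  rintro b (⟨hb, i, hi, hpi⟩ | hb)
  · exact Nat.sInf_le (Or.inl ⟨hb, i, hi, by omega⟩)
  · exact Nat.sInf_le (Or.inr hb)

lemma pget_lt_ffix {k ℓ : ℕ} (h2 : 2 ≤ k) (hkn : k ≤ n) (h : k < ffix m p ℓ) :
    pget p k ≤ m * (k - 2) + ℓ := by
  have hne := Nat.notMem_of_lt_sInf (s := {k | 2 ≤ k ∧ ∃ i : Fin n, (i : ℕ) + 1 = k ∧ m * (k - 2) + 1 + ℓ ≤ p i} ∪ {n + 1}) h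
  simp only [Set.mem_union, Set.mem_setOf_eq, Set.mem_singleton_iff, not_or, not_and, not_exists] at hne
  have h1 : k - 1 < n := by omega
  have := hne.1 h2 ⟨k - 1, h1⟩ (by simp; omega)
  rw [pget, dif_pos h1]
  omega

lemma pget_ffix {ℓ : ℕ} (h : ffix m p ℓ ≤ n) :
    m * (ffix m p ℓ - 2) + 1 + ℓ ≤ pget p (ffix m p ℓ) := by
  have hmem : ffix m p ℓ ∈ ({k | 2 ≤ k ∧ ∃ i : Fin n, (i : ℕ) + 1 = k ∧ m * (k - 2) + 1 + ℓ ≤ p i} ∪ {n + 1}) :=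
    Nat.sInf_mem ⟨n + 1, Or.inr rfl⟩
  rcases hmem with ⟨h2, i, hi, hpi⟩ | hh
  · rw [pget]
    have h1 : ffix m p ℓ - 1 < n := by omega
    rw [dif_pos h1]
    have : (⟨ffix m p ℓ - 1, h1⟩ : Fin n) = i := by
      apply Fin.ext; simp only; omega
    rw [this]; exact hpi
  · simp only [Set.mem_singleton_iff] at hh
    omega

end FF
section FE
variable {m n : ℕ} {p : Fin n → ℕ}

lemma ffixE_zero : ffixE m p 0 = 2 := rfl

lemma ffixE_top : ffixE m p (m + 1) = n + 1 := by
  rw [ffixE, if_neg (by omega), if_pos rfl]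

lemma ffixE_mid {j : ℕ} (h1 : 1 ≤ j) (h2 : j ≤ m) : ffixE m p j = ffix m p j := by
  rw [ffixE, if_neg (by omega), if_neg (by omega)]

lemma two_le_ffixE (hn : 1 ≤ n) (j : ℕ) : 2 ≤ ffixE m p j := by
  rw [ffixE]
  split
  · omega
  · split
    · omega
    · exact two_le_ffix p hn j

lemma ffixE_le (hn : 1 ≤ n) (j : ℕ) : ffixE m p j ≤ n + 1 := by
  rw [ffixE]
  split
  · omega
  · split
    · omega
    · exact ffix_le p j

lemma ffixE_mono (hn : 1 ≤ n) {j j' : ℕ} (h : j ≤ j') (h' : j' ≤ m + 1) :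
    ffixE m p j ≤ ffixE m p j' := by
  rcases Nat.eq_zero_or_pos j with rfl | hj
  · exact two_le_ffixE hn j'
  rcases eq_or_lt_of_le h' with h'' | hj'
  · rw [h'', ffixE_top]; exact ffixE_le (m := m) (p := p) hn j
  rw [ffixE_mid hj (by omega), ffixE_mid (by omega) (by omega)]
  exact ffix_mono p h

/-- `pget` bounds from `PK` membership -/
lemma pget_mem_PK (hp : p ∈ PK m n) {k : ℕ} (h1 : 1 ≤ k) (h2 : k ≤ n) :
    1 ≤ pget p k ∧ pget p k ≤ m * (k - 1) + 1 := by
  rw [mem_PK] at hp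
  have hk : k - 1 < n := by omega
  rw [pget, dif_pos hk]
  exact ⟨(hp.2 _).1, (hp.2 _).2⟩

lemma pget_mono (hp : p ∈ PK m n) {k k' : ℕ} (h1 : 1 ≤ k) (h : k ≤ k') (h2 : k' ≤ n) :
    pget p k ≤ pget p k' := by
  rw [mem_PK] at hp
  have hk : k - 1 < n := by omega
  have hk' : k' - 1 < n := by omega
  rw [pget, dif_pos hk, pget, dif_pos hk']
  exact hp.1 (by simp only [Fin.mk_le_mk]; omega)

/-- upper bound inside block `ℓ` -/
lemma pget_block_le (hp : p ∈ PK m n) (hn : 1 ≤ n) {ℓ k : ℕ} (hℓ : ℓ ≤ m)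
    (hk1 : ffixE m p ℓ ≤ k) (hk2 : k < ffixE m p (ℓ + 1)) (hkn : k ≤ n) :
    pget p k ≤ m * (k - 2) + ℓ + 1 := by
  have h2 : 2 ≤ k := le_trans (two_le_ffixE hn ℓ) hk1
  rcases eq_or_lt_of_le hℓ with hℓm | hℓm
  · have := (pget_mem_PK hp (by omega) hkn).2
    have he : m * (k - 1) = m * (k - 2) + m := by
      have hh : k - 1 = (k - 2) + 1 := by omega
      rw [hh, Nat.mul_add, Nat.mul_one]
    omega
  · rw [ffixE_mid (by omega) (by omega)] at hk2
    have := pget_lt_ffix p h2 hkn hk2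
    omega

/-- the value at the start of a nonempty block -/
lemma pget_block_start (hp : p ∈ PK m n) (hn : 1 ≤ n) {ℓ : ℕ} (hℓ : ℓ ≤ m)
    (hne : ffixE m p ℓ < ffixE m p (ℓ + 1)) :
    pget p (ffixE m p ℓ) = m * (ffixE m p ℓ - 2) + ℓ + 1 := by
  have hkn : ffixE m p ℓ ≤ n := by
    have := ffixE_le (m := m) (p := p) hn (ℓ + 1); omega
  have hub := pget_block_le hp hn hℓ le_rfl hne hkn
  rcases Nat.eq_zero_or_pos ℓ with rfl | hℓ1
  · rw [ffixE_zero] at hub hkn ⊢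
    have := (pget_mem_PK hp (k := 2) (by omega) hkn).1
    simp only [Nat.sub_self, Nat.mul_zero] at hub ⊢
    omega
  · have hlb := pget_ffix p (ℓ := ℓ) (by rwa [← ffixE_mid hℓ1 hℓ])
    rw [← ffixE_mid hℓ1 hℓ] at hlb
    omega

end FE
section FWD
variable {m n : ℕ} {p : Fin n → ℕ}

lemma FRD_length (ℓ : ℕ) : (FRD m p ℓ).length = ffixE m p (ℓ + 1) - ffixE m p ℓ := by
  simp [FRD]

lemma FRD_get {ℓ : ℕ} (t : ℕ) (ht : t < (FRD m p ℓ).length) :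
    (FRD m p ℓ).get ⟨t, ht⟩ = pget p (ffixE m p ℓ + t) - (pget p (ffixE m p ℓ) - 1) := by
  simp [FRD]

/-- entries of `FRD` for parking distributions, explicit form -/
lemma FRD_get' (hp : p ∈ PK m n) (hn : 1 ≤ n) {ℓ : ℕ} (hℓ : ℓ ≤ m) (t : ℕ)
    (ht : t < (FRD m p ℓ).length) :
    (FRD m p ℓ).get ⟨t, ht⟩ = pget p (ffixE m p ℓ + t) - (m * (ffixE m p ℓ - 2) + ℓ) := by
  rw [FRD_get t ht]
  rw [FRD_length] at ht
  have hne : ffixE m p ℓ < ffixE m p (ℓ + 1) := by omega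
  rw [pget_block_start hp hn hℓ hne]
  omega

lemma isPKlist_FRD (hp : p ∈ PK m n) (hn : 1 ≤ n) {ℓ : ℕ} (hℓ : ℓ ≤ m) :
    isPKlist m (FRD m p ℓ) := by
  have h2 := two_le_ffixE (m := m) (p := p) hn ℓ
  have hle := ffixE_le (m := m) (p := p) hn (ℓ + 1)
  constructor
  · rw [List.pairwise_iff_get]
    intro i j hij
    rw [FRD_get _ i.isLt, FRD_get _ j.isLt]
    have hj : (j : ℕ) < ffixE m p (ℓ + 1) - ffixE m p ℓ := lt_of_lt_of_eq j.isLt (FRD_length ℓ)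
    apply Nat.sub_le_sub_right
    apply pget_mono hp (by omega) (by omega) (by omega)
  · intro i
    have hi := i.isLt
    have hi' : (i : ℕ) < ffixE m p (ℓ + 1) - ffixE m p ℓ := lt_of_lt_of_eq i.isLt (FRD_length ℓ)
    have hne : ffixE m p ℓ < ffixE m p (ℓ + 1) := by omega
    have hstart := pget_block_start hp hn hℓ hne
    rw [FRD_get' hp hn hℓ i hi]
    constructor
    · have hmono : pget p (ffixE m p ℓ) ≤ pget p (ffixE m p ℓ + i) :=
        pget_mono hp (by omega) (by omega) (by omega)
      omega
    · have hub := pget_block_le hp hn hℓ (k := ffixE m p ℓ + i) (by omega) (by omega) (by omega)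
      have he : m * (ffixE m p ℓ + i - 2) = m * (ffixE m p ℓ - 2) + m * i := by
        have hh : ffixE m p ℓ + i - 2 = (ffixE m p ℓ - 2) + i := by omega
        rw [hh, Nat.mul_add]
      omega

lemma FRD_sum_length (hp : p ∈ PK m n) (hn : 1 ≤ n) :
    ∑ ℓ : Fin (m + 1), (FRD m p (ℓ : ℕ)).length = n - 1 := by
  have key : ∀ N, N ≤ m + 1 → ∑ j ∈ Finset.range N, (FRD m p j).length = ffixE m p N - 2 := by
    intro N
    induction N with
    | zero => intro _; simp [ffixE_zero]
    | succ N ih =>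
      intro hN
      rw [Finset.sum_range_succ, ih (by omega), FRD_length]
      have h1 := ffixE_mono (m := m) (p := p) hn (Nat.zero_le N) (by omega)
      have h2 := ffixE_mono (m := m) (p := p) hn (show N ≤ N + 1 by omega) hN
      rw [ffixE_zero] at h1
      omega
  rw [Fin.sum_univ_eq_sum_range (fun j => (FRD m p j).length) (m + 1), key (m + 1) le_rfl, ffixE_top]
  omega

end FWD
section INV
variable {m : ℕ}

/-- length of the `j`-th part -/
def partlen {m : ℕ} (Q : Fin (m + 1) → List ℕ) (j : ℕ) : ℕ :=
  if h : j < m + 1 then (Q ⟨j, h⟩).length else 0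

/-- starting position (1-indexed) of block `j` -/
def Spos {m : ℕ} (Q : Fin (m + 1) → List ℕ) (j : ℕ) : ℕ :=
  2 + ∑ t ∈ Finset.range j, partlen Q t

/-- the inverse of the first-return decomposition -/
def ginv (m n : ℕ) (Q : Fin (m + 1) → List ℕ) : Fin n → ℕ := fun i =>
  if (i : ℕ) = 0 then 1 else
    let ℓ := Nat.findGreatest (fun j => Spos Q j ≤ (i : ℕ) + 1) m
    (Q ⟨ℓ, Nat.lt_succ_of_le (Nat.findGreatest_le m)⟩).getD ((i : ℕ) + 1 - Spos Q ℓ) 0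
      + m * (Spos Q ℓ - 2) + ℓ

variable {Q : Fin (m + 1) → List ℕ}

lemma Spos_zero : Spos Q 0 = 2 := by simp [Spos]

lemma Spos_succ (j : ℕ) : Spos Q (j + 1) = Spos Q j + partlen Q j := by
  rw [Spos, Spos, Finset.sum_range_succ]; omega

lemma Spos_mono {j j' : ℕ} (h : j ≤ j') : Spos Q j ≤ Spos Q j' := by
  rw [Spos, Spos]
  have := Finset.sum_le_sum_of_subset (f := partlen Q)
    (Finset.range_subset_range.2 h)
  omega

lemma two_le_Spos (j : ℕ) : 2 ≤ Spos Q j := by rw [Spos]; omega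

lemma Spos_top {n : ℕ} (hs : ∑ ℓ : Fin (m + 1), (Q ℓ).length = n - 1) (hn : 1 ≤ n) :
    Spos Q (m + 1) = n + 1 := by
  rw [Spos]
  have he : ∑ t ∈ Finset.range (m + 1), partlen Q t = ∑ ℓ : Fin (m + 1), (Q ℓ).length := by
    rw [← Fin.sum_univ_eq_sum_range (fun j => partlen Q j) (m + 1)]
    apply Finset.sum_congr rfl
    intro j _
    rw [partlen, dif_pos j.isLt, Fin.eta]
  omega

/-- the block index of a position `k` -/
def blockOf (Q : Fin (m + 1) → List ℕ) (k : ℕ) : ℕ :=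
  Nat.findGreatest (fun j => Spos Q j ≤ k) m

lemma blockOf_spec {n k : ℕ} (hs : ∑ ℓ : Fin (m + 1), (Q ℓ).length = n - 1) (hn : 1 ≤ n)
    (h2 : 2 ≤ k) (hkn : k ≤ n) :
    Spos Q (blockOf Q k) ≤ k ∧ k < Spos Q (blockOf Q k + 1) ∧ blockOf Q k ≤ m := by
  have hle : blockOf Q k ≤ m := Nat.findGreatest_le m
  have hsp : Spos Q (blockOf Q k) ≤ k :=
    Nat.findGreatest_spec (P := fun j => Spos Q j ≤ k) (m := 0) (Nat.zero_le m)
      (show Spos Q 0 ≤ k by rw [Spos_zero]; exact h2)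
  refine ⟨hsp, ?_, hle⟩
  rcases eq_or_lt_of_le hle with he | hlt
  · rw [he, Spos_top hs hn]; omega
  · have hg : ¬ Spos Q (blockOf Q k + 1) ≤ k :=
      Nat.findGreatest_is_greatest (P := fun j => Spos Q j ≤ k)
        (Nat.lt_succ_self _) (by omega)
    omega

lemma blockOf_eq {n k j : ℕ} (hs : ∑ ℓ : Fin (m + 1), (Q ℓ).length = n - 1) (hn : 1 ≤ n)
    (h2 : 2 ≤ k) (hkn : k ≤ n) (hj : j ≤ m) (h1 : Spos Q j ≤ k) (hlt : k < Spos Q (j + 1)) :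
    blockOf Q k = j := by
  obtain ⟨ha, hb, hc⟩ := blockOf_spec hs hn h2 hkn
  rcases lt_trichotomy (blockOf Q k) j with h | h | h
  · exfalso
    have := Spos_mono (Q := Q) (show blockOf Q k + 1 ≤ j by omega)
    omega
  · exact h
  · exfalso
    have := Spos_mono (Q := Q) (show j + 1 ≤ blockOf Q k by omega)
    omega

end INV
section INV2
variable {m n : ℕ} {Q : Fin (m + 1) → List ℕ}

lemma pget_ginv {k : ℕ} (h2 : 2 ≤ k) (hkn : k ≤ n) :
    pget (ginv m n Q) k
      = (Q ⟨blockOf Q k, Nat.lt_succ_of_le (Nat.findGreatest_le m)⟩).getD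
          (k - Spos Q (blockOf Q k)) 0
        + m * (Spos Q (blockOf Q k) - 2) + blockOf Q k := by
  have hk : k - 1 < n := by omega
  rw [pget, dif_pos hk]
  show (if ((⟨k - 1, hk⟩ : Fin n) : ℕ) = 0 then 1 else _) = _
  rw [if_neg (show ¬ ((⟨k - 1, hk⟩ : Fin n) : ℕ) = 0 by simp only [Fin.val_mk]; omega)]
  have hkk : ((⟨k - 1, hk⟩ : Fin n) : ℕ) + 1 = k := by simp only [Fin.val_mk]; omega
  simp only [hkk]
  rfl

lemma getD_block (hQ : ∀ ℓ, isPKlist m (Q ℓ)) {j k : ℕ} (hjm : j < m + 1)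
    (h1 : Spos Q j ≤ k) (h2 : k < Spos Q (j + 1)) :
    ∃ ht : k - Spos Q j < (Q ⟨j, hjm⟩).length,
      (Q ⟨j, hjm⟩).getD (k - Spos Q j) 0 = (Q ⟨j, hjm⟩).get ⟨k - Spos Q j, ht⟩ := by
  have hlen : partlen Q j = (Q ⟨j, hjm⟩).length := by rw [partlen, dif_pos hjm]
  have hsucc := Spos_succ (Q := Q) j
  have ht : k - Spos Q j < (Q ⟨j, hjm⟩).length := by omega
  exact ⟨ht, List.getD_eq_get _ _ ⟨_, ht⟩⟩

lemma ginv_bounds (hQ : ∀ ℓ, isPKlist m (Q ℓ))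
    (hs : ∑ ℓ : Fin (m + 1), (Q ℓ).length = n - 1) (hn : 1 ≤ n)
    {k : ℕ} (h2 : 2 ≤ k) (hkn : k ≤ n) :
    m * (Spos Q (blockOf Q k) - 2) + 1 + blockOf Q k ≤ pget (ginv m n Q) k ∧
    pget (ginv m n Q) k ≤ m * (k - 2) + 1 + blockOf Q k := by
  obtain ⟨ha, hb, hc⟩ := blockOf_spec hs hn h2 hkn
  obtain ⟨ht, hg⟩ := getD_block hQ (Nat.lt_succ_of_le hc) ha hb
  rw [pget_ginv h2 hkn, hg]
  obtain ⟨hlb, hub⟩ := (hQ _).2 ⟨k - Spos Q (blockOf Q k), ht⟩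
  have hsp2 := two_le_Spos (Q := Q) (blockOf Q k)
  have he : m * (k - 2) = m * (k - Spos Q (blockOf Q k)) + m * (Spos Q (blockOf Q k) - 2) := by
    rw [← Nat.mul_add]
    congr 1
    omega
  simp only at hlb hub
  omega

lemma ffix_ginv (hQ : ∀ ℓ, isPKlist m (Q ℓ))
    (hs : ∑ ℓ : Fin (m + 1), (Q ℓ).length = n - 1) (hn : 1 ≤ n)
    {ℓ : ℕ} (hℓ1 : 1 ≤ ℓ) (hℓm : ℓ ≤ m) :
    ffix m (ginv m n Q) ℓ = Spos Q ℓ := by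
  have htop := Spos_top (Q := Q) hs hn
  have hmono := Spos_mono (Q := Q) (show ℓ ≤ m + 1 by omega)
  have hsp2 := two_le_Spos (Q := Q) ℓ
  apply le_antisymm
  · rcases le_or_gt (Spos Q ℓ) n with hin | hout
    · apply Nat.sInf_le
      left
      have hk : Spos Q ℓ - 1 < n := by omega
      refine ⟨hsp2, ⟨Spos Q ℓ - 1, hk⟩, by simp only; omega, ?_⟩
      obtain ⟨ha, hb, hc⟩ := blockOf_spec (k := Spos Q ℓ) hs hn hsp2 hin
      have hℓj : ℓ ≤ blockOf Q (Spos Q ℓ) := by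
        by_contra hcon
        push_neg at hcon
        have := Spos_mono (Q := Q) (show blockOf Q (Spos Q ℓ) + 1 ≤ ℓ by omega)
        omega
      have hsj : Spos Q (blockOf Q (Spos Q ℓ)) = Spos Q ℓ :=
        le_antisymm ha (Spos_mono hℓj)
      have hlow := (ginv_bounds hQ hs hn hsp2 hin).1
      rw [hsj] at hlow
      have hpg : pget (ginv m n Q) (Spos Q ℓ) = ginv m n Q ⟨Spos Q ℓ - 1, hk⟩ := by
        rw [pget, dif_pos hk]
      rw [hpg] at hlow
      omega
    · apply Nat.sInf_le
      right
      simp only [Set.mem_singleton_iff]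
      omega
  · apply le_csInf ⟨n + 1, Or.inr rfl⟩
    rintro b (⟨hb2, i, hik, hpi⟩ | hb)
    · by_contra hcon
      push_neg at hcon
      have hbn : b ≤ n := by have := i.isLt; omega
      obtain ⟨ha, hbb, hc⟩ := blockOf_spec (k := b) hs hn hb2 hbn
      have hjℓ : blockOf Q b < ℓ := by
        by_contra hcon2
        push_neg at hcon2
        have := Spos_mono (Q := Q) hcon2
        omega
      have hub := (ginv_bounds hQ hs hn hb2 hbn).2
      have hpg : pget (ginv m n Q) b = ginv m n Q i := by
        rw [pget, dif_pos (show b - 1 < n by omega)]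
        congr 1
        apply Fin.ext
        simp only
        omega
      rw [hpg] at hub
      omega
    · simp only [Set.mem_singleton_iff] at hb
      omega

lemma ffixE_ginv (hQ : ∀ ℓ, isPKlist m (Q ℓ))
    (hs : ∑ ℓ : Fin (m + 1), (Q ℓ).length = n - 1) (hn : 1 ≤ n)
    {j : ℕ} (hj : j ≤ m + 1) :
    ffixE m (ginv m n Q) j = Spos Q j := by
  rcases Nat.eq_zero_or_pos j with rfl | hj1
  · rw [ffixE_zero, Spos_zero]
  rcases eq_or_lt_of_le hj with he | hlt
  · rw [he, ffixE_top, Spos_top hs hn]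
  · rw [ffixE_mid hj1 (by omega), ffix_ginv hQ hs hn hj1 (by omega)]

end INV2
section MAPS
variable {m n : ℕ} {Q : Fin (m + 1) → List ℕ}

lemma ginv_zero {i : Fin n} (hi : (i : ℕ) = 0) : ginv m n Q i = 1 := by
  rw [ginv, if_pos hi]

lemma pget_ginv_eq {i : Fin n} (hi : 1 ≤ (i : ℕ)) :
    pget (ginv m n Q) ((i : ℕ) + 1) = ginv m n Q i := by
  rw [pget, dif_pos (show (i : ℕ) + 1 - 1 < n by have := i.isLt; omega)]
  congr 1

lemma ginv_mem_PK (hQ : ∀ ℓ, isPKlist m (Q ℓ))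
    (hs : ∑ ℓ : Fin (m + 1), (Q ℓ).length = n - 1) (hn : 1 ≤ n) :
    ginv m n Q ∈ PK m n := by
  rw [mem_PK]
  have hval : ∀ i : Fin n, 1 ≤ (i : ℕ) →
      1 ≤ ginv m n Q i ∧ ginv m n Q i ≤ m * (i : ℕ) + 1 := by
    intro i hi
    have hk2 : 2 ≤ (i : ℕ) + 1 := by omega
    have hkn : (i : ℕ) + 1 ≤ n := by have := i.isLt; omega
    obtain ⟨hlb, hub⟩ := ginv_bounds hQ hs hn hk2 hkn
    rw [pget_ginv_eq hi] at hlb hub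
    have hbm := (blockOf_spec (k := (i : ℕ) + 1) hs hn hk2 hkn).2.2
    have he : m * ((i : ℕ) + 1 - 2) + m = m * (i : ℕ) := by
      rw [← Nat.mul_succ]
      congr 1
      omega
    constructor
    · omega
    · omega
  constructor
  · -- monotone
    intro i i' hle
    rcases Nat.eq_zero_or_pos (i : ℕ) with hi0 | hi1
    · rw [ginv_zero hi0]
      rcases Nat.eq_zero_or_pos (i' : ℕ) with hi'0 | hi'1
      · rw [ginv_zero hi'0]
      · exact (hval i' hi'1).1
    · have hi'1 : 1 ≤ (i' : ℕ) := le_trans hi1 hle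
      rcases eq_or_lt_of_le (show (i : ℕ) ≤ (i' : ℕ) from hle) with he | hlt
      · have : i = i' := Fin.ext he
        rw [this]
      · -- strictly increasing positions
        set k := (i : ℕ) + 1 with hk
        set k' := (i' : ℕ) + 1 with hk'
        have hk2 : 2 ≤ k := by omega
        have hkn : k ≤ n := by have := i.isLt; omega
        have hk'2 : 2 ≤ k' := by omega
        have hk'n : k' ≤ n := by have := i'.isLt; omega
        rw [← pget_ginv_eq hi1, ← pget_ginv_eq hi'1]
        show pget (ginv m n Q) k ≤ pget (ginv m n Q) k'
        obtain ⟨ha, hb, hc⟩ := blockOf_spec (k := k) hs hn hk2 hkn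
        obtain ⟨ha', hb', hc'⟩ := blockOf_spec (k := k') hs hn hk'2 hk'n
        have hjj : blockOf Q k ≤ blockOf Q k' := by
          by_contra hcon
          push_neg at hcon
          have := Spos_mono (Q := Q) (show blockOf Q k' + 1 ≤ blockOf Q k by omega)
          omega
        rcases eq_or_lt_of_le hjj with hje | hjlt
        · -- same block
          obtain ⟨ht, hg⟩ := getD_block hQ (Nat.lt_succ_of_le hc) ha hb
          obtain ⟨ht', hg'⟩ := getD_block hQ (Nat.lt_succ_of_le hc') ha' hb'
          rw [pget_ginv hk2 hkn, pget_ginv hk'2 hk'n]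
          have hfin : (⟨blockOf Q k', Nat.lt_succ_of_le (Nat.findGreatest_le m)⟩ : Fin (m + 1))
              = ⟨blockOf Q k, Nat.lt_succ_of_le (Nat.findGreatest_le m)⟩ := Fin.ext hje.symm
          have hSeq : Spos Q (blockOf Q k') = Spos Q (blockOf Q k) := by rw [hje]
          rw [hfin, hSeq]
          have hlen : (Q (⟨blockOf Q k', Nat.lt_succ_of_le (Nat.findGreatest_le m)⟩ : Fin (m + 1))).length
              = (Q ⟨blockOf Q k, Nat.lt_succ_of_le (Nat.findGreatest_le m)⟩).length := by rw [hfin]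
          have ht'' : k' - Spos Q (blockOf Q k)
              < (Q ⟨blockOf Q k, Nat.lt_succ_of_le (Nat.findGreatest_le m)⟩).length := by omega
          rw [hg, List.getD_eq_get _ _ ⟨_, ht''⟩]
          have hmono := List.pairwise_iff_get.1 (hQ ⟨blockOf Q k,
            Nat.lt_succ_of_le (Nat.findGreatest_le m)⟩).1
          have hidx : k - Spos Q (blockOf Q k) < k' - Spos Q (blockOf Q k) := by omega
          have hmle := hmono ⟨k - Spos Q (blockOf Q k), ht⟩
            ⟨k' - Spos Q (blockOf Q k), ht''⟩ (by rw [Fin.mk_lt_mk]; exact hidx)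
          omega
        · -- different blocks
          have hub := (ginv_bounds hQ hs hn hk2 hkn).2
          have hlb := (ginv_bounds hQ hs hn hk'2 hk'n).1
          have hkS : k < Spos Q (blockOf Q k') :=
            lt_of_lt_of_le hb (Spos_mono (by omega))
          have hmul : m * (k - 2) ≤ m * (Spos Q (blockOf Q k') - 2) :=
            Nat.mul_le_mul_left m (by omega)
          omega
  · -- bounds
    intro i
    rcases Nat.eq_zero_or_pos (i : ℕ) with hi0 | hi1
    · rw [ginv_zero hi0]
      omega
    · exact hval i hi1

end MAPS
section ROUND
variable {m n : ℕ} {Q : Fin (m + 1) → List ℕ} {p : Fin n → ℕ}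

lemma pget_ginv' (hQ : ∀ ℓ, isPKlist m (Q ℓ))
    (hs : ∑ ℓ : Fin (m + 1), (Q ℓ).length = n - 1) (hn : 1 ≤ n)
    {ℓ : Fin (m + 1)} {k : ℕ} (h2 : 2 ≤ k) (hkn : k ≤ n)
    (h1 : Spos Q ℓ ≤ k) (hlt : k < Spos Q ((ℓ : ℕ) + 1)) :
    ∃ ht : k - Spos Q (ℓ : ℕ) < (Q ℓ).length,
      pget (ginv m n Q) k = (Q ℓ).get ⟨k - Spos Q (ℓ : ℕ), ht⟩
        + m * (Spos Q (ℓ : ℕ) - 2) + (ℓ : ℕ) := by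
  have hbl : blockOf Q k = (ℓ : ℕ) :=
    blockOf_eq hs hn h2 hkn (by omega) h1 hlt
  have hfin : (⟨blockOf Q k, Nat.lt_succ_of_le (Nat.findGreatest_le m)⟩ : Fin (m + 1)) = ℓ :=
    Fin.ext hbl
  have hlen : partlen Q (ℓ : ℕ) = (Q ℓ).length := by
    rw [partlen, dif_pos ℓ.isLt, Fin.eta]
  have hsucc := Spos_succ (Q := Q) (ℓ : ℕ)
  have ht : k - Spos Q (ℓ : ℕ) < (Q ℓ).length := by omega
  refine ⟨ht, ?_⟩
  rw [pget_ginv h2 hkn, hfin, hbl, List.getD_eq_get _ _ ⟨_, ht⟩]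

lemma FRD_ginv (hQ : ∀ ℓ, isPKlist m (Q ℓ))
    (hs : ∑ ℓ : Fin (m + 1), (Q ℓ).length = n - 1) (hn : 1 ≤ n) (ℓ : Fin (m + 1)) :
    FRD m (ginv m n Q) (ℓ : ℕ) = Q ℓ := by
  have hgq := ginv_mem_PK hQ hs hn
  have hT1 := ffixE_ginv (j := (ℓ : ℕ)) hQ hs hn (by omega)
  have hT2 := ffixE_ginv (j := (ℓ : ℕ) + 1) hQ hs hn (by have := ℓ.isLt; omega)
  have hlen : partlen Q (ℓ : ℕ) = (Q ℓ).length := by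
    rw [partlen, dif_pos ℓ.isLt, Fin.eta]
  have hsucc := Spos_succ (Q := Q) (ℓ : ℕ)
  have hStop := Spos_top (Q := Q) hs hn
  have hmon := Spos_mono (Q := Q) (show (ℓ : ℕ) + 1 ≤ m + 1 by have := ℓ.isLt; omega)
  have hS2 := two_le_Spos (Q := Q) (ℓ : ℕ)
  have hlen2 : (FRD m (ginv m n Q) (ℓ : ℕ)).length = (Q ℓ).length := by
    rw [FRD_length, hT1, hT2]; omega
  apply List.ext_get hlen2
  intro t h1 h2
  rw [FRD_get _ h1]
  rw [FRD_length, hT1, hT2] at h1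
  -- h1 : t < Spos Q (ℓ+1) - Spos Q ℓ
  have hkt2 : 2 ≤ Spos Q (ℓ : ℕ) + t := by omega
  have hktn : Spos Q (ℓ : ℕ) + t ≤ n := by omega
  obtain ⟨hta, hea⟩ := pget_ginv' (ℓ := ℓ) hQ hs hn hkt2 hktn (by omega) (by omega)
  obtain ⟨htb, heb⟩ := pget_ginv' (ℓ := ℓ) hQ hs hn (k := Spos Q (ℓ : ℕ)) (by omega)
    (by omega) le_rfl (by omega)
  rw [hT1, hea, heb]
  have hza : (⟨Spos Q (ℓ : ℕ) + t - Spos Q (ℓ : ℕ), hta⟩ : Fin (Q ℓ).length) = ⟨t, h2⟩ :=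
    Fin.ext (by simp only; omega)
  have hzb : (⟨Spos Q (ℓ : ℕ) - Spos Q (ℓ : ℕ), htb⟩ : Fin (Q ℓ).length) = ⟨0, by omega⟩ :=
    Fin.ext (by simp only; omega)
  rw [hza, hzb]
  have h0 := (hQ ℓ).2 ⟨0, by omega⟩
  simp only [Fin.val_mk, Nat.mul_zero, Nat.zero_add] at h0
  have h0' : (Q ℓ).get ⟨0, by omega⟩ = 1 := by omega
  rw [h0']
  omega

lemma Spos_FRD (hp : p ∈ PK m n) (hn : 1 ≤ n) {j : ℕ} (hj : j ≤ m + 1) :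
    Spos (fun ℓ : Fin (m + 1) => FRD m p (ℓ : ℕ)) j = ffixE m p j := by
  induction j with
  | zero => rw [Spos_zero, ffixE_zero]
  | succ j ih =>
    rw [Spos_succ, ih (by omega)]
    have hpl : partlen (fun ℓ : Fin (m + 1) => FRD m p (ℓ : ℕ)) j = (FRD m p j).length := by
      rw [partlen, dif_pos (show j < m + 1 by omega)]
    rw [hpl, FRD_length]
    have := ffixE_mono (m := m) (p := p) hn (show j ≤ j + 1 by omega) (by omega)
    omega

lemma ginv_FRD (hp : p ∈ PK m n) (hn : 1 ≤ n) :
    ginv m n (fun ℓ : Fin (m + 1) => FRD m p (ℓ : ℕ)) = p := by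
  set Q : Fin (m + 1) → List ℕ := fun ℓ : Fin (m + 1) => FRD m p (ℓ : ℕ) with hQdef
  have hQ : ∀ ℓ : Fin (m + 1), isPKlist m (Q ℓ) := fun ℓ => isPKlist_FRD hp hn (by omega)
  have hs : ∑ ℓ : Fin (m + 1), (Q ℓ).length = n - 1 := FRD_sum_length hp hn
  funext i
  rcases Nat.eq_zero_or_pos (i : ℕ) with hi0 | hi1
  · rw [ginv_zero hi0]
    obtain ⟨hl, hu⟩ := (mem_PK.1 hp).2 i
    rw [hi0, Nat.mul_zero] at hu
    omega
  · rw [← pget_ginv_eq hi1]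
    have hk2 : 2 ≤ (i : ℕ) + 1 := by omega
    have hkn : (i : ℕ) + 1 ≤ n := by have := i.isLt; omega
    obtain ⟨ha, hb, hc⟩ := blockOf_spec (k := (i : ℕ) + 1) hs hn hk2 hkn
    set j : Fin (m + 1) := ⟨blockOf Q ((i : ℕ) + 1), by omega⟩ with hjdef
    have hja : Spos Q (j : ℕ) ≤ (i : ℕ) + 1 := ha
    have hjb : (i : ℕ) + 1 < Spos Q ((j : ℕ) + 1) := hb
    obtain ⟨ht, he⟩ := pget_ginv' (ℓ := j) hQ hs hn hk2 hkn hja hjb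
    rw [he]
    -- now express the get of the FRD part
    have hSj := Spos_FRD (m := m) hp hn (j := (j : ℕ)) (by omega)
    have hSj1 := Spos_FRD (m := m) hp hn (j := (j : ℕ) + 1) (by have := j.isLt; omega)
    have hQj : Q j = FRD m p (j : ℕ) := rfl
    have ht' : (i : ℕ) + 1 - Spos Q (j : ℕ) < (FRD m p (j : ℕ)).length := by
      rw [← hQj]; exact ht
    have hgete : (Q j).get ⟨(i : ℕ) + 1 - Spos Q (j : ℕ), ht⟩
        = (FRD m p (j : ℕ)).get ⟨(i : ℕ) + 1 - Spos Q (j : ℕ), ht'⟩ := rfl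
    rw [hgete, FRD_get' hp hn (show (j : ℕ) ≤ m by have := j.isLt; omega)]
    rw [hSj] at hja ⊢
    rw [hSj1] at hjb
    have harg : ffixE m p (j : ℕ) + ((i : ℕ) + 1 - ffixE m p (j : ℕ)) = (i : ℕ) + 1 := by
      omega
    rw [harg]
    have hstart := pget_block_start hp hn (show (j : ℕ) ≤ m by have := j.isLt; omega)
      (by omega)
    have hmono := pget_mono hp (k := ffixE m p (j : ℕ)) (k' := (i : ℕ) + 1)
      (by have := two_le_ffixE (m := m) (p := p) hn (j : ℕ); omega) (by omega) hkn
    have hpi : pget p ((i : ℕ) + 1) = p i := by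
      rw [pget, dif_pos (show (i : ℕ) + 1 - 1 < n by have := i.isLt; omega)]
      congr 1
    omega

end ROUND
theorem stmt7 (m : ℕ) (hm : 1 ≤ m) (n : ℕ) (hn : 1 ≤ n) :
    Set.BijOn (fun (p : Fin n → ℕ) (ℓ : Fin (m + 1)) => FRD m p (ℓ : ℕ))
      (↑(PK m n))
      {Q : Fin (m + 1) → List ℕ |
        (∀ ℓ, isPKlist m (Q ℓ)) ∧ ∑ ℓ : Fin (m + 1), (Q ℓ).length = n - 1} := by
  refine Set.InvOn.bijOn (f' := ginv m n) ⟨?_, ?_⟩ ?_ ?_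
  · intro p hp
    exact ginv_FRD (Finset.mem_coe.1 hp) hn
  · intro Q hQ
    funext ℓ
    exact FRD_ginv hQ.1 hQ.2 hn ℓ
  · intro p hp
    refine ⟨fun ℓ => isPKlist_FRD (Finset.mem_coe.1 hp) hn (by omega), ?_⟩
    exact FRD_sum_length (Finset.mem_coe.1 hp) hn
  · intro Q hQ
    exact Finset.mem_coe.2 (ginv_mem_PK hQ.1 hQ.2 hn)
end
end

section
/- For every n ≥ 1, the following polynomial identity holds in ℤ[q,t,u,v]: Σ_{p ∈ PK(n)} q^{luck(p)} · t^{ω_1(p)} · u^{i_1(p)} · v^{i_m(p)} = q·t·(uv)^2 · Σ_{k=0}^{n−1} (uv)^k R_k(t) · Σ_{r=0}^{n−1−k} h_{r,1,1} · v^r · R_{n−1−k−r}(q). -/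
open scoped Classical
open Finset

noncomputable section

namespace Stmt8Aux

lemma mem_BSeq {n : ℕ} {b : ℕ → ℕ} {p : Fin n → ℕ} :
    p ∈ BSeq n b ↔ Monotone p ∧ ∀ i : Fin n, 1 ≤ p i ∧ p i ≤ b i := by
  rw [BSeq, Set.Finite.mem_toFinset]; rfl

/-- middle sequences -/
def MSeq (m r : ℕ) : Finset (Fin r → ℕ) := BSeq r (fun i => m * (i + 1) - 1)

lemma hcnt_eq (m r : ℕ) : hcnt m r 1 1 = (MSeq m r).card := rfl

/-- extend a tuple by zero -/
def extt {n : ℕ} (p : Fin n → ℕ) : ℕ → ℕ := fun j => if h : j < n then p ⟨j, h⟩ else 0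

lemma extt_eq {n : ℕ} (p : Fin n → ℕ) (j : ℕ) (h : j < n) : extt p j = p ⟨j, h⟩ := dif_pos h

lemma sum_extt {M : Type*} [AddCommMonoid M] {s : ℕ} (c : Fin s → ℕ) (f : ℕ → ℕ → M) :
    ∑ i : Fin s, f (c i) (i : ℕ) = ∑ t ∈ Finset.range s, f (extt c t) t := by
  rw [← Fin.sum_univ_eq_sum_range (fun t => f (extt c t) t) s]
  exact Finset.sum_congr rfl fun i _ => by
    rw [extt_eq c (i : ℕ) i.isLt, Fin.eta]

lemma luck_eq_range (m : ℕ) {s : ℕ} (c : Fin s → ℕ) :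
    luck m c = ∑ t ∈ Finset.range s, (if extt c t = m * t + 1 then 1 else 0) := by
  rw [luck, Finset.card_filter]
  exact sum_extt c (fun v t => if v = m * t + 1 then 1 else 0)

lemma freq_eq_range (j : ℕ) {s : ℕ} (c : Fin s → ℕ) :
    freq j c = ∑ t ∈ Finset.range s, (if extt c t = j then 1 else 0) := by
  rw [freq, Finset.card_filter]
  exact sum_extt c (fun v _t => if v = j then 1 else 0)

/-- the encoding sequence -/
def encN (m k r : ℕ) (a b c : ℕ → ℕ) : ℕ → ℕ := fun i =>
  if i = 0 then 1
  else if i ≤ k then a (i - 1)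
  else if i ≤ k + r then b (i - 1 - k) + (m * k + 1)
  else c (i - 1 - k - r) + m * (k + r + 1)

lemma encN_zero (m k r : ℕ) (a b c : ℕ → ℕ) : encN m k r a b c 0 = 1 := by simp [encN]

lemma encN_pre (m k r : ℕ) (a b c : ℕ → ℕ) (j : ℕ) (hj : j < k) :
    encN m k r a b c (j + 1) = a j := by
  simp only [encN]
  rw [if_neg (by omega), if_pos (by omega)]
  congr 1

lemma encN_mid (m k r : ℕ) (a b c : ℕ → ℕ) (j : ℕ) (hj : j < r) :
    encN m k r a b c (k + 1 + j) = b j + (m * k + 1) := by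
  simp only [encN]
  rw [if_neg (by omega), if_neg (by omega), if_pos (by omega)]
  congr 2
  omega

lemma encN_suf (m k r : ℕ) (a b c : ℕ → ℕ) (j : ℕ) :
    encN m k r a b c (k + r + 1 + j) = c j + m * (k + r + 1) := by
  simp only [encN]
  rw [if_neg (by omega), if_neg (by omega), if_neg (by omega)]
  congr 2
  omega

end Stmt8Aux
namespace Stmt8Aux

lemma ffix_le (m : ℕ) {n : ℕ} (p : Fin n → ℕ) (ℓ : ℕ) : ffix m p ℓ ≤ n + 1 :=
  Nat.sInf_le (Set.mem_union_right _ rfl)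

lemma two_le_ffix (m : ℕ) {n : ℕ} (hn : 1 ≤ n) (p : Fin n → ℕ) (ℓ : ℕ) : 2 ≤ ffix m p ℓ := by
  have h := Nat.sInf_mem (⟨n + 1, Set.mem_union_right _ rfl⟩ :
    Set.Nonempty ({k | 2 ≤ k ∧ ∃ i : Fin n, (i : ℕ) + 1 = k ∧ m * (k - 2) + 1 + ℓ ≤ p i} ∪ {n + 1}))
  rcases h with h | h
  · exact h.1
  · rw [Set.mem_singleton_iff] at h
    rw [ffix, h]; omega

lemma ffix_min (m : ℕ) {n : ℕ} (p : Fin n → ℕ) (ℓ : ℕ) (i : Fin n) (h1 : 1 ≤ (i : ℕ))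
    (h2 : (i : ℕ) + 1 < ffix m p ℓ) : p i < m * ((i : ℕ) - 1) + 1 + ℓ := by
  by_contra hge
  push_neg at hge
  have hmem : (i : ℕ) + 1 ∈ ({k | 2 ≤ k ∧ ∃ i : Fin n, (i : ℕ) + 1 = k ∧
      m * (k - 2) + 1 + ℓ ≤ p i} ∪ {n + 1}) := by
    left
    refine ⟨by omega, i, rfl, ?_⟩
    have he : (i : ℕ) + 1 - 2 = (i : ℕ) - 1 := by omega
    rw [he]
    exact hge
  exact absurd hmem (Nat.notMem_of_lt_sInf h2)

lemma ffix_mem (m : ℕ) {n : ℕ} (p : Fin n → ℕ) (ℓ : ℕ) (h : ffix m p ℓ ≤ n) :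
    ∃ i : Fin n, (i : ℕ) + 1 = ffix m p ℓ ∧ m * (ffix m p ℓ - 2) + 1 + ℓ ≤ p i := by
  have hmem := Nat.sInf_mem (⟨n + 1, Set.mem_union_right _ rfl⟩ :
    Set.Nonempty ({k | 2 ≤ k ∧ ∃ i : Fin n, (i : ℕ) + 1 = k ∧ m * (k - 2) + 1 + ℓ ≤ p i} ∪ {n + 1}))
  rcases hmem with hh | hh
  · exact hh.2
  · rw [Set.mem_singleton_iff] at hh
    rw [ffix] at h
    omega

lemma ffix_mono (m : ℕ) {n : ℕ} (p : Fin n → ℕ) {ℓ ℓ' : ℕ} (h : ℓ ≤ ℓ') :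
    ffix m p ℓ ≤ ffix m p ℓ' := by
  unfold ffix
  apply le_csInf
  · exact ⟨n + 1, Set.mem_union_right _ rfl⟩
  rintro w (⟨h2, i, hi, hp⟩ | h1)
  · exact Nat.sInf_le (Or.inl ⟨h2, i, hi, by omega⟩)
  · exact Nat.sInf_le (Or.inr h1)

lemma ffix_spec (m : ℕ) {n : ℕ} (p : Fin n → ℕ) (ℓ v : ℕ) (hv2 : 2 ≤ v) (hvn : v ≤ n + 1)
    (hmem : v = n + 1 ∨ ∃ i : Fin n, (i : ℕ) + 1 = v ∧ m * (v - 2) + 1 + ℓ ≤ p i)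
    (hmin : ∀ i : Fin n, 1 ≤ (i : ℕ) → (i : ℕ) + 1 < v → p i < m * ((i : ℕ) - 1) + 1 + ℓ) :
    ffix m p ℓ = v := by
  apply le_antisymm
  · apply Nat.sInf_le
    rcases hmem with h | ⟨i, hi, hpi⟩
    · exact Set.mem_union_right _ h
    · exact Or.inl ⟨hv2, i, hi, hpi⟩
  · unfold ffix
    apply le_csInf
    · exact ⟨n + 1, Set.mem_union_right _ rfl⟩
    rintro w (⟨hw2, i, hiw, hpi⟩ | hw)
    · by_contra hlt
      push_neg at hlt
      have hmin' := hmin i (by omega) (by omega)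
      have he : w - 2 = (i : ℕ) - 1 := by omega
      rw [he] at hpi
      omega
    · rw [Set.mem_singleton_iff] at hw
      omega

end Stmt8Aux
namespace Stmt8Aux

lemma mem_PK {m n : ℕ} {p : Fin n → ℕ} :
    p ∈ PK m n ↔ Monotone p ∧ ∀ i : Fin n, 1 ≤ p i ∧ p i ≤ m * (i : ℕ) + 1 := mem_BSeq

lemma mem_MSeq {m r : ℕ} {b : Fin r → ℕ} :
    b ∈ MSeq m r ↔ Monotone b ∧ ∀ i : Fin r, 1 ≤ b i ∧ b i ≤ m * ((i : ℕ) + 1) - 1 := mem_BSeq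

section Enc

variable {m k r s : ℕ} {a : Fin k → ℕ} {b : Fin r → ℕ} {c : Fin s → ℕ}
variable (hm : 1 ≤ m) (ha : a ∈ PK m k) (hb : b ∈ MSeq m r) (hc : c ∈ PK m s)

include ha in
lemma encB1 (j : ℕ) (hj : j < k) :
    1 ≤ encN m k r (extt a) (extt b) (extt c) (j + 1) ∧
      encN m k r (extt a) (extt b) (extt c) (j + 1) ≤ m * j + 1 := by
  rw [encN_pre _ _ _ _ _ _ j hj, extt_eq a j hj]
  exact (mem_PK.mp ha).2 ⟨j, hj⟩

include hm hb in
lemma encB2 (j : ℕ) (hj : j < r) :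
    m * k + 2 ≤ encN m k r (extt a) (extt b) (extt c) (k + 1 + j) ∧
      encN m k r (extt a) (extt b) (extt c) (k + 1 + j) ≤ m * (k + 1 + j) := by
  rw [encN_mid _ _ _ _ _ _ j hj, extt_eq b j hj]
  obtain ⟨h1, h2⟩ := (mem_MSeq.mp hb).2 ⟨j, hj⟩
  have e1 : m * (k + 1 + j) = m * k + m * (j + 1) := by ring
  have e2 : 1 * 1 ≤ m * (j + 1) := Nat.mul_le_mul hm (by omega)
  simp only [Fin.val_mk] at h1 h2 ⊢
  omega

include hc in
lemma encB3 (j : ℕ) (hj : j < s) :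
    m * (k + r + 1) + 1 ≤ encN m k r (extt a) (extt b) (extt c) (k + r + 1 + j) ∧
      encN m k r (extt a) (extt b) (extt c) (k + r + 1 + j) ≤ m * (k + r + 1 + j) + 1 := by
  rw [encN_suf _ _ _ _ _ _ j, extt_eq c j hj]
  obtain ⟨h1, h2⟩ := (mem_PK.mp hc).2 ⟨j, hj⟩
  have e1 : m * (k + r + 1 + j) = m * (k + r + 1) + m * j := by ring
  simp only [Fin.val_mk] at h1 h2 ⊢
  omega

include hm ha hb hc in
lemma encBounds (t : ℕ) (ht : t < k + r + 1 + s) :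
    1 ≤ encN m k r (extt a) (extt b) (extt c) t ∧
      encN m k r (extt a) (extt b) (extt c) t ≤ m * t + 1 := by
  by_cases h0 : t = 0
  · subst h0; rw [encN_zero]; omega
  by_cases h1 : t ≤ k
  · obtain ⟨j, rfl⟩ : ∃ j, t = j + 1 := ⟨t - 1, by omega⟩
    obtain ⟨u1, u2⟩ := encB1 (b := b) (c := c) ha j (by omega)
    have e : m * (j + 1) = m * j + m := by ring
    omega
  by_cases h2 : t ≤ k + r
  · obtain ⟨j, rfl⟩ : ∃ j, t = k + 1 + j := ⟨t - k - 1, by omega⟩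
    obtain ⟨u1, u2⟩ := encB2 (a := a) (c := c) hm hb j (by omega)
    omega
  · obtain ⟨j, rfl⟩ : ∃ j, t = k + r + 1 + j := ⟨t - k - r - 1, by omega⟩
    obtain ⟨u1, u2⟩ := encB3 (a := a) (b := b) hc j (by omega)
    omega

end Enc

end Stmt8Aux
namespace Stmt8Aux

section Enc

variable {m k r s : ℕ} {a : Fin k → ℕ} {b : Fin r → ℕ} {c : Fin s → ℕ}
variable (hm : 1 ≤ m) (ha : a ∈ PK m k) (hb : b ∈ MSeq m r) (hc : c ∈ PK m s)

include hm ha hb hc in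
lemma encStep (t : ℕ) (ht : t + 1 < k + r + 1 + s) :
    encN m k r (extt a) (extt b) (extt c) t ≤ encN m k r (extt a) (extt b) (extt c) (t + 1) := by
  by_cases h0 : t = 0
  · subst h0
    rw [encN_zero]
    exact (encBounds hm ha hb hc 1 (by omega)).1
  by_cases h1 : t + 1 ≤ k
  · -- both in prefix
    obtain ⟨j, rfl⟩ : ∃ j, t = j + 1 := ⟨t - 1, by omega⟩
    rw [encN_pre _ _ _ _ _ _ j (by omega), encN_pre _ _ _ _ _ _ (j + 1) (by omega),
      extt_eq a j (by omega), extt_eq a (j + 1) (by omega)]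
    exact (mem_PK.mp ha).1 (by simp [Fin.mk_le_mk])
  by_cases h1' : t ≤ k
  · -- t = k ≥ 1, t+1 = k+1
    have hk : t = k := by omega
    subst hk
    obtain ⟨j, rfl⟩ : ∃ j, t = j + 1 := ⟨t - 1, by omega⟩
    have u2 := (encB1 (b := b) (c := c) ha j (by omega)).2
    by_cases hr : r ≥ 1
    · have v1 := (encB2 (a := a) (c := c) hm hb 0 (by omega)).1
      rw [show j + 1 + 1 + 0 = j + 1 + 1 by ring] at v1
      have e : m * (j + 1) = m * j + m := by ring
      omega
    · have hr0 : r = 0 := by omega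
      subst hr0
      have v1 := (encB3 (a := a) (b := b) hc 0 (by omega)).1
      rw [show j + 1 + 0 + 1 + 0 = j + 1 + 1 by omega] at v1
      have e : m * (j + 1 + 1) = m * j + m + m := by ring
      omega
  by_cases h2 : t + 1 ≤ k + r
  · -- both in middle
    obtain ⟨j, rfl⟩ : ∃ j, t = k + 1 + j := ⟨t - k - 1, by omega⟩
    rw [encN_mid _ _ _ _ _ _ j (by omega), show k + 1 + j + 1 = k + 1 + (j + 1) by ring,
      encN_mid _ _ _ _ _ _ (j + 1) (by omega),
      extt_eq b j (by omega), extt_eq b (j + 1) (by omega)]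
    have := (mem_MSeq.mp hb).1 (show (⟨j, by omega⟩ : Fin r) ≤ ⟨j + 1, by omega⟩ by
      simp [Fin.mk_le_mk])
    omega
  by_cases h2' : t ≤ k + r
  · -- t = k + r, r ≥ 1; t+1 = k+r+1
    have hkr : t = k + r := by omega
    have hr : 1 ≤ r := by omega
    obtain ⟨j, rfl⟩ : ∃ j, t = k + 1 + j := ⟨t - k - 1, by omega⟩
    have u2 := (encB2 (a := a) (c := c) hm hb j (by omega)).2
    have v1 := (encB3 (a := a) (b := b) hc 0 (by omega)).1
    rw [show k + r + 1 + 0 = k + 1 + j + 1 by omega] at v1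
    have e : m * (k + 1 + j + 1) = m * (k + 1 + j) + m := by ring
    omega
  · -- both in suffix
    obtain ⟨j, rfl⟩ : ∃ j, t = k + r + 1 + j := ⟨t - k - r - 1, by omega⟩
    rw [encN_suf _ _ _ _ _ _ j, show k + r + 1 + j + 1 = k + r + 1 + (j + 1) by ring,
      encN_suf _ _ _ _ _ _ (j + 1), extt_eq c j (by omega), extt_eq c (j + 1) (by omega)]
    have := (mem_PK.mp hc).1 (show (⟨j, by omega⟩ : Fin s) ≤ ⟨j + 1, by omega⟩ by
      simp [Fin.mk_le_mk])
    omega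

include hm ha hb hc in
lemma encMono :
    ∀ u v : ℕ, u ≤ v → v < k + r + 1 + s →
      encN m k r (extt a) (extt b) (extt c) u ≤ encN m k r (extt a) (extt b) (extt c) v := by
  intro u v
  induction v with
  | zero => intro hu _; interval_cases u; exact le_refl _
  | succ w ih =>
    intro hu hv
    rcases Nat.eq_or_lt_of_le hu with rfl | hu'
    · exact le_refl _
    · exact (ih (by omega) (by omega)).trans (encStep hm ha hb hc w hv)

include hm ha hb hc in
lemma encPK :
    (fun i : Fin (k + r + 1 + s) => encN m k r (extt a) (extt b) (extt c) (i : ℕ))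
      ∈ PK m (k + r + 1 + s) := by
  rw [mem_PK]
  constructor
  · intro i j hij
    exact encMono hm ha hb hc (i : ℕ) (j : ℕ) hij j.isLt
  · intro i
    exact encBounds hm ha hb hc (i : ℕ) i.isLt

end Enc

end Stmt8Aux
namespace Stmt8Aux

section Enc

variable {m k r s : ℕ} {a : Fin k → ℕ} {b : Fin r → ℕ} {c : Fin s → ℕ}
variable (hm : 1 ≤ m) (ha : a ∈ PK m k) (hb : b ∈ MSeq m r) (hc : c ∈ PK m s)

def encF (m : ℕ) {k r s : ℕ} (a : Fin k → ℕ) (b : Fin r → ℕ) (c : Fin s → ℕ) :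
    Fin (k + r + 1 + s) → ℕ :=
  fun i => encN m k r (extt a) (extt b) (extt c) (i : ℕ)

include hm ha hb hc in
lemma encF_mem : encF m a b c ∈ PK m (k + r + 1 + s) := encPK hm ha hb hc

include hm ha hb hc in
lemma encF_ffix1 : ffix m (encF m a b c) 1 = k + 2 := by
  apply ffix_spec m (encF m a b c) 1 (k + 2) (by omega) (by omega)
  · by_cases hrs : r + s = 0
    · left; omega
    · right
      refine ⟨⟨k + 1, by omega⟩, rfl, ?_⟩
      show m * (k + 2 - 2) + 1 + 1 ≤ encN m k r (extt a) (extt b) (extt c) (k + 1)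
      by_cases hr : 1 ≤ r
      · have v := (encB2 (a := a) (c := c) hm hb 0 (by omega)).1
        simp only [Nat.add_zero] at v
        simp only [Nat.add_sub_cancel]
        omega
      · have hr0 : r = 0 := by omega
        subst hr0
        have v := (encB3 (a := a) (b := b) hc 0 (by omega)).1
        simp only [Nat.add_zero] at v
        simp only [Nat.add_sub_cancel]
        have e : m * (k + 1) = m * k + m := by ring
        omega
  · intro i h1 h2
    obtain ⟨j, hj⟩ : ∃ j, (i : ℕ) = j + 1 := ⟨(i : ℕ) - 1, by omega⟩
    show encN m k r (extt a) (extt b) (extt c) (i : ℕ) < m * ((i : ℕ) - 1) + 1 + 1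
    rw [hj]
    have v := (encB1 (b := b) (c := c) ha j (by omega)).2
    simp only [Nat.add_sub_cancel]
    omega

include hm ha hb hc in
lemma encF_ffixm : ffix m (encF m a b c) m = k + r + 2 := by
  apply ffix_spec m (encF m a b c) m (k + r + 2) (by omega) (by omega)
  · by_cases hs : s = 0
    · left; omega
    · right
      refine ⟨⟨k + r + 1, by omega⟩, rfl, ?_⟩
      show m * (k + r + 2 - 2) + 1 + m ≤ encN m k r (extt a) (extt b) (extt c) (k + r + 1)
      have v := (encB3 (a := a) (b := b) hc 0 (by omega)).1
      simp only [Nat.add_zero] at v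
      simp only [Nat.add_sub_cancel]
      have e : m * (k + r + 1) = m * (k + r) + m := by ring
      omega
  · intro i h1 h2
    show encN m k r (extt a) (extt b) (extt c) (i : ℕ) < m * ((i : ℕ) - 1) + 1 + m
    by_cases hik : (i : ℕ) ≤ k
    · obtain ⟨j, hj⟩ : ∃ j, (i : ℕ) = j + 1 := ⟨(i : ℕ) - 1, by omega⟩
      rw [hj]
      have v := (encB1 (b := b) (c := c) ha j (by omega)).2
      simp only [Nat.add_sub_cancel]
      omega
    · obtain ⟨j, hj⟩ : ∃ j, (i : ℕ) = k + 1 + j := ⟨(i : ℕ) - k - 1, by omega⟩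
      rw [hj]
      have v := (encB2 (a := a) (c := c) hm hb j (by omega)).2
      have e : m * (k + 1 + j) = m * (k + 1 + j - 1) + m := by
        rw [show k + 1 + j - 1 = k + j by omega, show k + 1 + j = (k + j) + 1 by omega]; ring
      omega

include hm ha hb hc in
lemma encF_luck : luck m (encF m a b c) = 1 + luck m c := by
  rw [luck_eq_range m (encF m a b c)]
  have hcongr : ∑ t ∈ Finset.range (k + r + 1 + s),
      (if extt (encF m a b c) t = m * t + 1 then 1 else 0)
      = ∑ t ∈ Finset.range (k + r + 1 + s),
        (if encN m k r (extt a) (extt b) (extt c) t = m * t + 1 then 1 else 0) := by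
    refine Finset.sum_congr rfl fun t ht => ?_
    rw [extt_eq (encF m a b c) t (Finset.mem_range.mp ht)]
    rfl
  rw [hcongr]
  rw [Finset.sum_range_add (fun t => if encN m k r (extt a) (extt b) (extt c) t = m * t + 1
    then 1 else 0) (k + r + 1) s]
  have piece1 : ∑ t ∈ Finset.range (k + r + 1),
      (if encN m k r (extt a) (extt b) (extt c) t = m * t + 1 then 1 else 0) = 1 := by
    rw [Finset.sum_eq_single_of_mem 0 (Finset.mem_range.mpr (by omega))]
    · simp [encN_zero]
    · intro t ht ht0
      rw [if_neg]
      rcases Nat.lt_or_ge k t with h | h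
      · obtain ⟨j, rfl⟩ : ∃ j, t = k + 1 + j := ⟨t - k - 1, by omega⟩
        have v := (encB2 (a := a) (c := c) hm hb j (by
          have := Finset.mem_range.mp ht; omega)).2
        omega
      · obtain ⟨j, rfl⟩ : ∃ j, t = j + 1 := ⟨t - 1, by omega⟩
        have v := (encB1 (b := b) (c := c) ha j (by omega)).2
        have e : m * (j + 1) = m * j + m := by ring
        omega
  have piece2 : ∑ t ∈ Finset.range s,
      (if encN m k r (extt a) (extt b) (extt c) (k + r + 1 + t) = m * (k + r + 1 + t) + 1
        then 1 else 0) = luck m c := by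
    rw [luck_eq_range m c]
    refine Finset.sum_congr rfl fun t ht => ?_
    rw [encN_suf]
    refine if_congr ?_ rfl rfl
    have e : m * (k + r + 1 + t) = m * (k + r + 1) + m * t := by ring
    omega
  rw [piece1, piece2]

include hm ha hb hc in
lemma encF_freq : freq 1 (encF m a b c) = 1 + freq 1 a := by
  rw [freq_eq_range 1 (encF m a b c)]
  have hcongr : ∑ t ∈ Finset.range (k + r + 1 + s),
      (if extt (encF m a b c) t = 1 then 1 else 0)
      = ∑ t ∈ Finset.range (k + r + 1 + s),
        (if encN m k r (extt a) (extt b) (extt c) t = 1 then 1 else 0) := by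
    refine Finset.sum_congr rfl fun t ht => ?_
    rw [extt_eq (encF m a b c) t (Finset.mem_range.mp ht)]
    rfl
  rw [hcongr]
  rw [show k + r + 1 + s = (k + 1) + (r + s) by ring]
  rw [Finset.sum_range_add (fun t => if encN m k r (extt a) (extt b) (extt c) t = 1
    then 1 else 0) (k + 1) (r + s)]
  have piece1 : ∑ t ∈ Finset.range (k + 1),
      (if encN m k r (extt a) (extt b) (extt c) t = 1 then 1 else 0) = freq 1 a + 1 := by
    rw [Finset.sum_range_succ']
    congr 1
    · rw [freq_eq_range 1 a]
      refine Finset.sum_congr rfl fun t ht => ?_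
      rw [encN_pre _ _ _ _ _ _ t (Finset.mem_range.mp ht)]
  have piece2 : ∑ t ∈ Finset.range (r + s),
      (if encN m k r (extt a) (extt b) (extt c) (k + 1 + t) = 1 then 1 else 0) = 0 := by
    apply Finset.sum_eq_zero
    intro t ht
    rw [if_neg]
    rcases Nat.lt_or_ge t r with h | h
    · have v := (encB2 (a := a) (c := c) hm hb t h).1
      omega
    · obtain ⟨j, rfl⟩ : ∃ j, t = r + j := ⟨t - r, by omega⟩
      have v := (encB3 (a := a) (b := b) hc j (by
        have := Finset.mem_range.mp ht; omega)).1
      rw [show k + 1 + (r + j) = k + r + 1 + j by ring]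
      have e : 1 * 1 ≤ m * (k + r + 1) := Nat.mul_le_mul hm (by omega)
      omega
  rw [piece1, piece2]
  omega

end Enc

end Stmt8Aux
namespace Stmt8Aux

def decA (k r s : ℕ) (p : Fin (k + r + 1 + s) → ℕ) : Fin k → ℕ :=
  fun j => p ⟨(j : ℕ) + 1, by have := j.isLt; omega⟩

def decB (m k r s : ℕ) (p : Fin (k + r + 1 + s) → ℕ) : Fin r → ℕ :=
  fun j => p ⟨k + 1 + (j : ℕ), by have := j.isLt; omega⟩ - (m * k + 1)

def decC (m k r s : ℕ) (p : Fin (k + r + 1 + s) → ℕ) : Fin s → ℕ :=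
  fun j => p ⟨k + r + 1 + (j : ℕ), by have := j.isLt; omega⟩ - m * (k + r + 1)

section Dec

variable {m k r s : ℕ} {p : Fin (k + r + 1 + s) → ℕ}
variable (hm : 1 ≤ m) (hp : p ∈ PK m (k + r + 1 + s))
variable (h1 : ffix m p 1 = k + 2) (h2 : ffix m p m = k + r + 2)

include h1 in
lemma dmin1 (i : Fin (k + r + 1 + s)) (hi1 : 1 ≤ (i : ℕ)) (hik : (i : ℕ) ≤ k) :
    p i ≤ m * ((i : ℕ) - 1) + 1 := by
  have := ffix_min m p 1 i hi1 (by omega)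
  omega

include h2 in
lemma dmin2 (i : Fin (k + r + 1 + s)) (hi1 : 1 ≤ (i : ℕ)) (hik : (i : ℕ) ≤ k + r) :
    p i ≤ m * ((i : ℕ) - 1) + m := by
  have := ffix_min m p m i hi1 (by omega)
  omega

include h1 in
lemma dhead1 (hrs : 1 ≤ r + s) : m * k + 2 ≤ p ⟨k + 1, by omega⟩ := by
  obtain ⟨i, hi, hpi⟩ := ffix_mem m p 1 (by omega)
  rw [h1] at hi hpi
  have hie : i = (⟨k + 1, by omega⟩ : Fin (k + r + 1 + s)) :=
    Fin.ext (by simp only [Fin.val_mk]; omega)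
  rw [hie] at hpi
  exact hpi

include hp h2 in
lemma dhead2 (hs : 1 ≤ s) : p ⟨k + r + 1, by omega⟩ = m * (k + r + 1) + 1 := by
  obtain ⟨i, hi, hpi⟩ := ffix_mem m p m (by omega)
  rw [h2] at hi hpi
  have hie : i = (⟨k + r + 1, by omega⟩ : Fin (k + r + 1 + s)) :=
    Fin.ext (by simp only [Fin.val_mk]; omega)
  rw [hie] at hpi
  have hub := ((mem_PK.mp hp).2 ⟨k + r + 1, by omega⟩).2
  simp only [Fin.val_mk] at hub
  rw [show k + r + 2 - 2 = k + r by omega] at hpi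
  have e2 : m * (k + r + 1) = m * (k + r) + m := by ring
  omega

include hp h1 in
lemma decA_mem : decA k r s p ∈ PK m k := by
  rw [mem_PK]
  refine ⟨?_, ?_⟩
  · intro i j hij
    apply (mem_PK.mp hp).1
    simp only [Fin.mk_le_mk]
    have : (i : ℕ) ≤ (j : ℕ) := hij
    omega
  · intro j
    refine ⟨((mem_PK.mp hp).2 _).1, ?_⟩
    have hu := dmin1 h1 ⟨(j : ℕ) + 1, by have := j.isLt; omega⟩
      (by simp only [Fin.val_mk]; omega)
      (by simp only [Fin.val_mk]; have := j.isLt; omega)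
    simp only [Fin.val_mk, Nat.add_sub_cancel] at hu
    exact hu

include hm hp h1 h2 in
lemma decB_mem : decB m k r s p ∈ MSeq m r := by
  rw [mem_MSeq]
  refine ⟨?_, ?_⟩
  · intro i j hij
    apply Nat.sub_le_sub_right
    apply (mem_PK.mp hp).1
    simp only [Fin.mk_le_mk]
    have : (i : ℕ) ≤ (j : ℕ) := hij
    omega
  · intro j
    have hr : 1 ≤ r := by have := j.isLt; omega
    have hlow := dhead1 h1 (by omega)
    have hmono := (mem_PK.mp hp).1
      (show (⟨k + 1, by omega⟩ : Fin (k + r + 1 + s)) ≤ ⟨k + 1 + (j : ℕ), by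
        have := j.isLt; omega⟩ by simp only [Fin.mk_le_mk]; omega)
    have hu := dmin2 h2 ⟨k + 1 + (j : ℕ), by have := j.isLt; omega⟩
      (by simp only [Fin.val_mk]; omega)
      (by simp only [Fin.val_mk]; have := j.isLt; omega)
    simp only [Fin.val_mk] at hu
    have e1 : m * (k + 1 + (j : ℕ) - 1) = m * k + m * (j : ℕ) := by
      rw [show k + 1 + (j : ℕ) - 1 = k + (j : ℕ) from by omega]; ring
    have e2 : m * ((j : ℕ) + 1) = m * (j : ℕ) + m := by ring
    refine ⟨?_, ?_⟩
    · show 1 ≤ p _ - (m * k + 1)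
      omega
    · show p _ - (m * k + 1) ≤ m * ((j : ℕ) + 1) - 1
      omega

include hm hp h2 in
lemma decC_mem : decC m k r s p ∈ PK m s := by
  rw [mem_PK]
  refine ⟨?_, ?_⟩
  · intro i j hij
    apply Nat.sub_le_sub_right
    apply (mem_PK.mp hp).1
    simp only [Fin.mk_le_mk]
    have : (i : ℕ) ≤ (j : ℕ) := hij
    omega
  · intro j
    have hs : 1 ≤ s := by have := j.isLt; omega
    have hlow := dhead2 hp h2 hs
    have hmono := (mem_PK.mp hp).1
      (show (⟨k + r + 1, by omega⟩ : Fin (k + r + 1 + s)) ≤ ⟨k + r + 1 + (j : ℕ), by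
        have := j.isLt; omega⟩ by simp only [Fin.mk_le_mk]; omega)
    have hu := ((mem_PK.mp hp).2 ⟨k + r + 1 + (j : ℕ), by have := j.isLt; omega⟩).2
    simp only [Fin.val_mk] at hu
    have e1 : m * (k + r + 1 + (j : ℕ)) = m * (k + r + 1) + m * (j : ℕ) := by ring
    refine ⟨?_, ?_⟩
    · show 1 ≤ p _ - m * (k + r + 1)
      omega
    · show p _ - m * (k + r + 1) ≤ m * (j : ℕ) + 1
      omega

end Dec

end Stmt8Aux
namespace Stmt8Aux

section Inv

variable {m k r s : ℕ}

lemma decA_enc (a : Fin k → ℕ) (b : Fin r → ℕ) (c : Fin s → ℕ) :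
    decA k r s (encF m a b c) = a := by
  funext j
  show encN m k r (extt a) (extt b) (extt c) ((j : ℕ) + 1) = a j
  rw [encN_pre _ _ _ _ _ _ (j : ℕ) j.isLt, extt_eq a (j : ℕ) j.isLt, Fin.eta]

lemma decB_enc (a : Fin k → ℕ) (b : Fin r → ℕ) (c : Fin s → ℕ) :
    decB m k r s (encF m a b c) = b := by
  funext j
  show encN m k r (extt a) (extt b) (extt c) (k + 1 + (j : ℕ)) - (m * k + 1) = b j
  rw [encN_mid _ _ _ _ _ _ (j : ℕ) j.isLt, extt_eq b (j : ℕ) j.isLt, Fin.eta,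
    Nat.add_sub_cancel]

lemma decC_enc (a : Fin k → ℕ) (b : Fin r → ℕ) (c : Fin s → ℕ) :
    decC m k r s (encF m a b c) = c := by
  funext j
  show encN m k r (extt a) (extt b) (extt c) (k + r + 1 + (j : ℕ)) - m * (k + r + 1) = c j
  rw [encN_suf _ _ _ _ _ _ (j : ℕ), extt_eq c (j : ℕ) j.isLt, Fin.eta, Nat.add_sub_cancel]

variable {p : Fin (k + r + 1 + s) → ℕ}
variable (hm : 1 ≤ m) (hp : p ∈ PK m (k + r + 1 + s))
variable (h1 : ffix m p 1 = k + 2) (h2 : ffix m p m = k + r + 2)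

include hm hp h1 h2 in
lemma enc_dec : encF m (decA k r s p) (decB m k r s p) (decC m k r s p) = p := by
  funext i
  show encN m k r (extt (decA k r s p)) (extt (decB m k r s p)) (extt (decC m k r s p))
    (i : ℕ) = p i
  have hi := i.isLt
  by_cases h0 : (i : ℕ) = 0
  · rw [h0, encN_zero]
    have hb := (mem_PK.mp hp).2 i
    rw [h0] at hb
    omega
  by_cases hik : (i : ℕ) ≤ k
  · obtain ⟨j, hj⟩ : ∃ j : ℕ, (i : ℕ) = j + 1 := ⟨(i : ℕ) - 1, by omega⟩
    rw [hj, encN_pre _ _ _ _ _ _ j (by omega), extt_eq (decA k r s p) j (by omega)]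
    exact congrArg p (Fin.ext (by simp only [Fin.val_mk]; omega))
  by_cases hikr : (i : ℕ) ≤ k + r
  · obtain ⟨j, hj⟩ : ∃ j : ℕ, (i : ℕ) = k + 1 + j := ⟨(i : ℕ) - k - 1, by omega⟩
    rw [hj, encN_mid _ _ _ _ _ _ j (by omega), extt_eq (decB m k r s p) j (by omega)]
    show p ⟨k + 1 + j, _⟩ - (m * k + 1) + (m * k + 1) = p i
    have hlow := dhead1 h1 (hrs := by omega)
    have hmono := (mem_PK.mp hp).1
      (show (⟨k + 1, by omega⟩ : Fin (k + r + 1 + s)) ≤ ⟨k + 1 + j, by omega⟩ by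
        simp only [Fin.mk_le_mk]; omega)
    rw [Nat.sub_add_cancel (by omega)]
    exact congrArg p (Fin.ext (by simp only [Fin.val_mk]; omega))
  · obtain ⟨j, hj⟩ : ∃ j : ℕ, (i : ℕ) = k + r + 1 + j := ⟨(i : ℕ) - k - r - 1, by omega⟩
    rw [hj, encN_suf _ _ _ _ _ _ j, extt_eq (decC m k r s p) j (by omega)]
    show p ⟨k + r + 1 + j, _⟩ - m * (k + r + 1) + m * (k + r + 1) = p i
    have hlow := dhead2 hp h2 (hs := by omega)
    have hmono := (mem_PK.mp hp).1
      (show (⟨k + r + 1, by omega⟩ : Fin (k + r + 1 + s)) ≤ ⟨k + r + 1 + j, by omega⟩ by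
        simp only [Fin.mk_le_mk]; omega)
    rw [Nat.sub_add_cancel (by omega)]
    exact congrArg p (Fin.ext (by simp only [Fin.val_mk]; omega))

end Inv

lemma fiber_sum {M : Type*} [AddCommMonoid M] (m : ℕ) (hm : 1 ≤ m) (k r s : ℕ)
    (F : ℕ → ℕ → M) :
    ∑ p ∈ (PK m (k + r + 1 + s)).filter
        (fun p => ffix m p 1 = k + 2 ∧ ffix m p m = k + r + 2),
      F (luck m p) (freq 1 p)
    = ∑ a ∈ PK m k, ∑ b ∈ MSeq m r, ∑ c ∈ PK m s, F (1 + luck m c) (1 + freq 1 a) := by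
  have main : ∑ p ∈ (PK m (k + r + 1 + s)).filter
        (fun p => ffix m p 1 = k + 2 ∧ ffix m p m = k + r + 2),
      F (luck m p) (freq 1 p)
      = ∑ x ∈ (PK m k) ×ˢ ((MSeq m r) ×ˢ (PK m s)),
          F (1 + luck m x.2.2) (1 + freq 1 x.1) := by
    refine Finset.sum_nbij' (i := fun p => (decA k r s p, decB m k r s p, decC m k r s p))
      (j := fun x => encF m x.1 x.2.1 x.2.2) ?_ ?_ ?_ ?_ ?_
    · intro p hp'
      obtain ⟨hp, hf1, hf2⟩ := Finset.mem_filter.mp hp'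
      simp only [Finset.mem_product]
      exact ⟨decA_mem hp hf1, decB_mem hm hp hf1 hf2, decC_mem hm hp hf2⟩
    · rintro ⟨a, b, c⟩ hx
      simp only [Finset.mem_product] at hx
      obtain ⟨ha, hb, hc⟩ := hx
      exact Finset.mem_filter.mpr ⟨encF_mem hm ha hb hc,
        encF_ffix1 hm ha hb hc, encF_ffixm hm ha hb hc⟩
    · intro p hp'
      obtain ⟨hp, hf1, hf2⟩ := Finset.mem_filter.mp hp'
      exact enc_dec hm hp hf1 hf2
    · rintro ⟨a, b, c⟩ hx
      show (decA k r s (encF m a b c), decB m k r s (encF m a b c),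
        decC m k r s (encF m a b c)) = (a, b, c)
      rw [decA_enc, decB_enc, decC_enc]
    · intro p hp'
      obtain ⟨hp, hf1, hf2⟩ := Finset.mem_filter.mp hp'
      have hA := decA_mem hp hf1
      have hB := decB_mem hm hp hf1 hf2
      have hC := decC_mem hm hp hf2
      have e := enc_dec hm hp hf1 hf2
      calc F (luck m p) (freq 1 p)
          = F (luck m (encF m (decA k r s p) (decB m k r s p) (decC m k r s p)))
              (freq 1 (encF m (decA k r s p) (decB m k r s p) (decC m k r s p))) := by
            rw [e]
        _ = F (1 + luck m (decC m k r s p)) (1 + freq 1 (decA k r s p)) := by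
            rw [encF_luck hm hA hB hC, encF_freq hm hA hB hC]
  rw [main, Finset.sum_product]
  refine Finset.sum_congr rfl fun a _ => ?_
  rw [Finset.sum_product]

end Stmt8Aux
namespace Stmt8Aux

lemma core {M : Type*} [AddCommMonoid M] (m : ℕ) (hm : 1 ≤ m) (n : ℕ) (hn : 1 ≤ n)
    (F : ℕ → ℕ → ℕ → ℕ → M) :
    ∑ p ∈ PK m n, F (luck m p) (freq 1 p) (ffix m p 1) (ffix m p m)
    = ∑ k ∈ Finset.range n, ∑ r ∈ Finset.range (n - k), ∑ a ∈ PK m k, ∑ b ∈ MSeq m r,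
        ∑ c ∈ PK m (n - 1 - k - r), F (1 + luck m c) (1 + freq 1 a) (k + 2) (k + r + 2) := by
  have maps : ∀ p ∈ PK m n,
      (⟨ffix m p 1 - 2, ffix m p m - ffix m p 1⟩ : (_ : ℕ) × ℕ)
        ∈ (Finset.range n).sigma (fun k => Finset.range (n - k)) := by
    intro p _
    have u1 := two_le_ffix m hn p 1
    have u2 := ffix_le m p 1
    have u3 := ffix_le m p m
    have u4 := ffix_mono m p (hm : 1 ≤ m)
    simp only [Finset.mem_sigma, Finset.mem_range]
    omega
  rw [← Finset.sum_fiberwise_of_maps_to maps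
    (fun p => F (luck m p) (freq 1 p) (ffix m p 1) (ffix m p m)), Finset.sum_sigma]
  refine Finset.sum_congr rfl fun k hk => ?_
  refine Finset.sum_congr rfl fun r hr => ?_
  have hkn : k < n := Finset.mem_range.mp hk
  have hrn : r < n - k := Finset.mem_range.mp hr
  obtain ⟨s, rfl⟩ : ∃ s, n = k + r + 1 + s := ⟨n - k - r - 1, by omega⟩
  have hfil : (PK m (k + r + 1 + s)).filter
      (fun p => (⟨ffix m p 1 - 2, ffix m p m - ffix m p 1⟩ : (_ : ℕ) × ℕ) = ⟨k, r⟩)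
      = (PK m (k + r + 1 + s)).filter
        (fun p => ffix m p 1 = k + 2 ∧ ffix m p m = k + r + 2) := by
    refine Finset.filter_congr fun p hp => ?_
    have u1 := two_le_ffix m (by omega : 1 ≤ k + r + 1 + s) p 1
    have u2 := ffix_le m p 1
    have u3 := ffix_le m p m
    have u4 := ffix_mono m p (hm : 1 ≤ m)
    constructor
    · intro h
      simp only [Sigma.mk.inj_iff, heq_eq_eq] at h
      obtain ⟨h1, h2⟩ := h
      exact ⟨by omega, by omega⟩
    · rintro ⟨e1, e2⟩
      rw [e1, e2]
      simp only [Sigma.mk.inj_iff, heq_eq_eq]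
      omega
  rw [hfil]
  rw [show k + r + 1 + s - 1 - k - r = s by omega]
  refine Eq.trans ?_ (fiber_sum m hm k r s (fun l w => F l w (k + 2) (k + r + 2)))
  refine Finset.sum_congr rfl fun p hp => ?_
  obtain ⟨_, e1, e2⟩ := Finset.mem_filter.mp hp
  rw [e1, e2]

end Stmt8Aux
namespace Stmt8Aux

lemma swap_sum {M : Type*} [AddCommMonoid M] (n : ℕ) (f : ℕ → ℕ → ℕ → M) :
    ∑ k ∈ Finset.range n, ∑ r ∈ Finset.range (n - k), f k r (n - 1 - k - r)
    = ∑ k ∈ Finset.range n, ∑ r ∈ Finset.range (n - k), f (n - 1 - k - r) r k := by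
  rw [Finset.sum_sigma' (Finset.range n) (fun k => Finset.range (n - k))
    (fun k r => f k r (n - 1 - k - r)),
    Finset.sum_sigma' (Finset.range n) (fun k => Finset.range (n - k))
    (fun k r => f (n - 1 - k - r) r k)]
  refine Finset.sum_nbij' (i := fun x => ⟨n - 1 - x.1 - x.2, x.2⟩)
    (j := fun x => ⟨n - 1 - x.1 - x.2, x.2⟩) ?_ ?_ ?_ ?_ ?_
  · rintro ⟨k, r⟩ hx
    have h1 : k < n := Finset.mem_range.mp (Finset.mem_sigma.mp hx).1
    have h2 : r < n - k := Finset.mem_range.mp (Finset.mem_sigma.mp hx).2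
    show (⟨n - 1 - k - r, r⟩ : (_ : ℕ) × ℕ)
      ∈ (Finset.range n).sigma (fun k => Finset.range (n - k))
    have e1 : (⟨n - 1 - k - r, r⟩ : (_ : ℕ) × ℕ).fst = n - 1 - k - r := rfl
    have e2 : (⟨n - 1 - k - r, r⟩ : (_ : ℕ) × ℕ).snd = r := rfl
    exact Finset.mem_sigma.mpr ⟨Finset.mem_range.mpr (by omega),
      Finset.mem_range.mpr (by omega)⟩
  · rintro ⟨k, r⟩ hx
    have h1 : k < n := Finset.mem_range.mp (Finset.mem_sigma.mp hx).1
    have h2 : r < n - k := Finset.mem_range.mp (Finset.mem_sigma.mp hx).2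
    show (⟨n - 1 - k - r, r⟩ : (_ : ℕ) × ℕ)
      ∈ (Finset.range n).sigma (fun k => Finset.range (n - k))
    have e1 : (⟨n - 1 - k - r, r⟩ : (_ : ℕ) × ℕ).fst = n - 1 - k - r := rfl
    have e2 : (⟨n - 1 - k - r, r⟩ : (_ : ℕ) × ℕ).snd = r := rfl
    exact Finset.mem_sigma.mpr ⟨Finset.mem_range.mpr (by omega),
      Finset.mem_range.mpr (by omega)⟩
  · rintro ⟨k, r⟩ hx
    have h1 : k < n := Finset.mem_range.mp (Finset.mem_sigma.mp hx).1
    have h2 : r < n - k := Finset.mem_range.mp (Finset.mem_sigma.mp hx).2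
    show (⟨n - 1 - (n - 1 - k - r) - r, r⟩ : (_ : ℕ) × ℕ) = ⟨k, r⟩
    exact Sigma.mk.inj_iff.mpr ⟨by omega, HEq.rfl⟩
  · rintro ⟨k, r⟩ hx
    have h1 : k < n := Finset.mem_range.mp (Finset.mem_sigma.mp hx).1
    have h2 : r < n - k := Finset.mem_range.mp (Finset.mem_sigma.mp hx).2
    show (⟨n - 1 - (n - 1 - k - r) - r, r⟩ : (_ : ℕ) × ℕ) = ⟨k, r⟩
    exact Sigma.mk.inj_iff.mpr ⟨by omega, HEq.rfl⟩
  · rintro ⟨k, r⟩ hx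
    have h1 : k < n := Finset.mem_range.mp (Finset.mem_sigma.mp hx).1
    have h2 : r < n - k := Finset.mem_range.mp (Finset.mem_sigma.mp hx).2
    show f k r (n - 1 - k - r) = f (n - 1 - (n - 1 - k - r) - r) r (n - 1 - k - r)
    rw [show n - 1 - (n - 1 - k - r) - r = k by omega]

lemma sum_pow_luck {M : Type*} [CommSemiring M] (m j : ℕ) (Y : M) :
    ∑ p ∈ PK m j, Y ^ (luck m p)
    = ∑ v ∈ Finset.range (j + 1), (Cnt m j v : M) * Y ^ v := by
  have maps : ∀ p ∈ PK m j, luck m p ∈ Finset.range (j + 1) := by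
    intro p _
    have : luck m p ≤ j := by
      have := Finset.card_filter_le Finset.univ
        (fun i : Fin j => p i = m * (i : ℕ) + 1)
      simpa [luck] using this
    simp only [Finset.mem_range]
    omega
  rw [← Finset.sum_fiberwise_of_maps_to maps (fun p => Y ^ (luck m p))]
  refine Finset.sum_congr rfl fun v _ => ?_
  have : ∑ p ∈ (PK m j).filter (fun p => luck m p = v), Y ^ (luck m p)
      = ∑ p ∈ (PK m j).filter (fun p => luck m p = v), Y ^ v :=
    Finset.sum_congr rfl fun p hp => by rw [(Finset.mem_filter.mp hp).2]
  rw [this, Finset.sum_const, nsmul_eq_mul, Cnt]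

lemma aeval_Rpoly {M : Type*} [CommRing M] [Algebra ℤ M] (m j : ℕ) (Y : M) :
    Polynomial.aeval Y (Rpoly m j) = ∑ p ∈ PK m j, Y ^ (luck m p) := by
  rw [sum_pow_luck, Rpoly, map_sum]
  refine Finset.sum_congr rfl fun v _ => ?_
  rw [map_mul, map_pow, Polynomial.aeval_X, map_natCast]

lemma equi {M : Type*} [CommSemiring M] (m : ℕ) (hm : 1 ≤ m) (Y : M) (n : ℕ) :
    ∑ p ∈ PK m n, Y ^ (freq 1 p) = ∑ p ∈ PK m n, Y ^ (luck m p) := by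
  induction n using Nat.strong_induction_on with
  | _ n ih =>
    rcases Nat.eq_zero_or_pos n with rfl | hn
    · refine Finset.sum_congr rfl fun p _ => ?_
      have e1 : freq 1 p = 0 := by simp [freq]
      have e2 : luck m p = 0 := by simp [luck]
      rw [e1, e2]
    · rw [core m hm n hn (fun l w x y => Y ^ w), core m hm n hn (fun l w x y => Y ^ l)]
      have lhs_eq : ∀ k ∈ Finset.range n, ∀ r ∈ Finset.range (n - k),
          ∑ a ∈ PK m k, ∑ b ∈ MSeq m r, ∑ c ∈ PK m (n - 1 - k - r), Y ^ (1 + freq 1 a)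
          = (Y * ∑ a ∈ PK m k, Y ^ luck m a) * ((MSeq m r).card : M)
              * ((PK m (n - 1 - k - r)).card : M) := by
        intro k hk r hr
        have : ∀ a : Fin k → ℕ, ∑ b ∈ MSeq m r, ∑ c ∈ PK m (n - 1 - k - r),
            Y ^ (1 + freq 1 a)
            = Y ^ (1 + freq 1 a) * ((MSeq m r).card : M)
                * ((PK m (n - 1 - k - r)).card : M) := by
          intro a
          simp only [Finset.sum_const, nsmul_eq_mul]
          ring
        rw [Finset.sum_congr rfl fun a _ => this a, ← Finset.sum_mul, ← Finset.sum_mul]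
        congr 2
        have l1 : ∑ i ∈ PK m k, Y ^ (1 + freq 1 i) = Y * ∑ i ∈ PK m k, Y ^ freq 1 i := by
          rw [Finset.mul_sum]
          exact Finset.sum_congr rfl fun a _ => by rw [pow_add, pow_one]
        rw [l1, ih k (Finset.mem_range.mp hk)]
      have rhs_eq : ∀ k ∈ Finset.range n, ∀ r ∈ Finset.range (n - k),
          ∑ a ∈ PK m k, ∑ b ∈ MSeq m r, ∑ c ∈ PK m (n - 1 - k - r), Y ^ (1 + luck m c)
          = ((PK m k).card : M) * ((MSeq m r).card : M)
              * (Y * ∑ c ∈ PK m (n - 1 - k - r), Y ^ luck m c) := by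
        intro k hk r hr
        have inner : ∀ (b : Fin r → ℕ), ∑ c ∈ PK m (n - 1 - k - r), Y ^ (1 + luck m c)
            = Y * ∑ c ∈ PK m (n - 1 - k - r), Y ^ luck m c := by
          intro b
          rw [Finset.mul_sum]
          refine Finset.sum_congr rfl fun c _ => ?_
          rw [pow_add, pow_one]
        rw [Finset.sum_congr rfl fun a _ => Finset.sum_congr rfl fun b _ => inner b]
        simp only [Finset.sum_const, nsmul_eq_mul]
        ring
      rw [Finset.sum_congr rfl fun k hk => Finset.sum_congr rfl fun r hr => lhs_eq k hk r hr,
        Finset.sum_congr rfl fun k hk => Finset.sum_congr rfl fun r hr => rhs_eq k hk r hr]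
      have := swap_sum n (fun k r s => (Y * ∑ a ∈ PK m k, Y ^ luck m a)
        * ((MSeq m r).card : M) * ((PK m s).card : M))
      rw [this]
      refine Finset.sum_congr rfl fun k hk => Finset.sum_congr rfl fun r hr => ?_
      ring

end Stmt8Aux
namespace Stmt8Aux

lemma triple_factor {M : Type*} [CommSemiring M] {α β γ : Type*}
    (s1 : Finset α) (s2 : Finset β) (s3 : Finset γ)
    (f : α → M) (g : γ → M) (C1 C2 : M) :
    ∑ a ∈ s1, ∑ b ∈ s2, ∑ c ∈ s3, g c * f a * C1 * C2
    = (∑ a ∈ s1, f a) * (s2.card : M) * (∑ c ∈ s3, g c) * (C1 * C2) := by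
  have inner : ∀ a, ∑ c ∈ s3, g c * f a * C1 * C2
      = (∑ c ∈ s3, g c) * (f a * (C1 * C2)) := by
    intro a
    rw [Finset.sum_mul]
    exact Finset.sum_congr rfl fun c _ => by ring
  have step : ∀ a, ∑ b ∈ s2, ∑ c ∈ s3, g c * f a * C1 * C2
      = (s2.card : M) * ((∑ c ∈ s3, g c) * (f a * (C1 * C2))) := by
    intro a
    rw [Finset.sum_congr rfl fun b _ => inner a, Finset.sum_const, nsmul_eq_mul]
  rw [Finset.sum_congr rfl fun a _ => step a]
  rw [← Finset.mul_sum, ← Finset.mul_sum, ← Finset.sum_mul]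
  ring

end Stmt8Aux

theorem stmt8 (m : ℕ) (hm : 1 ≤ m) (n : ℕ) (hn : 1 ≤ n) :
    ∑ p ∈ PK m n,
        (MvPolynomial.X 0 ^ luck m p * MvPolynomial.X 1 ^ freq 1 p *
          MvPolynomial.X 2 ^ ffix m p 1 * MvPolynomial.X 3 ^ ffix m p m :
          MvPolynomial (Fin 4) ℤ) =
      MvPolynomial.X 0 * MvPolynomial.X 1 * (MvPolynomial.X 2 * MvPolynomial.X 3) ^ 2 *
        ∑ k ∈ Finset.range n,
          (MvPolynomial.X 2 * MvPolynomial.X 3) ^ k *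
            Polynomial.aeval (MvPolynomial.X 1 : MvPolynomial (Fin 4) ℤ) (Rpoly m k) *
            ∑ r ∈ Finset.range (n - k),
              (hcnt m r 1 1 : MvPolynomial (Fin 4) ℤ) * MvPolynomial.X 3 ^ r *
                Polynomial.aeval (MvPolynomial.X 0 : MvPolynomial (Fin 4) ℤ)
                  (Rpoly m (n - 1 - k - r)) := by
  refine Eq.trans (Stmt8Aux.core m hm n hn (fun l w x y =>
    (MvPolynomial.X 0 : MvPolynomial (Fin 4) ℤ) ^ l * MvPolynomial.X 1 ^ w *
      MvPolynomial.X 2 ^ x * MvPolynomial.X 3 ^ y)) ?_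
  rw [Finset.mul_sum]
  refine Finset.sum_congr rfl fun k hk => ?_
  rw [Finset.mul_sum, Finset.mul_sum]
  refine Finset.sum_congr rfl fun r hr => ?_
  refine Eq.trans (Stmt8Aux.triple_factor (PK m k) (Stmt8Aux.MSeq m r) (PK m (n - 1 - k - r))
    (fun a => (MvPolynomial.X 1 : MvPolynomial (Fin 4) ℤ) ^ (1 + freq 1 a))
    (fun c => (MvPolynomial.X 0 : MvPolynomial (Fin 4) ℤ) ^ (1 + luck m c))
    (MvPolynomial.X 2 ^ (k + 2)) (MvPolynomial.X 3 ^ (k + r + 2))) ?_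
  have hA : ∑ a ∈ PK m k, (MvPolynomial.X 1 : MvPolynomial (Fin 4) ℤ) ^ (1 + freq 1 a)
      = MvPolynomial.X 1 *
        Polynomial.aeval (MvPolynomial.X 1 : MvPolynomial (Fin 4) ℤ) (Rpoly m k) := by
    rw [Stmt8Aux.aeval_Rpoly, ← Stmt8Aux.equi m hm _ k, Finset.mul_sum]
    exact Finset.sum_congr rfl fun a _ => by rw [pow_add, pow_one]
  have hC : ∑ c ∈ PK m (n - 1 - k - r),
        (MvPolynomial.X 0 : MvPolynomial (Fin 4) ℤ) ^ (1 + luck m c)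
      = MvPolynomial.X 0 *
        Polynomial.aeval (MvPolynomial.X 0 : MvPolynomial (Fin 4) ℤ)
          (Rpoly m (n - 1 - k - r)) := by
    rw [Stmt8Aux.aeval_Rpoly, Finset.mul_sum]
    exact Finset.sum_congr rfl fun c _ => by rw [pow_add, pow_one]
  have hH : (((Stmt8Aux.MSeq m r).card : ℕ) : MvPolynomial (Fin 4) ℤ)
      = (hcnt m r 1 1 : MvPolynomial (Fin 4) ℤ) := by
    rw [Stmt8Aux.hcnt_eq]
  rw [hA, hC, hH]
  ring

end
end

section
/- As formal power series in x with coefficients in ℤ[q,t], q·B(x;q) − t·B(x;t) = (q − t)·B(x;q)·B(x;t). -/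
open scoped Classical
open Finset

noncomputable section

namespace Stmt12Aux

/-- Extend a `Fin n`-indexed sequence to `ℕ` by `0`. -/
def ext {n : ℕ} (p : Fin n → ℕ) : ℕ → ℕ := fun i => if h : i < n then p ⟨i, h⟩ else 0

lemma ext_injective {n : ℕ} : Function.Injective (ext (n := n)) := by
  intro p q h
  funext i
  have := congrFun h i
  simpa [ext, i.isLt] using this

lemma mem_BSeq {n : ℕ} {b : ℕ → ℕ} {p : Fin n → ℕ} :
    p ∈ BSeq n b ↔ Monotone p ∧ ∀ i : Fin n, 1 ≤ p i ∧ p i ≤ b i := by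
  simp [BSeq, (boundedSeq_finite n b).mem_toFinset]

/-- `ℕ`-indexed version of `BSeq`. -/
def NS (n : ℕ) (b : ℕ → ℕ) : Finset (ℕ → ℕ) := (BSeq n b).image ext

lemma card_NS (n : ℕ) (b : ℕ → ℕ) : (NS n b).card = (BSeq n b).card :=
  Finset.card_image_of_injective _ ext_injective

lemma mem_NS {n : ℕ} {b : ℕ → ℕ} {f : ℕ → ℕ} :
    f ∈ NS n b ↔ (∀ i, n ≤ i → f i = 0) ∧ (∀ i j, i ≤ j → j < n → f i ≤ f j)
      ∧ ∀ i, i < n → 1 ≤ f i ∧ f i ≤ b i := by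
  constructor
  · rintro hf
    obtain ⟨p, hp, rfl⟩ := Finset.mem_image.1 hf
    rw [mem_BSeq] at hp
    refine ⟨fun i hi => by simp [ext, Nat.not_lt.2 hi], ?_, ?_⟩
    · intro i j hij hj
      have hi : i < n := lt_of_le_of_lt hij hj
      simpa [ext, hi, hj] using hp.1 (show (⟨i, hi⟩ : Fin n) ≤ ⟨j, hj⟩ from hij)
    · intro i hi
      simpa [ext, hi] using hp.2 ⟨i, hi⟩
  · rintro ⟨h0, hmono, hb⟩
    refine Finset.mem_image.2 ⟨fun i => f i, ?_, ?_⟩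
    · rw [mem_BSeq]
      exact ⟨fun i j hij => hmono i j hij j.isLt, fun i => hb i i.isLt⟩
    · funext i
      by_cases hi : i < n
      · simp [ext, hi]
      · simp [ext, hi, h0 i (Nat.not_lt.1 hi)]

variable (m : ℕ)

/-- `ℕ`-indexed luck statistic. -/
def luckN (n : ℕ) (f : ℕ → ℕ) : ℕ :=
  ((Finset.range n).filter (fun i => f i = m * i + 1)).card

lemma luck_eq {n : ℕ} (p : Fin n → ℕ) : luck m p = luckN m n (ext p) := by
  unfold luck luckN
  rw [Finset.card_filter, Finset.card_filter,
    ← Fin.sum_univ_eq_sum_range (fun j : ℕ => if ext p j = m * j + 1 then 1 else 0) n]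
  refine Finset.sum_congr rfl fun i _ => ?_
  simp [ext, i.isLt]

/-- `ℕ`-indexed parking distributions. -/
def PKN (n : ℕ) : Finset (ℕ → ℕ) := NS n (fun i => m * i + 1)

/-- `ℕ`-indexed version of `Cnt`. -/
def CN (n k : ℕ) : ℕ := ((PKN m n).filter (fun f => luckN m n f = k)).card

lemma Cnt_eq_CN (n k : ℕ) : Cnt m n k = CN m n k := by
  unfold Cnt CN
  refine Finset.card_bij' (fun p _ => ext p) (fun f hf => fun i : Fin n => f i) ?_ ?_ ?_ ?_
  · intro p hp
    rw [Finset.mem_filter] at hp ⊢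
    refine ⟨Finset.mem_image.2 ⟨p, hp.1, rfl⟩, ?_⟩
    rw [← luck_eq]; exact hp.2
  · intro f hf
    rw [Finset.mem_filter] at hf ⊢
    obtain ⟨p, hp, rfl⟩ := Finset.mem_image.1 hf.1
    have hres : (fun i : Fin n => ext p (i : ℕ)) = p := by
      funext i; simp [ext, i.isLt]
    show (fun i : Fin n => ext p (i : ℕ)) ∈ PK m n ∧ luck m (fun i : Fin n => ext p (i : ℕ)) = k
    rw [hres]
    refine ⟨hp, ?_⟩
    rw [luck_eq]; exact hf.2
  · intro p hp
    funext i; simp [ext, i.isLt]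
  · intro f hf
    rw [Finset.mem_filter] at hf
    obtain ⟨p, hp, rfl⟩ := Finset.mem_image.1 hf.1
    have hres : (fun i : Fin n => ext p (i : ℕ)) = p := by
      funext i; simp [ext, i.isLt]
    show ext (fun i : Fin n => ext p (i : ℕ)) = ext p
    rw [hres]

end Stmt12Aux
namespace Stmt12Aux
variable (m : ℕ)

lemma mem_PKN {n : ℕ} {f : ℕ → ℕ} :
    f ∈ PKN m n ↔ (∀ i, n ≤ i → f i = 0) ∧ (∀ i j, i ≤ j → j < n → f i ≤ f j)
      ∧ ∀ i, i < n → 1 ≤ f i ∧ f i ≤ m * i + 1 := mem_NS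

lemma CN_zero (n : ℕ) : CN m n 0 = if n = 0 then 1 else 0 := by
  unfold CN
  split_ifs with hn
  · subst hn
    rw [Finset.card_eq_one]
    refine ⟨ext (fun i : Fin 0 => 0), ?_⟩
    rw [Finset.eq_singleton_iff_unique_mem]
    constructor
    · rw [Finset.mem_filter]
      constructor
      · exact Finset.mem_image.2 ⟨_, mem_BSeq.2 ⟨fun a => a.elim0, fun a => a.elim0⟩, rfl⟩
      · simp [luckN]
    · intro g hg
      rw [Finset.mem_filter, mem_PKN] at hg
      funext i
      simp [ext, hg.1.1 i (Nat.zero_le i)]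
  · rw [Finset.card_eq_zero, Finset.filter_eq_empty_iff]
    intro f hf
    rw [mem_PKN] at hf
    have h0 : f 0 = 1 := by
      have := hf.2.2 0 (Nat.pos_of_ne_zero hn); omega
    have : 0 ∈ (Finset.range n).filter (fun i => f i = m * i + 1) := by
      simp [Finset.mem_filter, h0, Nat.pos_of_ne_zero hn]
    have hpos : 0 < luckN m n f := Finset.card_pos.2 ⟨0, this⟩
    omega

lemma CN_of_gt {n k : ℕ} (h : n < k) : CN m n k = 0 := by
  unfold CN
  rw [Finset.card_eq_zero, Finset.filter_eq_empty_iff]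
  intro f _
  have hle : luckN m n f ≤ n := by
    have := Finset.card_filter_le (Finset.range n) (fun i => f i = m * i + 1)
    simpa [luckN] using this
  omega

/-- First-return prefix-count. -/
def G (a : ℕ) : ℕ := (NS (a - 1) (fun i => m * i + m)).card

/-- The split index : smallest `i ∈ [1, n)` with `f i = m*i+1`, else `n`. -/
def sI (n : ℕ) (f : ℕ → ℕ) : ℕ :=
  if h : ∃ i, 1 ≤ i ∧ i < n ∧ f i = m * i + 1 then Nat.find h else n

lemma sI_ge (n : ℕ) (f : ℕ → ℕ) (hn : 1 ≤ n) : 1 ≤ sI m n f := by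
  unfold sI; split_ifs with h
  · exact (Nat.find_spec h).1
  · exact hn

lemma sI_le (n : ℕ) (f : ℕ → ℕ) : sI m n f ≤ n := by
  unfold sI; split_ifs with h
  · exact le_of_lt (Nat.find_spec h).2.1
  · exact le_rfl

lemma sI_not (n : ℕ) (f : ℕ → ℕ) {i : ℕ} (h1 : 1 ≤ i) (h2 : i < sI m n f) :
    f i ≠ m * i + 1 := by
  revert h2; unfold sI; split_ifs with h
  · intro h2
    have := Nat.find_min h h2
    push_neg at this
    intro he
    have hin : i < n := lt_of_lt_of_le h2 (by
      have := (Nat.find_spec h).2.1; omega)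
    exact absurd he (by have := this h1 hin; omega)
  · intro h2
    push_neg at h
    intro he
    exact absurd he (by have := h i h1 (lt_of_lt_of_le h2 le_rfl); omega)

lemma sI_spec (n : ℕ) (f : ℕ → ℕ) (h : sI m n f < n) : f (sI m n f) = m * (sI m n f) + 1 := by
  revert h; unfold sI; split_ifs with h
  · intro _; exact (Nat.find_spec h).2.2
  · intro h'; omega

def pref (f : ℕ → ℕ) (a : ℕ) : ℕ → ℕ := fun j => if j < a - 1 then f (j + 1) else 0

def suff (f : ℕ → ℕ) (a n : ℕ) : ℕ → ℕ := fun j => if j < n - a then f (a + j) - m * a else 0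

def glue (a n : ℕ) (b r : ℕ → ℕ) : ℕ → ℕ := fun i =>
  if i = 0 then 1 else if i < a then b (i - 1) else if i < n then r (i - a) + m * a else 0

end Stmt12Aux
namespace Stmt12Aux
variable (m : ℕ)

lemma luckN_split {n : ℕ} {f : ℕ → ℕ} (hn : 1 ≤ n) (hf : f ∈ PKN m n) :
    luckN m n f = luckN m (n - sI m n f) (suff m f (sI m n f) n) + 1 := by
  rw [mem_PKN] at hf
  obtain ⟨h0, hmono, hb⟩ := hf
  set a := sI m n f with ha
  have ha1 : 1 ≤ a := sI_ge m n f hn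
  have han : a ≤ n := sI_le m n f
  have hf0 : f 0 = 1 := by have := hb 0 hn; omega
  unfold luckN
  rw [Finset.card_filter, Finset.card_filter]
  have hsplit : ∑ i ∈ Finset.range n, (if f i = m * i + 1 then 1 else 0)
      = (∑ i ∈ Finset.Ico 0 a, if f i = m * i + 1 then 1 else 0)
        + ∑ i ∈ Finset.Ico a n, (if f i = m * i + 1 then 1 else 0) := by
    rw [Finset.range_eq_Ico, ← Finset.sum_Ico_consecutive _ (Nat.zero_le a) han]
  have h1 : (∑ i ∈ Finset.Ico 0 a, if f i = m * i + 1 then 1 else 0) = 1 := by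
    rw [← Finset.sum_Ico_consecutive _ (Nat.zero_le 1) ha1]
    have e1 : (∑ i ∈ Finset.Ico 0 1, if f i = m * i + 1 then 1 else 0) = 1 := by
      rw [Finset.sum_Ico_eq_sum_range]; simp [Finset.filter_singleton, hf0]
    have e2 : (∑ i ∈ Finset.Ico 1 a, if f i = m * i + 1 then 1 else 0) = 0 := by
      refine Finset.sum_eq_zero fun i hi => ?_
      rw [Finset.mem_Ico] at hi
      simp [sI_not m n f hi.1 hi.2]
    omega
  have h2 : (∑ i ∈ Finset.Ico a n, if f i = m * i + 1 then 1 else 0)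
      = ∑ j ∈ Finset.range (n - a), (if suff m f a n j = m * j + 1 then 1 else 0) := by
    rw [Finset.sum_Ico_eq_sum_range]
    refine Finset.sum_congr rfl fun j hj => ?_
    rw [Finset.mem_range] at hj
    have hlt : a < n := by omega
    have hfa : f a = m * a + 1 := sI_spec m n f hlt
    have hge : m * a + 1 ≤ f (a + j) := hfa ▸ hmono a (a + j) (Nat.le_add_right a j) (by omega)
    have : suff m f a n j = f (a + j) - m * a := by simp [suff, hj]
    rw [this]
    have hiff : (f (a + j) = m * (a + j) + 1) ↔ (f (a + j) - m * a = m * j + 1) := by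
      rw [Nat.mul_add]; omega
    by_cases hc : f (a + j) = m * (a + j) + 1
    · rw [if_pos hc, if_pos (hiff.1 hc)]
    · rw [if_neg hc, if_neg (fun hx => hc (hiff.2 hx))]
  omega

lemma pref_mem {n : ℕ} {f : ℕ → ℕ} (hf : f ∈ PKN m n) :
    pref f (sI m n f) ∈ NS (sI m n f - 1) (fun i => m * i + m) := by
  rw [mem_PKN] at hf
  obtain ⟨h0, hmono, hb⟩ := hf
  set a := sI m n f with ha
  have han : a ≤ n := sI_le m n f
  rw [mem_NS]
  refine ⟨fun i hi => by simp [pref, Nat.not_lt.2 hi], ?_, ?_⟩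
  · intro i j hij hj
    simp only [pref, if_pos (lt_of_le_of_lt hij hj), if_pos hj]
    exact hmono (i + 1) (j + 1) (by omega) (by omega)
  · intro i hi
    simp only [pref, if_pos hi]
    have hi1 : i + 1 < a := by omega
    have hblt := hb (i + 1) (by omega)
    have hne := sI_not m n f (by omega) hi1
    constructor
    · exact hblt.1
    · have hmm : m * (i + 1) = m * i + m := by ring
      omega

lemma suff_mem {n : ℕ} {f : ℕ → ℕ} (hf : f ∈ PKN m n) :
    suff m f (sI m n f) n ∈ PKN m (n - sI m n f) := by
  rw [mem_PKN] at hf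
  obtain ⟨h0, hmono, hb⟩ := hf
  set a := sI m n f with ha
  have han : a ≤ n := sI_le m n f
  rw [mem_PKN]
  refine ⟨fun i hi => by simp [suff, Nat.not_lt.2 hi], ?_, ?_⟩
  · intro i j hij hj
    simp only [suff, if_pos (lt_of_le_of_lt hij hj), if_pos hj]
    exact Nat.sub_le_sub_right (hmono (a + i) (a + j) (by omega) (by omega)) _
  · intro i hi
    simp only [suff, if_pos hi]
    have hlt : a < n := by omega
    have hfa : f a = m * a + 1 := sI_spec m n f hlt
    have hge : m * a + 1 ≤ f (a + i) := hfa ▸ hmono a (a + i) (Nat.le_add_right a i) (by omega)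
    have hub := (hb (a + i) (by omega)).2
    rw [Nat.mul_add] at hub
    omega

end Stmt12Aux
namespace Stmt12Aux
variable (m : ℕ)

lemma glue_bounds {a n : ℕ} {b r : ℕ → ℕ} (ha1 : 1 ≤ a) (han : a ≤ n)
    (hb : b ∈ NS (a - 1) (fun i => m * i + m)) (hr : r ∈ PKN m (n - a)) :
    ∀ i, i < n → 1 ≤ glue m a n b r i ∧ glue m a n b r i ≤ m * i + 1
      ∧ (1 ≤ i → i < a → glue m a n b r i ≤ m * i)
      ∧ (a ≤ i → m * a + 1 ≤ glue m a n b r i) := by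
  rw [mem_NS] at hb
  rw [mem_PKN] at hr
  intro i hi
  rcases Nat.eq_zero_or_pos i with h0 | hpos
  · subst h0
    have hg0 : glue m a n b r 0 = 1 := by simp [glue]
    rw [hg0]
    exact ⟨le_rfl, by omega, fun h _ => by omega, fun hai => by omega⟩
  · by_cases hia : i < a
    · have hbi := hb.2.2 (i - 1) (by omega)
      have hgi : glue m a n b r i = b (i - 1) := by
        simp [glue, show ¬ i = 0 by omega, hia]
      have hmm : m * (i - 1) + m = m * i := by
        calc m * (i - 1) + m = m * (i - 1 + 1) := by ring
          _ = m * i := by rw [show i - 1 + 1 = i by omega]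
      rw [hgi]
      exact ⟨hbi.1, by omega, fun _ _ => by omega, fun hai => by omega⟩
    · have hri := hr.2.2 (i - a) (by omega)
      have hgi : glue m a n b r i = r (i - a) + m * a := by
        simp [glue, show ¬ i = 0 by omega, hia, hi]
      have hmm : m * (i - a) + 1 + m * a = m * i + 1 := by
        calc m * (i - a) + 1 + m * a = m * (i - a + a) + 1 := by ring
          _ = m * i + 1 := by rw [show i - a + a = i by omega]
      rw [hgi]
      exact ⟨by omega, by omega, fun _ h => by omega, fun _ => by omega⟩

lemma glue_mem {a n : ℕ} {b r : ℕ → ℕ} (ha1 : 1 ≤ a) (han : a ≤ n)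
    (hb : b ∈ NS (a - 1) (fun i => m * i + m)) (hr : r ∈ PKN m (n - a)) :
    glue m a n b r ∈ PKN m n := by
  have hg := glue_bounds m ha1 han hb hr
  rw [mem_PKN]
  refine ⟨?_, ?_, fun i hi => ⟨(hg i hi).1, (hg i hi).2.1⟩⟩
  · intro i hi
    simp [glue, show ¬ i = 0 by omega, show ¬ i < a by omega, show ¬ i < n by omega]
  intro i j hij hj
  rcases Nat.eq_or_lt_of_le hij with rfl | hij'
  · exact le_rfl
  rcases Nat.eq_zero_or_pos i with h0 | hipos
  · subst h0
    have hg0 : glue m a n b r 0 = 1 := by simp [glue]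
    rw [hg0]
    exact (hg j hj).1
  by_cases hia : i < a
  · by_cases hja : j < a
    · simp only [glue, if_neg (show ¬ i = 0 by omega), if_neg (show ¬ j = 0 by omega),
        if_pos hia, if_pos hja]
      rw [mem_NS] at hb
      exact hb.2.1 (i - 1) (j - 1) (by omega) (by omega)
    · have h1 := (hg i (by omega)).2.2.1 hipos hia
      have h2 := (hg j hj).2.2.2 (by omega)
      have : m * i ≤ m * a := Nat.mul_le_mul_left m (by omega)
      omega
  · have hja : ¬ j < a := by omega
    simp only [glue, if_neg (show ¬ i = 0 by omega), if_neg (show ¬ j = 0 by omega),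
      if_neg hia, if_neg hja, if_pos (show i < n by omega), if_pos hj]
    rw [mem_PKN] at hr
    have := hr.2.1 (i - a) (j - a) (by omega) (by omega)
    omega

lemma sI_glue {a n : ℕ} {b r : ℕ → ℕ} (ha1 : 1 ≤ a) (han : a ≤ n)
    (hb : b ∈ NS (a - 1) (fun i => m * i + m)) (hr : r ∈ PKN m (n - a)) :
    sI m n (glue m a n b r) = a := by
  have hg := glue_bounds m ha1 han hb hr
  have hnot : ∀ i, 1 ≤ i → i < a → ¬ (glue m a n b r i = m * i + 1) := by
    intro i h1 h2 he
    have := (hg i (by omega)).2.2.1 h1 h2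
    omega
  by_cases hlt : a < n
  · have hfa : glue m a n b r a = m * a + 1 := by
      have hr0 : r 0 = 1 := by
        rw [mem_PKN] at hr
        have := hr.2.2 0 (by omega)
        omega
      simp only [glue, if_neg (show ¬ a = 0 by omega), if_neg (lt_irrefl a),
        if_pos hlt, Nat.sub_self, hr0]
      omega
    have hex : ∃ i, 1 ≤ i ∧ i < n ∧ glue m a n b r i = m * i + 1 := ⟨a, ha1, hlt, hfa⟩
    rw [sI, dif_pos hex]
    have hle : Nat.find hex ≤ a := Nat.find_le ⟨ha1, hlt, hfa⟩
    have hge : a ≤ Nat.find hex := by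
      by_contra hcon
      push_neg at hcon
      have hspec := Nat.find_spec hex
      exact hnot _ hspec.1 hcon hspec.2.2
    omega
  · have hna : a = n := by omega
    have hnex : ¬ ∃ i, 1 ≤ i ∧ i < n ∧ glue m a n b r i = m * i + 1 := by
      rintro ⟨i, h1, h2, h3⟩
      exact hnot i h1 (by omega) h3
    rw [sI, dif_neg hnex, hna]

lemma pref_glue {a n : ℕ} {b r : ℕ → ℕ} (ha1 : 1 ≤ a)
    (hb : b ∈ NS (a - 1) (fun i => m * i + m)) :
    pref (glue m a n b r) a = b := by
  funext j
  by_cases hj : j < a - 1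
  · simp only [pref, if_pos hj, glue, if_neg (show ¬ j + 1 = 0 by omega),
      if_pos (show j + 1 < a by omega), Nat.add_sub_cancel]
  · rw [mem_NS] at hb
    simp [pref, hj, hb.1 j (by omega)]

lemma suff_glue {a n : ℕ} {b r : ℕ → ℕ} (ha1 : 1 ≤ a) (hr : r ∈ PKN m (n - a)) :
    suff m (glue m a n b r) a n = r := by
  funext j
  by_cases hj : j < n - a
  · simp only [suff, if_pos hj, glue, if_neg (show ¬ a + j = 0 by omega),
      if_neg (show ¬ a + j < a by omega), if_pos (show a + j < n by omega),
      Nat.add_sub_cancel_left, Nat.add_sub_cancel]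
  · rw [mem_PKN] at hr
    simp [suff, hj, hr.1 j (by omega)]

lemma glue_eq {n : ℕ} {f : ℕ → ℕ} (hn : 1 ≤ n) (hf : f ∈ PKN m n) :
    glue m (sI m n f) n (pref f (sI m n f)) (suff m f (sI m n f) n) = f := by
  have hfm := hf
  rw [mem_PKN] at hfm
  obtain ⟨h0, hmono, hb⟩ := hfm
  set a := sI m n f with ha
  have ha1 : 1 ≤ a := sI_ge m n f hn
  have han : a ≤ n := sI_le m n f
  funext i
  rcases Nat.eq_zero_or_pos i with rfl | hipos
  · have hf0 : f 0 = 1 := by have := hb 0 hn; omega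
    simp [glue, hf0]
  by_cases hia : i < a
  · simp only [glue, if_neg (show ¬ i = 0 by omega), if_pos hia, pref,
      if_pos (show i - 1 < a - 1 by omega), show i - 1 + 1 = i by omega]
  · by_cases hin : i < n
    · have hlt : a < n := by omega
      have hfa : f a = m * a + 1 := sI_spec m n f hlt
      have hge : m * a + 1 ≤ f i := hfa ▸ hmono a i (by omega) hin
      simp only [glue, if_neg (show ¬ i = 0 by omega), if_neg hia, if_pos hin, suff,
        if_pos (show i - a < n - a by omega), show a + (i - a) = i by omega]
      omega
    · simp [glue, show ¬ i = 0 by omega, hia, hin, h0 i (by omega)]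

end Stmt12Aux
namespace Stmt12Aux
variable (m : ℕ)

lemma CN_rec (n k : ℕ) :
    CN m n (k + 1) = ∑ a ∈ Finset.range n, G m (a + 1) * CN m (n - (a + 1)) k := by
  rcases Nat.eq_zero_or_pos n with rfl | hn
  · rw [CN_of_gt m (show 0 < k + 1 by omega)]
    simp
  have hrhs : ∑ a ∈ Finset.range n, G m (a + 1) * CN m (n - (a + 1)) k
      = ((Finset.range n).sigma (fun a => (NS a (fun i => m * i + m)) ×ˢ
          ((PKN m (n - (a + 1))).filter (fun r => luckN m (n - (a + 1)) r = k)))).card := by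
    rw [Finset.card_sigma]
    refine Finset.sum_congr rfl fun a _ => ?_
    rw [Finset.card_product]
    rfl
  rw [hrhs]
  unfold CN
  refine Finset.card_bij'
    (fun f _ => ⟨sI m n f - 1, (pref f (sI m n f), suff m f (sI m n f) n)⟩)
    (fun x _ => glue m (x.1 + 1) n x.2.1 x.2.2) ?_ ?_ ?_ ?_
  · intro f hf
    rw [Finset.mem_filter] at hf
    obtain ⟨hfP, hfl⟩ := hf
    have ha1 : 1 ≤ sI m n f := sI_ge m n f hn
    have han : sI m n f ≤ n := sI_le m n f
    refine Finset.mem_sigma.2 ⟨Finset.mem_range.2 (show sI m n f - 1 < n by omega),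
      Finset.mem_product.2 ⟨pref_mem m hfP, ?_⟩⟩
    show suff m f (sI m n f) n ∈
      (PKN m (n - (sI m n f - 1 + 1))).filter (fun r => luckN m (n - (sI m n f - 1 + 1)) r = k)
    rw [show sI m n f - 1 + 1 = sI m n f by omega]
    rw [Finset.mem_filter]
    refine ⟨suff_mem m hfP, ?_⟩
    have := luckN_split m hn hfP
    omega
  · intro x hx
    rw [Finset.mem_sigma, Finset.mem_product, Finset.mem_filter] at hx
    obtain ⟨hxr, hxb, hxs, hxl⟩ := hx
    rw [Finset.mem_range] at hxr
    have ha1 : 1 ≤ x.1 + 1 := by omega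
    have han : x.1 + 1 ≤ n := by omega
    have hb' : x.2.1 ∈ NS (x.1 + 1 - 1) (fun i => m * i + m) := by
      rwa [Nat.add_sub_cancel]
    rw [Finset.mem_filter]
    refine ⟨glue_mem m ha1 han hb' hxs, ?_⟩
    have hspl := luckN_split m hn (glue_mem m ha1 han hb' hxs)
    rw [sI_glue m ha1 han hb' hxs] at hspl
    rw [suff_glue m ha1 hxs] at hspl
    omega
  · intro f hf
    rw [Finset.mem_filter] at hf
    have ha1 : 1 ≤ sI m n f := sI_ge m n f hn
    show glue m (sI m n f - 1 + 1) n (pref f (sI m n f)) (suff m f (sI m n f) n) = f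
    rw [show sI m n f - 1 + 1 = sI m n f by omega]
    exact glue_eq m hn hf.1
  · intro x hx
    rw [Finset.mem_sigma, Finset.mem_product, Finset.mem_filter] at hx
    obtain ⟨hxr, hxb, hxs, hxl⟩ := hx
    rw [Finset.mem_range] at hxr
    have ha1 : 1 ≤ x.1 + 1 := by omega
    have han : x.1 + 1 ≤ n := by omega
    have hb' : x.2.1 ∈ NS (x.1 + 1 - 1) (fun i => m * i + m) := by
      rwa [Nat.add_sub_cancel]
    show (⟨sI m n (glue m (x.1 + 1) n x.2.1 x.2.2) - 1,
        (pref (glue m (x.1 + 1) n x.2.1 x.2.2) (sI m n (glue m (x.1 + 1) n x.2.1 x.2.2)),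
         suff m (glue m (x.1 + 1) n x.2.1 x.2.2) (sI m n (glue m (x.1 + 1) n x.2.1 x.2.2)) n)⟩
        : Σ _ : ℕ, (ℕ → ℕ) × (ℕ → ℕ)) = x
    rw [sI_glue m ha1 han hb' hxs, pref_glue m ha1 hb', suff_glue m ha1 hxs,
      Nat.add_sub_cancel]
  
end Stmt12Aux
namespace Stmt12Aux
variable {R : Type*} [CommRing R]

/-- The series `B(x;q)` with `q` specialized to `x : R`. -/
def Bser (m : ℕ) (x : R) : PowerSeries R :=
  PowerSeries.mk fun n => Polynomial.aeval x (Rpoly m n)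

/-- The `q`-free series `F` with `B = 1 + q·F·B`. -/
def Gs (m : ℕ) : PowerSeries R := PowerSeries.mk fun a => if a = 0 then 0 else (G m a : R)

lemma coeff_Bser (m : ℕ) (x : R) (n : ℕ) :
    (PowerSeries.coeff n) (Bser m x)
      = ∑ k ∈ Finset.range (n + 1), (Cnt m n k : R) * x ^ k := by
  simp [Bser, Rpoly, map_sum]

lemma Bser_eq (m : ℕ) (x : R) :
    Bser m x = 1 + PowerSeries.C x * (Gs m * Bser m x) := by
  ext n
  rw [map_add, PowerSeries.coeff_one, PowerSeries.coeff_C_mul, PowerSeries.coeff_mul]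
  cases n with
  | zero =>
    have h00 : Cnt m 0 0 = 1 := by rw [Cnt_eq_CN, CN_zero]; simp
    simp [coeff_Bser, Gs, h00]
  | succ n =>
    have hrec : ∀ k, (Cnt m (n + 1) (k + 1) : R)
        = ∑ a ∈ Finset.range (n + 1), (G m (a + 1) : R) * (Cnt m (n - a) k : R) := by
      intro k
      rw [Cnt_eq_CN, CN_rec m (n + 1) k]
      push_cast
      exact Finset.sum_congr rfl fun a ha => by rw [Cnt_eq_CN]
    have hB : ∀ a ∈ Finset.range (n + 1), (PowerSeries.coeff (n - a)) (Bser m x)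
        = ∑ k ∈ Finset.range (n + 1), (Cnt m (n - a) k : R) * x ^ k := by
      intro a ha
      rw [Finset.mem_range] at ha
      rw [coeff_Bser]
      refine Finset.sum_subset (Finset.range_subset_range.2 (by omega)) ?_
      intro k hk hk2
      rw [Finset.mem_range] at hk hk2
      have hz : Cnt m (n - a) k = 0 := by
        rw [Cnt_eq_CN]; exact CN_of_gt m (by omega)
      simp [hz]
    have hc0 : (Cnt m (n + 1) 0 : R) = 0 := by
      rw [Cnt_eq_CN, CN_zero]; simp
    -- LHS
    rw [coeff_Bser, Finset.sum_range_succ' (fun k => (Cnt m (n + 1) k : R) * x ^ k) (n + 1)]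
    -- RHS antidiagonal sum
    rw [Finset.Nat.sum_antidiagonal_eq_sum_range_succ_mk
      (fun ij => (PowerSeries.coeff ij.1) (Gs m) * (PowerSeries.coeff ij.2) (Bser m x))
      (n + 1)]
    rw [Finset.sum_range_succ'
      (fun a => (PowerSeries.coeff a) (Gs m) * (PowerSeries.coeff (n + 1 - a)) (Bser m x))
      (n + 1)]
    have hg0 : (PowerSeries.coeff 0) (Gs (R := R) m) = 0 := by simp [Gs]
    have hg : ∀ a : ℕ, (PowerSeries.coeff (a + 1)) (Gs m) = (G m (a + 1) : R) := by
      intro a; simp [Gs]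
    simp only [hg0, hg, zero_mul, add_zero, hc0, pow_zero, mul_one, Nat.succ_sub_succ,
      if_neg (Nat.succ_ne_zero n), zero_add]
    have hL : (∑ k ∈ Finset.range (n + 1), (Cnt m (n + 1) (k + 1) : R) * x ^ (k + 1))
        = ∑ k ∈ Finset.range (n + 1),
            (∑ a ∈ Finset.range (n + 1), (G m (a + 1) : R) * (Cnt m (n - a) k : R)) * x ^ (k + 1) :=
      Finset.sum_congr rfl fun k _ => by rw [hrec k]
    have hR : (∑ a ∈ Finset.range (n + 1),
          (G m (a + 1) : R) * (PowerSeries.coeff (n - a)) (Bser m x))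
        = ∑ a ∈ Finset.range (n + 1), ∑ k ∈ Finset.range (n + 1),
            (G m (a + 1) : R) * ((Cnt m (n - a) k : R) * x ^ k) :=
      Finset.sum_congr rfl fun a ha => by rw [hB a ha, Finset.mul_sum]
    rw [hL, hR, Finset.sum_comm, Finset.mul_sum]
    refine Finset.sum_congr rfl fun k hk => ?_
    rw [Finset.sum_mul, Finset.mul_sum]
    refine Finset.sum_congr rfl fun a ha => ?_
    ring

end Stmt12Aux
theorem stmt12 (m : ℕ) (hm : 1 ≤ m) :
    PowerSeries.C (R := MvPolynomial (Fin 2) ℤ) (MvPolynomial.X 0) *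
          (PowerSeries.mk fun n =>
            Polynomial.aeval (MvPolynomial.X 0 : MvPolynomial (Fin 2) ℤ) (Rpoly m n)) -
        PowerSeries.C (R := MvPolynomial (Fin 2) ℤ) (MvPolynomial.X 1) *
          (PowerSeries.mk fun n =>
            Polynomial.aeval (MvPolynomial.X 1 : MvPolynomial (Fin 2) ℤ) (Rpoly m n)) =
      PowerSeries.C (R := MvPolynomial (Fin 2) ℤ) (MvPolynomial.X 0 - MvPolynomial.X 1) *
        ((PowerSeries.mk fun n =>
            Polynomial.aeval (MvPolynomial.X 0 : MvPolynomial (Fin 2) ℤ) (Rpoly m n)) *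
          (PowerSeries.mk fun n =>
            Polynomial.aeval (MvPolynomial.X 1 : MvPolynomial (Fin 2) ℤ) (Rpoly m n))) := by
  have e0 : (PowerSeries.mk fun n =>
        Polynomial.aeval (MvPolynomial.X 0 : MvPolynomial (Fin 2) ℤ) (Rpoly m n))
      = Stmt12Aux.Bser m (MvPolynomial.X 0) := rfl
  have e1 : (PowerSeries.mk fun n =>
        Polynomial.aeval (MvPolynomial.X 1 : MvPolynomial (Fin 2) ℤ) (Rpoly m n))
      = Stmt12Aux.Bser m (MvPolynomial.X 1) := rfl
  rw [e0, e1, map_sub]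
  have hq := Stmt12Aux.Bser_eq (R := MvPolynomial (Fin 2) ℤ) m (MvPolynomial.X 0)
  have ht := Stmt12Aux.Bser_eq (R := MvPolynomial (Fin 2) ℤ) m (MvPolynomial.X 1)
  linear_combination
    (PowerSeries.C (R := MvPolynomial (Fin 2) ℤ) (MvPolynomial.X 1)
        * Stmt12Aux.Bser m (MvPolynomial.X 1)) * hq
    - (PowerSeries.C (R := MvPolynomial (Fin 2) ℤ) (MvPolynomial.X 0)
        * Stmt12Aux.Bser m (MvPolynomial.X 0)) * ht

end
end

section
/- For every n ≥ 0, the following identity holds in ℤ[q,t]: Σ_{k=0}^{n} R_k(q)·R_{n−k}(t) = Σ_{k=0}^{n} C_{n,k}·h_k(q,t), where h_k(q,t) = Σ_{s=0}^{k} q^{k−s} t^{s} is the complete homogeneous symmetric polynomial of degree k in q and t. -/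
open scoped Classical
open Finset

noncomputable section

lemma mul_split (m a b : ℕ) (h : b ≤ a) : m * (a - b) + m * b = m * a := by
  rw [← Nat.left_distrib, Nat.sub_add_cancel h]

def cutOK (m n k : ℕ) (p : Fin n → ℕ) : Prop :=
  k = n ∨ ∃ h : k < n, p ⟨k, h⟩ = m * k + 1

def luckLow (m k : ℕ) {n : ℕ} (p : Fin n → ℕ) : ℕ :=
  (Finset.univ.filter (fun i : Fin n => (i : ℕ) < k ∧ p i = m * (i : ℕ) + 1)).card

def luckHigh (m k : ℕ) {n : ℕ} (p : Fin n → ℕ) : ℕ :=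
  (Finset.univ.filter (fun i : Fin n => k ≤ (i : ℕ) ∧ p i = m * (i : ℕ) + 1)).card

lemma luckLow_add_luckHigh (m k : ℕ) {n : ℕ} (p : Fin n → ℕ) :
    luckLow m k p + luckHigh m k p = luck m p := by
  classical
  have h := Finset.card_filter_add_card_filter_not
    (s := Finset.univ.filter (fun i : Fin n => p i = m * (i : ℕ) + 1))
    (p := fun i : Fin n => (i : ℕ) < k)
  rw [Finset.filter_filter, Finset.filter_filter] at h
  rw [luckLow, luckHigh, luck, ← h]
  congr 2
  · ext i; simp; tauto
  · ext i; simp; constructor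
    · rintro ⟨h1, h2⟩; exact ⟨h2, by omega⟩
    · rintro ⟨h1, h2⟩; exact ⟨by omega, h1⟩

def joinSeq (m n k : ℕ) (pp : (Fin k → ℕ) × (Fin (n - k) → ℕ)) : Fin n → ℕ :=
  fun i => if h : (i : ℕ) < k then pp.1 ⟨i, h⟩
    else pp.2 ⟨(i : ℕ) - k, by have := i.isLt; omega⟩ + m * k

def splitSeq (m n k : ℕ) (hk : k ≤ n) (p : Fin n → ℕ) : (Fin k → ℕ) × (Fin (n - k) → ℕ) :=
  (fun i => p ⟨i, by have := i.isLt; omega⟩,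
   fun j => p ⟨k + j, by have := j.isLt; omega⟩ - m * k)

lemma joinSeq_mem {m n k : ℕ} (hm : 1 ≤ m) (hk : k ≤ n)
    {pp : (Fin k → ℕ) × (Fin (n - k) → ℕ)} (h1 : pp.1 ∈ PK m k) (h2 : pp.2 ∈ PK m (n - k)) :
    joinSeq m n k pp ∈ PK m n ∧ cutOK m n k (joinSeq m n k pp) := by
  obtain ⟨mono1, bd1⟩ := mem_PK.1 h1
  obtain ⟨mono2, bd2⟩ := mem_PK.1 h2
  have hmem : joinSeq m n k pp ∈ PK m n := by
    rw [mem_PK]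
    constructor
    · intro i j hij
      rcases Nat.lt_or_ge (j : ℕ) k with hj | hj
      · have hi : (i : ℕ) < k := lt_of_le_of_lt hij hj
        simp only [joinSeq, dif_pos hi, dif_pos hj]
        exact mono1 hij
      · rcases Nat.lt_or_ge (i : ℕ) k with hi | hi
        · -- cross case
          simp only [joinSeq, dif_pos hi, dif_neg (not_lt.2 hj)]
          have e1 : pp.1 ⟨i, hi⟩ ≤ m * (i : ℕ) + 1 := (bd1 _).2
          have e2 : m * ((i : ℕ) + 1) = m * (i : ℕ) + m := by ring
          have e3 : m * ((i : ℕ) + 1) ≤ m * k := Nat.mul_le_mul_left m hi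
          have e4 : 1 ≤ pp.2 ⟨(j : ℕ) - k, by have := j.isLt; omega⟩ :=
            (bd2 ⟨(j : ℕ) - k, by have := j.isLt; omega⟩).1
          omega
        · simp only [joinSeq, dif_neg (not_lt.2 hi), dif_neg (not_lt.2 hj)]
          have := mono2 (a := ⟨(i : ℕ) - k, by have := i.isLt; omega⟩)
            (b := ⟨(j : ℕ) - k, by have := j.isLt; omega⟩) (by simp; omega)
          omega
    · intro i
      rcases Nat.lt_or_ge (i : ℕ) k with hi | hi
      · simp only [joinSeq, dif_pos hi]
        exact bd1 _
      · simp only [joinSeq, dif_neg (not_lt.2 hi)]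
        have e1 := bd1
        have e2 : 1 ≤ pp.2 ⟨(i : ℕ) - k, by have := i.isLt; omega⟩ := (bd2 _).1
        have e3 : pp.2 ⟨(i : ℕ) - k, by have := i.isLt; omega⟩ ≤ m * ((i : ℕ) - k) + 1 :=
          (bd2 _).2
        have e4 : m * ((i : ℕ) - k) + m * k = m * (i : ℕ) := mul_split m _ _ hi
        omega
  refine ⟨hmem, ?_⟩
  rcases Nat.eq_or_lt_of_le hk with h | h
  · exact Or.inl h
  · refine Or.inr ⟨h, ?_⟩
    have : ¬ (k < k) := lt_irrefl k
    simp only [joinSeq, dif_neg this]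
    have e2 : 1 ≤ pp.2 ⟨k - k, by omega⟩ := (bd2 _).1
    have e3 : pp.2 ⟨k - k, by omega⟩ ≤ m * (k - k) + 1 := (bd2 _).2
    simp only [Nat.sub_self, Nat.mul_zero] at e2 e3 ⊢
    omega

lemma splitSeq_mem {m n k : ℕ} (hk : k ≤ n) {p : Fin n → ℕ}
    (hp : p ∈ PK m n) (hc : cutOK m n k p) :
    (splitSeq m n k hk p).1 ∈ PK m k ∧ (splitSeq m n k hk p).2 ∈ PK m (n - k) := by
  obtain ⟨mono, bd⟩ := mem_PK.1 hp
  constructor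
  · rw [mem_PK]
    exact ⟨fun i j hij => mono (by simpa using hij), fun i => bd _⟩
  · rw [mem_PK]
    have hkn : ∀ _ : Fin (n - k), k < n := fun j => by have := j.isLt; omega
    have hlk : ∀ j : Fin (n - k), m * k + 1 ≤ p ⟨k + (j : ℕ), by have := j.isLt; omega⟩ := by
      intro j
      rcases hc with h | ⟨h, hl⟩
      · exact absurd (hkn j) (by omega)
      · calc m * k + 1 = p ⟨k, h⟩ := hl.symm
          _ ≤ _ := mono (by simp)
    constructor
    · intro i j hij
      simp only [splitSeq]
      have := mono (a := ⟨k + (i : ℕ), by have := i.isLt; omega⟩)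
        (b := ⟨k + (j : ℕ), by have := j.isLt; omega⟩) (by simp; omega)
      omega
    · intro j
      have e1 := hlk j
      have e2 : p ⟨k + (j : ℕ), by have := j.isLt; omega⟩ ≤ m * (k + (j : ℕ)) + 1 :=
        (bd ⟨k + (j : ℕ), by have := j.isLt; omega⟩).2
      have e3 : m * (k + (j : ℕ)) = m * k + m * (j : ℕ) := by ring
      simp only [splitSeq]
      omega

lemma joinSeq_lt {m n k : ℕ} (pp : (Fin k → ℕ) × (Fin (n - k) → ℕ)) {i : Fin n}
    (h : (i : ℕ) < k) : joinSeq m n k pp i = pp.1 ⟨i, h⟩ := dif_pos h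

lemma joinSeq_ge {m n k : ℕ} (pp : (Fin k → ℕ) × (Fin (n - k) → ℕ)) {i : Fin n}
    (h : k ≤ (i : ℕ)) :
    joinSeq m n k pp i = pp.2 ⟨(i : ℕ) - k, by have := i.isLt; omega⟩ + m * k :=
  dif_neg (not_lt.2 h)

lemma splitSeq_fst {m n k : ℕ} (hk : k ≤ n) (p : Fin n → ℕ) (i : Fin k) :
    (splitSeq m n k hk p).1 i = p ⟨i, by have := i.isLt; omega⟩ := rfl

lemma splitSeq_snd {m n k : ℕ} (hk : k ≤ n) (p : Fin n → ℕ) (j : Fin (n - k)) :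
    (splitSeq m n k hk p).2 j = p ⟨k + j, by have := j.isLt; omega⟩ - m * k := rfl

lemma split_join {m n k : ℕ} (hk : k ≤ n) (pp : (Fin k → ℕ) × (Fin (n - k) → ℕ)) :
    splitSeq m n k hk (joinSeq m n k pp) = pp := by
  refine Prod.ext (funext fun i => ?_) (funext fun j => ?_)
  · rw [splitSeq_fst, joinSeq_lt pp (by simpa using i.isLt)]
  · rw [splitSeq_snd, joinSeq_ge pp (by simp)]
    simp [Nat.add_sub_cancel_left]

lemma join_split {m n k : ℕ} (hk : k ≤ n) {p : Fin n → ℕ}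
    (hp : p ∈ PK m n) (hc : cutOK m n k p) :
    joinSeq m n k (splitSeq m n k hk p) = p := by
  obtain ⟨mono, bd⟩ := mem_PK.1 hp
  funext i
  rcases Nat.lt_or_ge (i : ℕ) k with hi | hi
  · rw [joinSeq_lt _ hi, splitSeq_fst]
  · have hkn : k < n := by have := i.isLt; omega
    have hl : p ⟨k, hkn⟩ = m * k + 1 := by
      rcases hc with h | ⟨h, hl⟩
      · omega
      · exact hl
    have hge : m * k + 1 ≤ p i := by
      rw [← hl]; exact mono (by rw [Fin.le_def]; exact hi)
    rw [joinSeq_ge _ hi, splitSeq_snd]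
    have he : (⟨k + (((i : ℕ) - k : ℕ) : ℕ), by have := i.isLt; omega⟩ : Fin n) = i := by
      apply Fin.ext; show k + ((i : ℕ) - k) = (i : ℕ); omega
    rw [he]
    omega

lemma luckLow_join {m n k : ℕ} (hk : k ≤ n) (pp : (Fin k → ℕ) × (Fin (n - k) → ℕ)) :
    luckLow m k (joinSeq m n k pp) = luck m pp.1 := by
  rw [luckLow, luck]
  apply Finset.card_bij (fun (a : Fin n) ha => (⟨(a : ℕ),
      (Finset.mem_filter.1 ha).2.1⟩ : Fin k))
  · intro a ha
    obtain ⟨h1, h2⟩ := (Finset.mem_filter.1 ha).2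
    rw [joinSeq_lt pp h1] at h2
    simp only [Finset.mem_filter, Finset.mem_univ, true_and, Fin.val_mk]
    exact h2
  · intro a ha b hb hab
    apply Fin.ext
    simpa using congrArg Fin.val hab
  · intro b hb
    obtain h2 := (Finset.mem_filter.1 hb).2
    have hbk : (b : ℕ) < n := by have := b.isLt; omega
    refine ⟨⟨(b : ℕ), hbk⟩, ?_, by apply Fin.ext; simp⟩
    simp only [Finset.mem_filter, Finset.mem_univ, true_and, Fin.val_mk]
    have hblt : ((⟨(b : ℕ), hbk⟩ : Fin n) : ℕ) < k := by simp only [Fin.val_mk]; exact b.isLt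
    refine ⟨b.isLt, ?_⟩
    rw [joinSeq_lt pp hblt]
    simpa using h2

lemma luckHigh_join {m n k : ℕ} (hk : k ≤ n) (pp : (Fin k → ℕ) × (Fin (n - k) → ℕ)) :
    luckHigh m k (joinSeq m n k pp) = luck m pp.2 := by
  rw [luckHigh, luck]
  apply Finset.card_bij (fun (a : Fin n) ha => (⟨(a : ℕ) - k, by
      have := a.isLt; have := (Finset.mem_filter.1 ha).2.1; omega⟩ : Fin (n - k)))
  · intro a ha
    obtain ⟨h1, h2⟩ := (Finset.mem_filter.1 ha).2
    rw [joinSeq_ge pp h1] at h2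
    simp only [Finset.mem_filter, Finset.mem_univ, true_and, Fin.val_mk]
    have e : m * ((a : ℕ) - k) + m * k = m * (a : ℕ) := mul_split m _ _ h1
    omega
  · intro a ha b hb hab
    have ha1 := (Finset.mem_filter.1 ha).2.1
    have hb1 := (Finset.mem_filter.1 hb).2.1
    have h := congrArg Fin.val hab
    simp only [Fin.val_mk] at h
    apply Fin.ext
    omega
  · intro b hb
    obtain h2 := (Finset.mem_filter.1 hb).2
    have hbk : k + (b : ℕ) < n := by have := b.isLt; omega
    refine ⟨⟨k + (b : ℕ), hbk⟩, ?_, by apply Fin.ext; simp⟩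
    simp only [Finset.mem_filter, Finset.mem_univ, true_and, Fin.val_mk]
    refine ⟨by omega, ?_⟩
    rw [joinSeq_ge pp (by simp only [Fin.val_mk]; omega)]
    have e : m * (k + (b : ℕ)) = m * k + m * (b : ℕ) := by ring
    have hv : (⟨((⟨k + (b : ℕ), hbk⟩ : Fin n) : ℕ) - k, by
        simp only [Fin.val_mk]; have := b.isLt; omega⟩ : Fin (n - k)) = b := by
      apply Fin.ext; show k + (b : ℕ) - k = (b : ℕ); omega
    rw [hv]
    show pp.2 b + m * k = m * (((⟨k + (b : ℕ), hbk⟩ : Fin n)) : ℕ) + 1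
    simp only [Fin.val_mk]
    omega

lemma sum_product_cut {M : Type*} [AddCommMonoid M] {m n : ℕ} (hm : 1 ≤ m) {k : ℕ}
    (hk : k ≤ n) (f : ℕ → ℕ → M) :
    ∑ pp ∈ (PK m k) ×ˢ (PK m (n - k)), f (luck m pp.1) (luck m pp.2)
      = ∑ p ∈ (PK m n).filter (fun p => cutOK m n k p),
          f (luckLow m k p) (luckHigh m k p) := by
  classical
  refine Finset.sum_nbij' (joinSeq m n k) (splitSeq m n k hk) ?_ ?_ ?_ ?_ ?_
  · intro pp hpp
    rw [Finset.mem_product] at hpp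
    have h := joinSeq_mem hm hk hpp.1 hpp.2
    exact Finset.mem_filter.2 ⟨h.1, h.2⟩
  · intro p hp
    rw [Finset.mem_filter] at hp
    have h := splitSeq_mem hk hp.1 hp.2
    exact Finset.mem_product.2 h
  · intro pp hpp
    exact split_join hk pp
  · intro p hp
    rw [Finset.mem_filter] at hp
    exact join_split hk hp.1 hp.2
  · intro pp hpp
    rw [luckLow_join hk pp, luckHigh_join hk pp]

-- cut enumeration lemmas
lemma luckHigh_top {m n : ℕ} (p : Fin n → ℕ) : luckHigh m n p = 0 := by
  rw [luckHigh, Finset.card_eq_zero, Finset.filter_eq_empty_iff]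
  intro i _
  have := i.isLt
  intro h
  omega

lemma luckHigh_bot {m n : ℕ} (p : Fin n → ℕ) : luckHigh m 0 p = luck m p := by
  rw [luckHigh, luck]
  congr 1
  apply Finset.filter_congr
  intro i _
  simp

lemma luckHigh_succ_of_not {m n K : ℕ} (p : Fin n → ℕ) (hK : K < n)
    (h : p ⟨K, hK⟩ ≠ m * K + 1) : luckHigh m K p = luckHigh m (K + 1) p := by
  rw [luckHigh, luckHigh]
  congr 1
  apply Finset.filter_congr
  intro i _
  by_cases hi : (i : ℕ) = K
  · have hiK : i = ⟨K, hK⟩ := Fin.ext hi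
    subst hiK
    simp only [Fin.val_mk]
    constructor
    · rintro ⟨-, h2⟩; exact absurd h2 h
    · rintro ⟨h1, -⟩; omega
  · constructor
    · rintro ⟨h1, h2⟩; exact ⟨by omega, h2⟩
    · rintro ⟨h1, h2⟩; exact ⟨by omega, h2⟩

lemma luckHigh_le_succ {m n K : ℕ} (p : Fin n → ℕ) (hK : K < n) :
    luckHigh m K p ≤ luckHigh m (K + 1) p + 1 := by
  have hsub : (Finset.univ.filter (fun i : Fin n => K ≤ (i : ℕ) ∧ p i = m * (i : ℕ) + 1)) ⊆
      insert ⟨K, hK⟩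
        (Finset.univ.filter (fun i : Fin n => K + 1 ≤ (i : ℕ) ∧ p i = m * (i : ℕ) + 1)) := by
    intro i hi
    obtain ⟨h1, h2⟩ := (Finset.mem_filter.1 hi).2
    by_cases hik : (i : ℕ) = K
    · exact Finset.mem_insert.2 (Or.inl (Fin.ext hik))
    · exact Finset.mem_insert.2 (Or.inr (Finset.mem_filter.2 ⟨Finset.mem_univ _,
        by omega, h2⟩))
  calc luckHigh m K p ≤ _ := Finset.card_le_card hsub
    _ ≤ luckHigh m (K + 1) p + 1 := Finset.card_insert_le _ _

lemma luckHigh_strict {m n : ℕ} {p : Fin n → ℕ} {k k' : ℕ} (hkk : k < k') (hk' : k' ≤ n)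
    (hc : cutOK m n k p) : luckHigh m k' p < luckHigh m k p := by
  have hkn : k < n := by omega
  have hl : p ⟨k, hkn⟩ = m * k + 1 := by
    rcases hc with h | ⟨h, hl⟩
    · omega
    · exact hl
  have hsub : insert (⟨k, hkn⟩ : Fin n)
      (Finset.univ.filter (fun i : Fin n => k' ≤ (i : ℕ) ∧ p i = m * (i : ℕ) + 1)) ⊆
      (Finset.univ.filter (fun i : Fin n => k ≤ (i : ℕ) ∧ p i = m * (i : ℕ) + 1)) := by
    intro i hi
    rcases Finset.mem_insert.1 hi with h | h
    · subst h
      exact Finset.mem_filter.2 ⟨Finset.mem_univ _, le_refl _, hl⟩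
    · obtain ⟨h1, h2⟩ := (Finset.mem_filter.1 h).2
      exact Finset.mem_filter.2 ⟨Finset.mem_univ _, by omega, h2⟩
  have hnot : (⟨k, hkn⟩ : Fin n) ∉
      (Finset.univ.filter (fun i : Fin n => k' ≤ (i : ℕ) ∧ p i = m * (i : ℕ) + 1)) := by
    intro h
    have := (Finset.mem_filter.1 h).2.1
    simp only [Fin.val_mk] at this
    omega
  have := Finset.card_le_card hsub
  rw [Finset.card_insert_of_notMem hnot] at this
  rw [luckHigh, luckHigh]
  omega

lemma luckHigh_le {m n : ℕ} (k : ℕ) (p : Fin n → ℕ) : luckHigh m k p ≤ luck m p := by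
  have := luckLow_add_luckHigh m k p
  omega

lemma cut_sum {M : Type*} [AddCommMonoid M] {m n : ℕ} (p : Fin n → ℕ) (f : ℕ → ℕ → M) :
    ∑ k ∈ (Finset.range (n + 1)).filter (fun k => cutOK m n k p),
        f (luckLow m k p) (luckHigh m k p)
      = ∑ s ∈ Finset.range (luck m p + 1), f (luck m p - s) s := by
  classical
  refine Finset.sum_bij (fun k _ => luckHigh m k p) ?_ ?_ ?_ ?_
  · intro k hk
    rw [Finset.mem_range]
    have := luckHigh_le (m := m) k p
    omega
  · intro k₁ hk₁ k₂ hk₂ he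
    obtain ⟨hr₁, hc₁⟩ := Finset.mem_filter.1 hk₁
    obtain ⟨hr₂, hc₂⟩ := Finset.mem_filter.1 hk₂
    rw [Finset.mem_range] at hr₁ hr₂
    by_contra hne
    rcases Nat.lt_or_ge k₁ k₂ with h | h
    · exact absurd he (by have := luckHigh_strict h (by omega) hc₁; omega)
    · have h' : k₂ < k₁ := by omega
      exact absurd he (by have := luckHigh_strict h' (by omega) hc₂; omega)
  · intro s hs
    rw [Finset.mem_range] at hs
    rcases Nat.eq_zero_or_pos s with rfl | hpos
    · exact ⟨n, Finset.mem_filter.2 ⟨Finset.mem_range.2 (by omega), Or.inl rfl⟩,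
        luckHigh_top p⟩
    · -- find largest K with s ≤ luckHigh m K p
      set T := (Finset.range (n + 1)).filter (fun k => s ≤ luckHigh m k p) with hT
      have h0 : 0 ∈ T := by
        refine Finset.mem_filter.2 ⟨Finset.mem_range.2 (by omega), ?_⟩
        rw [luckHigh_bot]
        omega
      have hTne : T.Nonempty := ⟨0, h0⟩
      set K := T.max' hTne with hKdef
      have hKmem := T.max'_mem hTne
      obtain ⟨hKr, hKs⟩ := Finset.mem_filter.1 hKmem
      rw [Finset.mem_range] at hKr
      rw [← hKdef] at hKs hKr
      have hKn : K < n := by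
        rcases Nat.eq_or_lt_of_le (show K ≤ n by omega) with h | h
        · rw [h, luckHigh_top] at hKs; omega
        · exact h
      have hK1 : luckHigh m (K + 1) p < s := by
        by_contra hcon
        have : K + 1 ∈ T := Finset.mem_filter.2 ⟨Finset.mem_range.2 (by omega), by omega⟩
        have hle2 := T.le_max' _ this
        rw [← hKdef] at hle2
        omega
      have hle := luckHigh_le_succ (m := m) p hKn
      have heq : luckHigh m K p = s := by omega
      have hlucky : p ⟨K, hKn⟩ = m * K + 1 := by
        by_contra hcon
        have := luckHigh_succ_of_not (m := m) p hKn hcon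
        omega
      exact ⟨K, Finset.mem_filter.2 ⟨Finset.mem_range.2 (by omega),
        Or.inr ⟨hKn, hlucky⟩⟩, heq⟩
  · intro k hk
    have := luckLow_add_luckHigh m k p
    have h1 : luckLow m k p = luck m p - luckHigh m k p := by omega
    rw [h1]

lemma Rpoly_aeval {m : ℕ} (k : ℕ) (x : MvPolynomial (Fin 2) ℤ) :
    Polynomial.aeval x (Rpoly m k) = ∑ p ∈ PK m k, x ^ luck m p := by
  classical
  have hmap : ∀ p ∈ PK m k, luck m p ∈ Finset.range (k + 1) := by
    intro p _
    rw [Finset.mem_range]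
    have h1 : luck m p ≤ Fintype.card (Fin k) := by
      rw [luck, ← Finset.card_univ]
      exact Finset.card_filter_le _ _
    simp only [Fintype.card_fin] at h1
    omega
  rw [← Finset.sum_fiberwise_of_maps_to hmap (fun p => x ^ luck m p)]
  rw [Rpoly, map_sum]
  refine Finset.sum_congr rfl fun a _ => ?_
  rw [map_mul, map_pow, Polynomial.aeval_X, map_natCast]
  rw [Finset.sum_congr rfl (fun p hp => by
    rw [(Finset.mem_filter.1 hp).2])]
  rw [Finset.sum_const, Cnt, nsmul_eq_mul]


theorem stmt13 (m : ℕ) (hm : 1 ≤ m) (n : ℕ) :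
    ∑ k ∈ Finset.range (n + 1),
        Polynomial.aeval (MvPolynomial.X 0 : MvPolynomial (Fin 2) ℤ) (Rpoly m k) *
          Polynomial.aeval (MvPolynomial.X 1 : MvPolynomial (Fin 2) ℤ) (Rpoly m (n - k)) =
      ∑ k ∈ Finset.range (n + 1),
        (Cnt m n k : MvPolynomial (Fin 2) ℤ) *
          ∑ s ∈ Finset.range (k + 1),
            MvPolynomial.X 0 ^ (k - s) * MvPolynomial.X 1 ^ s := by
  classical
  have step1 : ∀ k ∈ Finset.range (n + 1),
      Polynomial.aeval (MvPolynomial.X 0 : MvPolynomial (Fin 2) ℤ) (Rpoly m k) *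
          Polynomial.aeval (MvPolynomial.X 1 : MvPolynomial (Fin 2) ℤ) (Rpoly m (n - k))
        = ∑ p ∈ (PK m n).filter (fun p => cutOK m n k p),
            (MvPolynomial.X 0 : MvPolynomial (Fin 2) ℤ) ^ (luckLow m k p) * MvPolynomial.X 1 ^ (luckHigh m k p) := by
    intro k hk
    rw [Finset.mem_range] at hk
    rw [Rpoly_aeval, Rpoly_aeval, Finset.sum_mul_sum]
    rw [← Finset.sum_product' (s := PK m k) (t := PK m (n - k))
      (f := fun a b => MvPolynomial.X 0 ^ luck m a * MvPolynomial.X 1 ^ luck m b)]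
    exact sum_product_cut hm (by omega)
      (fun a b => MvPolynomial.X 0 ^ a * MvPolynomial.X 1 ^ b)
  rw [Finset.sum_congr rfl step1]
  have swap : ∑ k ∈ Finset.range (n + 1), ∑ p ∈ (PK m n).filter (fun p => cutOK m n k p),
        (MvPolynomial.X 0 : MvPolynomial (Fin 2) ℤ) ^ (luckLow m k p) * MvPolynomial.X 1 ^ (luckHigh m k p)
      = ∑ p ∈ PK m n, ∑ k ∈ (Finset.range (n + 1)).filter (fun k => cutOK m n k p),
          (MvPolynomial.X 0 : MvPolynomial (Fin 2) ℤ) ^ (luckLow m k p) * MvPolynomial.X 1 ^ (luckHigh m k p) := by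
    simp_rw [Finset.sum_filter]
    exact Finset.sum_comm
  rw [swap]
  have step4 : ∀ p ∈ PK m n,
      ∑ k ∈ (Finset.range (n + 1)).filter (fun k => cutOK m n k p),
          (MvPolynomial.X 0 : MvPolynomial (Fin 2) ℤ) ^ (luckLow m k p) * MvPolynomial.X 1 ^ (luckHigh m k p)
        = ∑ s ∈ Finset.range (luck m p + 1),
            (MvPolynomial.X 0 : MvPolynomial (Fin 2) ℤ) ^ (luck m p - s) * MvPolynomial.X 1 ^ s := by
    intro p _
    exact cut_sum p (fun a b => MvPolynomial.X 0 ^ a * MvPolynomial.X 1 ^ b)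
  rw [Finset.sum_congr rfl step4]
  have hmap : ∀ p ∈ PK m n, luck m p ∈ Finset.range (n + 1) := by
    intro p _
    rw [Finset.mem_range]
    have h1 : luck m p ≤ Fintype.card (Fin n) := by
      rw [luck, ← Finset.card_univ]
      exact Finset.card_filter_le _ _
    simp only [Fintype.card_fin] at h1
    omega
  rw [← Finset.sum_fiberwise_of_maps_to hmap
    (fun p => ∑ s ∈ Finset.range (luck m p + 1),
      (MvPolynomial.X 0 : MvPolynomial (Fin 2) ℤ) ^ (luck m p - s) * MvPolynomial.X 1 ^ s)]
  refine Finset.sum_congr rfl fun j _ => ?_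
  rw [Finset.sum_congr rfl (fun p hp => by
    rw [(Finset.mem_filter.1 hp).2])]
  rw [Finset.sum_const, Cnt, nsmul_eq_mul]

end
end

section
/- For all integers t ≥ 1 and n ≥ 0, the following identity holds in ℤ[q_0,…,q_{t−1}]: Σ over all weak compositions (α_1, …, α_t) of n into t nonnegative parts of ∏_{i=1}^{t} R_{α_i}(q_{i−1}) equals Σ_{k=0}^{n} C_{n,k}·h_k(q_0, …, q_{t−1}). -/
open scoped Classical
open Finset

noncomputable section

/-- extension of a `Fin`-tuple by zeros -/
def extf (a : ℕ) (p : Fin a → ℕ) : ℕ → ℕ := fun i => if h : i < a then p ⟨i, h⟩ else 0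

lemma extf_inj (a : ℕ) : Function.Injective (extf a) := by
  intro p p' h
  funext i
  have := congrFun h (i : ℕ)
  simpa [extf, i.2] using this

lemma luck_extf {m a : ℕ} (p : Fin a → ℕ) :
    luck m p = ((Finset.range a).filter fun i => extf a p i = m * i + 1).card := by
  unfold luck
  refine Finset.card_nbij (fun i => (i : ℕ)) ?_ ?_ ?_
  · intro i hi
    simp only [Finset.mem_coe, Finset.mem_filter, Finset.mem_univ, true_and] at hi
    rw [Finset.mem_coe, Finset.mem_filter]
    simp [Finset.mem_filter, Finset.mem_range, i.2, extf, hi]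
  · exact Fin.val_injective.injOn
  · intro x hx
    simp only [Finset.coe_filter, Finset.mem_range, Set.mem_setOf_eq] at hx
    refine ⟨⟨x, hx.1⟩, ?_, rfl⟩
    simp only [Finset.coe_filter, Set.mem_setOf_eq, Finset.mem_univ, true_and]
    simpa [extf, hx.1] using hx.2

/-- the property characterizing extensions-by-zero of lucky-counted parking distributions -/
def isF (m a j : ℕ) (f : ℕ → ℕ) : Prop :=
  (∀ i, a ≤ i → f i = 0) ∧ (∀ i i', i ≤ i' → i' < a → f i ≤ f i') ∧
    (∀ i, i < a → 1 ≤ f i ∧ f i ≤ m * i + 1) ∧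
    ((Finset.range a).filter fun i => f i = m * i + 1).card = j

/-- image of the lucky-`j` parking distributions under extension by zero -/
def PKF (m a j : ℕ) : Finset (ℕ → ℕ) :=
  ((PK m a).filter fun p => luck m p = j).image (extf a)

lemma PKF_card (m a j : ℕ) : (PKF m a j).card = Cnt m a j :=
  Finset.card_image_of_injective _ (extf_inj a)

lemma mem_PKF {m a j : ℕ} {f : ℕ → ℕ} : f ∈ PKF m a j ↔ isF m a j f := by
  constructor
  · rintro hf
    obtain ⟨p, hp, rfl⟩ := Finset.mem_image.1 hf
    rw [Finset.mem_filter] at hp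
    obtain ⟨hmono, hb⟩ := mem_PK.1 hp.1
    refine ⟨fun i hi => by simp [extf, Nat.not_lt.2 hi], ?_, ?_, ?_⟩
    · intro i i' hle hlt
      have h1 : i < a := lt_of_le_of_lt hle hlt
      simp only [extf, dif_pos h1, dif_pos hlt]
      exact hmono (show (⟨i, h1⟩ : Fin a) ≤ ⟨i', hlt⟩ from hle)
    · intro i hi
      simpa [extf, dif_pos hi] using hb ⟨i, hi⟩
    · rw [← luck_extf]; exact hp.2
  · rintro ⟨h0, hmono, hb, hcnt⟩
    refine Finset.mem_image.2 ⟨fun i => f i, ?_, ?_⟩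
    · rw [Finset.mem_filter]
      constructor
      · refine mem_PK.2 ⟨?_, fun i => hb i i.2⟩
        intro i i' hle
        exact hmono i i' hle i'.2
      · rw [luck_extf]
        rw [← hcnt]
        congr 1
        apply Finset.filter_congr
        intro x hx
        simp [extf, Finset.mem_range.1 hx]
    · funext i
      by_cases h : i < a
      · simp [extf, h]
      · simp [extf, h, (h0 i (Nat.not_lt.1 h)).symm]

lemma luck_le {m n : ℕ} (p : Fin n → ℕ) : luck m p ≤ n := by
  simpa [luck] using (Finset.card_filter_le _ _).trans (by simp)

lemma Cnt_eq_zero {m n k : ℕ} (h : n < k) : Cnt m n k = 0 := by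
  rw [Cnt, Finset.card_eq_zero, Finset.filter_eq_empty_iff]
  intro p _
  exact fun hk => absurd (hk ▸ luck_le p) (by omega)

lemma isF_k_zero {m b : ℕ} {g : ℕ → ℕ} (hg : isF m b 0 g) : b = 0 := by
  by_contra hb
  have h1 : 1 ≤ g 0 ∧ g 0 ≤ m * 0 + 1 := hg.2.2.1 0 (by omega)
  simp only [Nat.mul_zero, Nat.zero_add] at h1
  have : 0 ∈ (Finset.range b).filter fun i => g i = m * i + 1 := by
    simp only [Finset.mem_filter, Finset.mem_range, Nat.mul_zero, Nat.zero_add]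
    omega
  have h5 := Finset.card_pos.2 ⟨0, this⟩
  have h4 := hg.2.2.2
  omega

lemma Cnt_zero_zero (m : ℕ) : Cnt m 0 0 = 1 := by
  rw [← PKF_card]
  rw [Finset.card_eq_one]
  refine ⟨fun _ => 0, ?_⟩
  ext f
  simp only [mem_PKF, Finset.mem_singleton, isF]
  constructor
  · rintro ⟨h0, -, -, -⟩
    funext i; exact h0 i (Nat.zero_le i)
  · rintro rfl
    exact ⟨fun _ _ => rfl, fun _ _ _ h => by omega, fun i h => by omega, by simp⟩

lemma Cnt_pos_zero {m n : ℕ} (hn : 1 ≤ n) : Cnt m n 0 = 0 := by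
  rw [← PKF_card, Finset.card_eq_zero, Finset.eq_empty_iff_forall_notMem]
  intro f hf
  have := isF_k_zero (mem_PKF.1 hf)
  omega
/-- concatenation of two (extended) parking distributions -/
def glueF (m a b : ℕ) (f g : ℕ → ℕ) : ℕ → ℕ := fun i =>
  if i < a then f i else if i < a + b then g (i - a) + m * a else 0

/-- number of lucky indices of `q` below `c` (within `range n`) -/
def Cq (m n : ℕ) (q : ℕ → ℕ) (c : ℕ) : ℕ :=
  (((Finset.range n).filter fun i => q i = m * i + 1).filter fun i => i < c).card

/-- the splitting point: position of the `(j+1)`-st lucky index, or `n` -/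
def spP (m j n : ℕ) (q : ℕ → ℕ) : ℕ :=
  sInf ({c | j + 1 ≤ Cq m n q (c + 1)} ∪ {n})

lemma sInf_eq_of {S : Set ℕ} {a : ℕ} (ha : a ∈ S) (hlow : ∀ c < a, c ∉ S) :
    sInf S = a :=
  le_antisymm (Nat.sInf_le ha)
    (le_of_not_gt fun h => hlow _ h (Nat.sInf_mem ⟨a, ha⟩))

lemma Cq_mono (m n : ℕ) (q : ℕ → ℕ) {c c' : ℕ} (h : c ≤ c') : Cq m n q c ≤ Cq m n q c' := by
  apply Finset.card_le_card
  intro x hx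
  simp only [Finset.mem_filter] at hx ⊢
  exact ⟨hx.1, lt_of_lt_of_le hx.2 h⟩

lemma Cq_total {m n k : ℕ} {q : ℕ → ℕ} (hq : isF m n k q) {c : ℕ} (hc : n ≤ c) :
    Cq m n q c = k := by
  rw [Cq, ← hq.2.2.2]
  congr 1
  rw [Finset.filter_eq_self]
  intro x hx
  simp only [Finset.mem_filter, Finset.mem_range] at hx
  omega

lemma Cq_succ_le (m n : ℕ) (q : ℕ → ℕ) (c : ℕ) : Cq m n q (c + 1) ≤ Cq m n q c + 1 := by
  have h : (((Finset.range n).filter fun i => q i = m * i + 1).filter fun i => i < c + 1) ⊆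
      insert c (((Finset.range n).filter fun i => q i = m * i + 1).filter fun i => i < c) := by
    intro x hx
    simp only [Finset.mem_filter, Finset.mem_insert] at hx ⊢
    rcases Nat.lt_succ_iff_lt_or_eq.1 hx.2 with h | h
    · exact Or.inr ⟨hx.1, h⟩
    · exact Or.inl h
  calc Cq m n q (c + 1) ≤ _ := Finset.card_le_card h
    _ ≤ _ := Finset.card_insert_le _ _

/-- main spec of the splitting point -/
lemma spP_spec {m n j k : ℕ} {q : ℕ → ℕ} (hq : isF m n (j + k) q) :
    spP m j n q ≤ n ∧ Cq m n q (spP m j n q) = j ∧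
      (spP m j n q < n → q (spP m j n q) = m * spP m j n q + 1) ∧
      (spP m j n q = n → k = 0) ∧ (k = 0 → spP m j n q = n) := by
  set s := spP m j n q with hs
  have hsle : s ≤ n := Nat.sInf_le (Or.inr rfl)
  have hlow : ∀ c < s, ¬ (j + 1 ≤ Cq m n q (c + 1)) := by
    intro c hc hmem
    exact Nat.notMem_of_lt_sInf hc (Or.inl hmem)
  have hCle : Cq m n q s ≤ j := by
    rcases Nat.eq_zero_or_pos s with h0 | h1
    · rw [h0]
      have : Cq m n q 0 = 0 := by
        rw [Cq, Finset.card_eq_zero, Finset.filter_eq_empty_iff]; intro x _; omega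
      omega
    · have := hlow (s - 1) (by omega)
      have heq : s - 1 + 1 = s := by omega
      rw [heq] at this
      omega
  have hmem : s < n → j + 1 ≤ Cq m n q (s + 1) := by
    intro hlt
    have : s ∈ {c | j + 1 ≤ Cq m n q (c + 1)} ∪ {n} := Nat.sInf_mem ⟨n, Or.inr rfl⟩
    rcases this with h | h
    · exact h
    · simp only [Set.mem_singleton_iff] at h; omega
  have hCeq : s < n → Cq m n q s = j := by
    intro hlt
    have := hmem hlt
    have := Cq_succ_le m n q s
    omega
  have hlucky : s < n → q s = m * s + 1 := by
    intro hlt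
    by_contra h
    have heq : (((Finset.range n).filter fun i => q i = m * i + 1).filter fun i => i < s + 1)
        = ((Finset.range n).filter fun i => q i = m * i + 1).filter fun i => i < s := by
      apply Finset.filter_congr
      intro x hx
      simp only [Finset.mem_filter, Finset.mem_range] at hx
      constructor
      · intro hx1
        rcases Nat.lt_succ_iff_lt_or_eq.1 hx1 with h' | h'
        · exact h'
        · exact absurd (h' ▸ hx.2) (h' ▸ h)
      · omega
    have h2 := hmem hlt
    rw [Cq, heq, ← Cq] at h2
    have := hCeq hlt
    omega
  have hsn : s = n → k = 0 := by
    intro hsn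
    have h2 : Cq m n q s = j + k := by rw [hsn]; exact Cq_total hq le_rfl
    omega
  refine ⟨hsle, ?_, hlucky, hsn, ?_⟩
  · rcases Nat.lt_or_ge s n with h | h
    · exact hCeq h
    · have h1 : s = n := by omega
      have := Cq_total hq (le_refl n)
      have := hsn h1
      rw [h1]
      omega
  · intro hk0
    by_contra h
    have hlt : s < n := by omega
    have := hmem hlt
    have := Cq_mono m n q (show s + 1 ≤ n by omega)
    have := Cq_total hq (le_refl n)
    omega
lemma card_shift' (a n m : ℕ) (ha : a ≤ n) (q : ℕ → ℕ) :
    ((Finset.range n).filter fun i => q i = m * i + 1 ∧ ¬ i < a).card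
      = ((Finset.range (n - a)).filter fun i => q (a + i) = m * (a + i) + 1).card := by
  refine Finset.card_nbij' (fun i => i - a) (fun i => a + i) ?_ ?_ ?_ ?_
  · intro x hx
    simp only [Finset.mem_coe, Finset.mem_filter, Finset.mem_range] at hx ⊢
    refine ⟨by omega, ?_⟩
    rw [show a + (x - a) = x by omega]
    exact hx.2.1
  · intro x hx
    simp only [Finset.mem_coe, Finset.mem_filter, Finset.mem_range] at hx ⊢
    exact ⟨by omega, hx.2, by omega⟩
  · intro x hx
    simp only [Finset.mem_coe, Finset.mem_filter, Finset.mem_range] at hx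
    show a + (x - a) = x
    omega
  · intro x hx
    show a + x - a = x
    omega

lemma glue_isF {m a b j k : ℕ} (hm : 1 ≤ m) {f g : ℕ → ℕ}
    (hf : isF m a j f) (hg : isF m b k g) : isF m (a + b) (j + k) (glueF m a b f g) := by
  obtain ⟨hf0, hfm, hfb, hfc⟩ := hf
  obtain ⟨hg0, hgm, hgb, hgc⟩ := hg
  refine ⟨?_, ?_, ?_, ?_⟩
  · intro i hi
    simp only [glueF]
    rw [if_neg (by omega), if_neg (by omega)]
  · intro i i' hle hlt
    simp only [glueF]
    rcases Nat.lt_or_ge i' a with h2 | h2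
    · have h1 : i < a := by omega
      rw [if_pos h1, if_pos h2]
      exact hfm i i' hle h2
    · have h2' : ¬ i' < a := by omega
      have h2'' : i' < a + b := hlt
      rw [if_neg h2', if_pos h2'']
      rcases Nat.lt_or_ge i a with h1 | h1
      · rw [if_pos h1]
        have hb1 : 1 ≤ g (i' - a) := (hgb (i' - a) (by omega)).1
        have hf2 : f i ≤ m * i + 1 := (hfb i h1).2
        have : m * i + 1 ≤ m * a := by
          have : m * (i + 1) ≤ m * a := Nat.mul_le_mul_left m (by omega)
          rw [Nat.mul_add, Nat.mul_one] at this
          omega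
        omega
      · have h1' : ¬ i < a := by omega
        have h1'' : i < a + b := by omega
        rw [if_neg h1', if_pos h1'']
        have := hgm (i - a) (i' - a) (by omega) (by omega)
        omega
  · intro i hi
    simp only [glueF]
    rcases Nat.lt_or_ge i a with h1 | h1
    · rw [if_pos h1]; exact hfb i h1
    · rw [if_neg (by omega), if_pos hi]
      have hb := hgb (i - a) (by omega)
      have hmul : m * i = m * (i - a) + m * a := by
        rw [← Nat.mul_add]
        congr 1
        omega
      omega
  · have hsplit := Finset.card_filter_add_card_filter_not
      (s := (Finset.range (a + b)).filter fun i => glueF m a b f g i = m * i + 1)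
      (p := fun i => i < a)
    simp only [Finset.filter_filter] at hsplit
    have h1 : ((Finset.range (a + b)).filter
        fun i => glueF m a b f g i = m * i + 1 ∧ i < a)
        = (Finset.range a).filter fun i => f i = m * i + 1 := by
      ext i
      simp only [Finset.mem_filter, Finset.mem_range]
      simp only [glueF]
      constructor
      · rintro ⟨h2, h3, h4⟩
        rw [if_pos h4] at h3
        exact ⟨h4, h3⟩
      · rintro ⟨h2, h3⟩
        rw [if_pos h2]
        exact ⟨by omega, h3, h2⟩
    have h2 := card_shift' a (a + b) m (by omega) (glueF m a b f g)
    rw [Nat.add_sub_cancel_left] at h2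
    have h3 : ((Finset.range b).filter fun i => glueF m a b f g (a + i) = m * (a + i) + 1)
        = (Finset.range b).filter fun i => g i = m * i + 1 := by
      apply Finset.filter_congr
      intro i hi
      rw [Finset.mem_range] at hi
      simp only [glueF]
      rw [if_neg (by omega), if_pos (by omega), Nat.add_sub_cancel_left,
        Nat.mul_add]
      constructor <;> intro <;> omega
    rw [h3] at h2
    rw [h1, hfc, h2, hgc] at hsplit
    exact hsplit.symm

lemma split_spec {m n j k : ℕ} {q : ℕ → ℕ} (hq : isF m n (j + k) q) :
    isF m (spP m j n q) j (fun i => if i < spP m j n q then q i else 0) ∧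
      isF m (n - spP m j n q) k
        (fun i => if i < n - spP m j n q then q (spP m j n q + i) - m * spP m j n q else 0) := by
  obtain ⟨hsle, hCsp, hlucky, hsn, hk0⟩ := spP_spec hq
  set s := spP m j n q with hs
  obtain ⟨hq0, hqm, hqb, hqc⟩ := hq
  constructor
  · refine ⟨fun i hi => if_neg (by omega), ?_, ?_, ?_⟩
    · intro i i' hle hlt
      have h1 : i < s := by omega
      show (if i < s then q i else 0) ≤ (if i' < s then q i' else 0)
      rw [if_pos h1, if_pos hlt]
      exact hqm i i' hle (by omega)
    · intro i hi
      show 1 ≤ (if i < s then q i else 0) ∧ (if i < s then q i else 0) ≤ m * i + 1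
      rw [if_pos hi]
      exact hqb i (by omega)
    · have h1 : ((Finset.range s).filter fun i => (if i < s then q i else 0) = m * i + 1)
          = (Finset.range s).filter fun i => q i = m * i + 1 := by
        apply Finset.filter_congr
        intro i hi
        rw [Finset.mem_range] at hi
        rw [if_pos hi]
      have h2 : ((Finset.range s).filter fun i => q i = m * i + 1)
          = ((Finset.range n).filter fun i => q i = m * i + 1).filter fun i => i < s := by
        ext i
        simp only [Finset.mem_filter, Finset.mem_range]
        constructor
        · rintro ⟨h3, h4⟩; exact ⟨⟨by omega, h4⟩, h3⟩
        · rintro ⟨⟨h3, h4⟩, h5⟩; exact ⟨h5, h4⟩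
      rw [h1, h2]
      exact hCsp
  · rcases Nat.eq_zero_or_pos (n - s) with hb0 | hb1
    · have hk : k = 0 := hsn (by omega)
      rw [hb0]
      exact ⟨fun i hi => if_neg (by omega), fun i i' hle hlt => by omega,
        fun i hi => by omega, by simp [hk]⟩
    · have hsltn : s < n := by omega
      have hql : q s = m * s + 1 := hlucky hsltn
      have key : ∀ i, i < n - s → m * s + 1 ≤ q (s + i) ∧ q (s + i) ≤ m * (s + i) + 1 := by
        intro i hi
        constructor
        · rw [← hql]
          exact hqm s (s + i) (by omega) (by omega)
        · exact (hqb (s + i) (by omega)).2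
      refine ⟨fun i hi => if_neg (by omega), ?_, ?_, ?_⟩
      · intro i i' hle hlt
        have h1 : i < n - s := by omega
        show (if i < n - s then q (s + i) - m * s else 0)
          ≤ (if i' < n - s then q (s + i') - m * s else 0)
        rw [if_pos h1, if_pos hlt]
        exact Nat.sub_le_sub_right (hqm (s + i) (s + i') (by omega) (by omega)) _
      · intro i hi
        show 1 ≤ (if i < n - s then q (s + i) - m * s else 0) ∧
          (if i < n - s then q (s + i) - m * s else 0) ≤ m * i + 1
        rw [if_pos hi]
        have := key i hi
        have hmul : m * (s + i) = m * s + m * i := Nat.mul_add m s i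
        omega
      · have h1 : ((Finset.range (n - s)).filter
            fun i => (if i < n - s then q (s + i) - m * s else 0) = m * i + 1)
            = (Finset.range (n - s)).filter fun i => q (s + i) = m * (s + i) + 1 := by
          apply Finset.filter_congr
          intro i hi
          rw [Finset.mem_range] at hi
          rw [if_pos hi]
          have := key i hi
          have hmul : m * (s + i) = m * s + m * i := Nat.mul_add m s i
          constructor <;> intro <;> omega
        have h2 := card_shift' s n m hsle q
        have hsplit := Finset.card_filter_add_card_filter_not
          (s := (Finset.range n).filter fun i => q i = m * i + 1) (p := fun i => i < s)
        simp only [Finset.filter_filter] at hsplit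
        have hCsp' : ((Finset.range n).filter
            fun i => q i = m * i + 1 ∧ i < s).card = j := by
          rw [← hCsp, Cq, Finset.filter_filter]
        rw [h1, ← h2]
        rw [hCsp', hqc] at hsplit
        omega
lemma glue_filter_low (m a b : ℕ) (f g : ℕ → ℕ) :
    ((Finset.range (a + b)).filter fun i => glueF m a b f g i = m * i + 1 ∧ i < a)
      = (Finset.range a).filter fun i => f i = m * i + 1 := by
  ext i
  simp only [Finset.mem_filter, Finset.mem_range]
  simp only [glueF]
  constructor
  · rintro ⟨h2, h3, h4⟩
    rw [if_pos h4] at h3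
    exact ⟨h4, h3⟩
  · rintro ⟨h2, h3⟩
    rw [if_pos h2]
    exact ⟨by omega, h3, h2⟩

lemma isF_b_pos {m b k : ℕ} {g : ℕ → ℕ} (hg : isF m b k g) (hk : k ≠ 0) : 1 ≤ b := by
  by_contra hb
  have h0 : b = 0 := by omega
  have := hg.2.2.2
  rw [h0] at this
  simp at this
  omega

lemma spP_glue {m a b j k : ℕ} (hm : 1 ≤ m) {f g : ℕ → ℕ}
    (hf : isF m a j f) (hg : isF m b k g) :
    spP m j (a + b) (glueF m a b f g) = a := by
  set n := a + b with hn
  set q := glueF m a b f g with hqdef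
  have hq : isF m n (j + k) q := glue_isF hm hf hg
  rcases Nat.eq_zero_or_pos k with hk0 | hk1
  · obtain ⟨-, -, -, -, h5⟩ := spP_spec (j := j) (k := k) hq
    have hb0 : b = 0 := isF_k_zero (hk0 ▸ hg)
    rw [h5 hk0]
    omega
  · have hb1 : 1 ≤ b := isF_b_pos hg (by omega)
    have hCa : Cq m n q a = j := by
      rw [Cq, Finset.filter_filter]
      rw [glue_filter_low m a b f g]
      exact hf.2.2.2
    have hqa : q a = m * a + 1 := by
      have hg0 : g 0 = 1 := by
        have := hg.2.2.1 0 hb1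
        omega
      show glueF m a b f g a = m * a + 1
      simp only [glueF]
      rw [if_neg (by omega), if_pos (by omega), Nat.sub_self, hg0]
      omega
    have hCa1 : j + 1 ≤ Cq m n q (a + 1) := by
      have hsub : insert a (((Finset.range n).filter fun i => q i = m * i + 1).filter
          fun i => i < a) ⊆
          ((Finset.range n).filter fun i => q i = m * i + 1).filter fun i => i < a + 1 := by
        intro x hx
        simp only [Finset.mem_insert, Finset.mem_filter, Finset.mem_range] at hx ⊢
        rcases hx with rfl | hx
        · exact ⟨⟨by omega, hqa⟩, by omega⟩
        · exact ⟨hx.1, by omega⟩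
      have hnotmem : a ∉ ((Finset.range n).filter fun i => q i = m * i + 1).filter
          fun i => i < a := by
        simp only [Finset.mem_filter]
        omega
      have := Finset.card_le_card hsub
      rw [Finset.card_insert_of_notMem hnotmem] at this
      have hCa' : (((Finset.range n).filter fun i => q i = m * i + 1).filter
          fun i => i < a).card = j := hCa
      rw [hCa'] at this
      exact this
    apply sInf_eq_of (Or.inl hCa1)
    intro c hc hcmem
    rcases hcmem with hcmem | hcmem
    · have h1 : Cq m n q (c + 1) ≤ j := by
        have := Cq_mono m n q (show c + 1 ≤ a by omega)
        omega
      exact absurd hcmem (by simp only [Set.mem_setOf_eq]; omega)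
    · simp only [Set.mem_singleton_iff] at hcmem
      omega

lemma conv (m : ℕ) (hm : 1 ≤ m) (j k n : ℕ) :
    ∑ ab ∈ Finset.HasAntidiagonal.antidiagonal n, Cnt m ab.1 j * Cnt m ab.2 k = Cnt m n (j + k) := by
  rw [← PKF_card m n (j + k)]
  rw [Finset.sum_congr rfl (fun ab _ => by
    rw [← PKF_card m ab.1 j, ← PKF_card m ab.2 k, ← Finset.card_product])]
  rw [← Finset.card_sigma]
  refine Finset.card_nbij' (fun x => glueF m x.1.1 x.1.2 x.2.1 x.2.2)
    (fun q => ⟨(spP m j n q, n - spP m j n q),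
      (fun i => if i < spP m j n q then q i else 0,
       fun i => if i < n - spP m j n q then q (spP m j n q + i) - m * spP m j n q else 0)⟩)
    ?_ ?_ ?_ ?_
  · rintro ⟨⟨a, b⟩, ⟨f, g⟩⟩ hx
    simp only [Finset.mem_coe, Finset.mem_sigma, Finset.mem_product, Finset.HasAntidiagonal.mem_antidiagonal] at hx
    obtain ⟨hab, hfm, hgm⟩ := hx
    subst hab
    exact mem_PKF.2 (glue_isF hm (mem_PKF.1 hfm) (mem_PKF.1 hgm))
  · intro q hq
    have hq' := mem_PKF.1 hq
    obtain ⟨hs1, hs2⟩ := split_spec hq'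
    obtain ⟨hsle, -, -, -, -⟩ := spP_spec hq'
    simp only [Finset.mem_coe, Finset.mem_sigma, Finset.mem_product, Finset.HasAntidiagonal.mem_antidiagonal]
    exact ⟨by omega, mem_PKF.2 hs1, mem_PKF.2 hs2⟩
  · rintro ⟨⟨a, b⟩, ⟨f, g⟩⟩ hx
    simp only [Finset.mem_coe, Finset.mem_sigma, Finset.mem_product, Finset.HasAntidiagonal.mem_antidiagonal] at hx
    obtain ⟨hab, hfm, hgm⟩ := hx
    subst hab
    have hf := mem_PKF.1 hfm
    have hg := mem_PKF.1 hgm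
    have hsp : spP m j (a + b) (glueF m a b f g) = a := spP_glue hm hf hg
    rw [Sigma.mk.inj_iff]
    constructor
    · rw [hsp]
      simp
    · rw [heq_iff_eq]
      rw [hsp, Nat.add_sub_cancel_left]
      refine Prod.ext ?_ ?_
      · funext i
        show (if i < a then glueF m a b f g i else 0) = f i
        by_cases h : i < a
        · rw [if_pos h]
          show (if i < a then f i else _) = f i
          rw [if_pos h]
        · rw [if_neg h]
          exact (hf.1 i (by omega)).symm
      · funext i
        show (if i < b then glueF m a b f g (a + i) - m * a else 0) = g i
        by_cases h : i < b
        · rw [if_pos h]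
          show (if a + i < a then f (a + i) else if a + i < a + b then
            g (a + i - a) + m * a else 0) - m * a = g i
          rw [if_neg (by omega), if_pos (by omega), Nat.add_sub_cancel_left,
            Nat.add_sub_cancel]
        · rw [if_neg h]
          exact (hg.1 i (by omega)).symm
  · intro q hq
    have hq' := mem_PKF.1 hq
    obtain ⟨hsle, -, hlucky, -, -⟩ := spP_spec hq'
    set s := spP m j n q with hs
    funext i
    show glueF m s (n - s) _ _ i = q i
    simp only [glueF]
    by_cases h1 : i < s
    · rw [if_pos h1]
      show (if i < s then q i else 0) = q i
      rw [if_pos h1]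
    · rw [if_neg h1]
      by_cases h2 : i < s + (n - s)
      · rw [if_pos h2]
        show (if i - s < n - s then q (s + (i - s)) - m * s else 0) + m * s = q i
        rw [if_pos (by omega), show s + (i - s) = i by omega]
        have hin : i < n := by omega
        have hsn : s < n := by omega
        have h3 : m * s + 1 ≤ q i := by
          rw [← hlucky hsn]
          exact hq'.2.1 s i (by omega) hin
        omega
      · rw [if_neg h2]
        exact (hq'.1 i (by omega)).symm
lemma multi (m : ℕ) (hm : 1 ≤ m) :
    ∀ (t : ℕ) (n : ℕ) (β : Fin t → ℕ),
      ∑ α ∈ Finset.Nat.antidiagonalTuple t n, ∏ i, Cnt m (α i) (β i)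
        = Cnt m n (∑ i, β i) := by
  intro t
  induction t with
  | zero =>
    intro n β
    cases n with
    | zero =>
      rw [Finset.Nat.antidiagonalTuple_zero_zero]
      simp [Cnt_zero_zero]
    | succ n =>
      rw [Finset.Nat.antidiagonalTuple_zero_succ]
      simp [Cnt_pos_zero (Nat.succ_le_succ (Nat.zero_le n))]
  | succ t ih =>
    intro n β
    have key : ∑ α ∈ Finset.Nat.antidiagonalTuple (t + 1) n, ∏ i, Cnt m (α i) (β i)
        = ∑ x ∈ (Finset.HasAntidiagonal.antidiagonal n).sigma
            (fun ab => Finset.Nat.antidiagonalTuple t ab.2),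
            Cnt m x.1.1 (β 0) * ∏ i : Fin t, Cnt m (x.2 i) (β i.succ) := by
      refine Finset.sum_nbij' (fun α => ⟨(α 0, n - α 0), fun i => α i.succ⟩)
        (fun x => Fin.cons x.1.1 x.2) ?_ ?_ ?_ ?_ ?_
      · intro α hα
        rw [Finset.Nat.mem_antidiagonalTuple] at hα
        rw [Fin.sum_univ_succ] at hα
        simp only [Finset.mem_sigma, Finset.HasAntidiagonal.mem_antidiagonal,
          Finset.Nat.mem_antidiagonalTuple]
        constructor
        · omega
        · show ∑ i : Fin t, α i.succ = n - α 0
          omega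
      · intro x hx
        simp only [Finset.mem_sigma, Finset.HasAntidiagonal.mem_antidiagonal,
          Finset.Nat.mem_antidiagonalTuple] at hx
        rw [Finset.Nat.mem_antidiagonalTuple, Fin.sum_univ_succ]
        simp only [Fin.cons_zero, Fin.cons_succ]
        omega
      · intro α hα
        exact Fin.cons_self_tail α
      · rintro ⟨⟨a, b⟩, x⟩ hx
        dsimp only
        simp only [Finset.mem_sigma, Finset.HasAntidiagonal.mem_antidiagonal,
          Finset.Nat.mem_antidiagonalTuple] at hx
        rw [Sigma.mk.inj_iff]
        constructor
        · simp only [Fin.cons_zero]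
          have : a + b = n := hx.1
          simp only [Prod.mk.injEq]
          exact ⟨trivial, by omega⟩
        · rw [heq_iff_eq]
          funext i
          simp only [Fin.cons_succ]
      · intro α hα
        rw [Fin.prod_univ_succ]
    rw [key, Finset.sum_sigma]
    have step : ∀ ab ∈ Finset.HasAntidiagonal.antidiagonal n,
        (∑ x ∈ Finset.Nat.antidiagonalTuple t ab.2,
          Cnt m ab.1 (β 0) * ∏ i : Fin t, Cnt m (x i) (β i.succ))
        = Cnt m ab.1 (β 0) * Cnt m ab.2 (∑ i : Fin t, β i.succ) := by
      intro ab _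
      rw [← Finset.mul_sum, ih ab.2 (fun i => β i.succ)]
    rw [Finset.sum_congr rfl step, conv m hm (β 0) (∑ i : Fin t, β i.succ) n,
      ← Fin.sum_univ_succ]
theorem stmt14 (m : ℕ) (hm : 1 ≤ m) (t : ℕ) (ht : 1 ≤ t) (n : ℕ) :
    ∑ α ∈ Finset.Nat.antidiagonalTuple t n,
        ∏ i : Fin t, Polynomial.aeval (MvPolynomial.X i : MvPolynomial (Fin t) ℤ) (Rpoly m (α i)) =
      ∑ k ∈ Finset.range (n + 1), (Cnt m n k : MvPolynomial (Fin t) ℤ) * hfull t k := by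
  have hRe : ∀ α ∈ Finset.Nat.antidiagonalTuple t n, ∀ i : Fin t,
      Polynomial.aeval (MvPolynomial.X i : MvPolynomial (Fin t) ℤ) (Rpoly m (α i))
        = ∑ k ∈ Finset.range (n + 1),
            (Cnt m (α i) k : MvPolynomial (Fin t) ℤ) * MvPolynomial.X i ^ k := by
    intro α hα i
    rw [Finset.Nat.mem_antidiagonalTuple] at hα
    have hle : α i ≤ n :=
      hα ▸ Finset.single_le_sum (f := α) (fun _ _ => Nat.zero_le _) (Finset.mem_univ i)
    rw [Rpoly, map_sum, Finset.sum_subset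
      (show Finset.range (α i + 1) ⊆ Finset.range (n + 1) from
        Finset.range_subset_range.2 (by omega))]
    · exact Finset.sum_congr rfl fun k _ => by
        rw [map_mul, map_pow, Polynomial.aeval_X, map_natCast]
    · intro k hk1 hk2
      rw [Finset.mem_range] at hk1 hk2
      have hk3 : α i < k := by omega
      rw [Cnt_eq_zero hk3]
      simp
  rw [Finset.sum_congr rfl fun α hα => Finset.prod_congr rfl fun i _ => hRe α hα i]
  rw [Finset.sum_congr rfl fun α _ => Finset.prod_univ_sum _ _]
  rw [Finset.sum_comm]
  have hmid : ∀ β ∈ Fintype.piFinset (fun _ : Fin t => Finset.range (n + 1)),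
      (∑ α ∈ Finset.Nat.antidiagonalTuple t n,
        ∏ i : Fin t, (Cnt m (α i) (β i) : MvPolynomial (Fin t) ℤ) * MvPolynomial.X i ^ β i)
      = (Cnt m n (∑ i, β i) : MvPolynomial (Fin t) ℤ) * ∏ i : Fin t, MvPolynomial.X i ^ β i := by
    intro β _
    rw [Finset.sum_congr rfl fun α _ => Finset.prod_mul_distrib, ← Finset.sum_mul]
    congr 1
    have hcast : (∑ α ∈ Finset.Nat.antidiagonalTuple t n,
        ∏ i : Fin t, (Cnt m (α i) (β i) : MvPolynomial (Fin t) ℤ))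
        = ((∑ α ∈ Finset.Nat.antidiagonalTuple t n, ∏ i : Fin t, Cnt m (α i) (β i) : ℕ) :
            MvPolynomial (Fin t) ℤ) := by
      push_cast
      rfl
    rw [hcast, multi m hm t n β]
  rw [Finset.sum_congr rfl hmid]
  have hRHS : ∑ k ∈ Finset.range (n + 1), (Cnt m n k : MvPolynomial (Fin t) ℤ) * hfull t k
      = ∑ x ∈ (Finset.range (n + 1)).sigma (fun k => Finset.Nat.antidiagonalTuple t k),
          (Cnt m n x.1 : MvPolynomial (Fin t) ℤ) * ∏ i : Fin t, MvPolynomial.X i ^ x.2 i := by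
    rw [Finset.sum_sigma]
    exact Finset.sum_congr rfl fun k _ => by rw [hfull, Finset.mul_sum]
  rw [hRHS]
  have hzero : ∑ β ∈ Fintype.piFinset (fun _ : Fin t => Finset.range (n + 1)),
      (Cnt m n (∑ i, β i) : MvPolynomial (Fin t) ℤ) * ∏ i : Fin t, MvPolynomial.X i ^ β i
      = ∑ β ∈ (Fintype.piFinset (fun _ : Fin t => Finset.range (n + 1))).filter
          (fun β => ∑ i, β i ≤ n),
          (Cnt m n (∑ i, β i) : MvPolynomial (Fin t) ℤ) * ∏ i : Fin t, MvPolynomial.X i ^ β i := by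
    refine (Finset.sum_subset (Finset.filter_subset _ _) ?_).symm
    intro β hβ hβ'
    rw [Finset.mem_filter] at hβ'
    have : n < ∑ i, β i := by
      rcases Nat.lt_or_ge n (∑ i, β i) with h | h
      · exact h
      · exact absurd ⟨hβ, h⟩ hβ'
    rw [Cnt_eq_zero this]
    simp
  rw [hzero]
  refine Finset.sum_nbij' (fun β => ⟨∑ i, β i, β⟩) (fun x => x.2) ?_ ?_ ?_ ?_ ?_
  · intro β hβ
    rw [Finset.mem_filter] at hβ
    simp only [Finset.mem_sigma, Finset.mem_range, Finset.Nat.mem_antidiagonalTuple]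
    exact ⟨by omega, trivial⟩
  · rintro ⟨k, β⟩ hx
    simp only [Finset.mem_sigma, Finset.mem_range, Finset.Nat.mem_antidiagonalTuple] at hx
    rw [Finset.mem_filter]
    dsimp only
    constructor
    · rw [Fintype.mem_piFinset]
      intro i
      rw [Finset.mem_range]
      have : β i ≤ ∑ i', β i' :=
        Finset.single_le_sum (f := β) (fun _ _ => Nat.zero_le _) (Finset.mem_univ i)
      omega
    · show ∑ i, β i ≤ n
      omega
  · intro β _
    rfl
  · rintro ⟨k, β⟩ hx
    simp only [Finset.mem_sigma, Finset.mem_range, Finset.Nat.mem_antidiagonalTuple] at hx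
    dsimp only
    rw [Sigma.mk.inj_iff]
    exact ⟨hx.2, HEq.rfl⟩
  · intro β _
    rfl

end
end
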